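/- arXiv:0803.0460 — 12 statements merged into one kernel-verified Lean document; each statement's English description precedes it below -/
import Mathlib

section
/- Let x₁, …, x_{2k+1} be unit vectors in a two-dimensional real normed space. Then there exist signs ε₁, …, ε_{2k+1} ∈ {±1} such that ‖∑_{i=1}^{2k+1} ε_i x_i‖ ≤ 1. -/
open Finset

section Balance

variable {E : Type*} [NormedAddCommGroup E] [NormedSpace ℝ E]

/-- Scalar core of the key geometric lemma. -/
private lemma bal_scalar {α γ a b : ℝ} (hα : 0 ≤ α) (hγ : 0 ≤ γ)
    (hsum : 1 ≤ α + γ) (ht1 : α ≤ 1 + γ) (ht2 : γ ≤ 1 + α)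
    (h1 : α * a + γ * b < a) (h2 : α * a + γ * b < b) : a + b ≤ 0 := by
  rcases le_or_gt 0 a with ha | ha
  · rcases le_or_gt 0 b with hb | hb
    · exfalso
      rcases le_total a b with h | h
      · nlinarith [mul_nonneg (by linarith : (0:ℝ) ≤ α + γ - 1) ha,
          mul_nonneg hγ (by linarith : (0:ℝ) ≤ b - a)]
      · nlinarith [mul_nonneg (by linarith : (0:ℝ) ≤ α + γ - 1) hb,
          mul_nonneg hα (by linarith : (0:ℝ) ≤ a - b)]
    · -- 0 ≤ a, b < 0
      have hγ1 : 1 < γ := by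
        by_contra hcon
        push_neg at hcon
        nlinarith [mul_nonneg hα ha, mul_nonneg (by linarith : (0:ℝ) ≤ 1 - γ) (by linarith : (0:ℝ) ≤ -b)]
      have hαpos : 0 < α := by linarith
      have hkey : (γ - 1) * (-b) ≤ α * (-b) :=
        mul_le_mul_of_nonneg_right (by linarith) (by linarith)
      have : α * (a + b) < 0 := by nlinarith
      by_contra hcon
      push_neg at hcon
      nlinarith [mul_nonneg hαpos.le hcon.le]
  · rcases le_or_gt b 0 with hb | hb
    · linarith
    · -- a < 0 < b
      have hα1 : 1 < α := by
        by_contra hcon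
        push_neg at hcon
        nlinarith [mul_nonneg hγ hb.le, mul_nonneg (by linarith : (0:ℝ) ≤ 1 - α) (by linarith : (0:ℝ) ≤ -a)]
      have hγpos : 0 < γ := by linarith
      have hkey : (α - 1) * (-a) ≤ γ * (-a) :=
        mul_le_mul_of_nonneg_right (by linarith) (by linarith)
      have : γ * (a + b) < 0 := by nlinarith
      by_contra hcon
      push_neg at hcon
      nlinarith [mul_nonneg hγpos.le hcon.le]

/-- Key geometric lemma: if a unit vector `q` lying in the cone spanned by unit
vectors `p`, `s` has `f q < f p` and `f q < f s`, then `f p + f s ≤ 0`. -/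
private lemma bal_W {p q s : E} (hp : ‖p‖ = 1) (hq : ‖q‖ = 1) (hs : ‖s‖ = 1)
    {α γ : ℝ} (hα : 0 ≤ α) (hγ : 0 ≤ γ) (hrel : q = α • p + γ • s)
    (f : E →L[ℝ] ℝ) (h1 : f q < f p) (h2 : f q < f s) : f p + f s ≤ 0 := by
  have hfq : f q = α * f p + γ * f s := by
    rw [hrel]; simp [map_add, map_smul, smul_eq_mul]
  have hsum : 1 ≤ α + γ := by
    have h := norm_add_le (α • p) (γ • s)
    rw [← hrel, hq, norm_smul, norm_smul, hp, hs] at h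
    simpa [Real.norm_eq_abs, abs_of_nonneg hα, abs_of_nonneg hγ] using h
  have ht1 : α ≤ 1 + γ := by
    have he : α • p = q - γ • s := by rw [hrel]; abel
    have h := norm_sub_le q (γ • s)
    rw [← he, norm_smul, norm_smul, hp, hq, hs] at h
    simpa [Real.norm_eq_abs, abs_of_nonneg hα, abs_of_nonneg hγ] using h
  have ht2 : γ ≤ 1 + α := by
    have he : γ • s = q - α • p := by rw [hrel]; abel
    have h := norm_sub_le q (α • p)
    rw [← he, norm_smul, norm_smul, hp, hq, hs] at h
    simpa [Real.norm_eq_abs, abs_of_nonneg hα, abs_of_nonneg hγ] using h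
  rw [hfq] at h1 h2
  exact bal_scalar hα hγ hsum ht1 ht2 h1 h2

/-- Master lemma: for unit vectors such that every middle one lies in the cone
of every surrounding pair, the alternating sum of values of a functional
bounded by 1 on them is at most 1. -/
private lemma bal_master (k : ℕ) :
    ∀ (v : ℕ → E) (f : E →L[ℝ] ℝ),
    (∀ i, i ≤ 2*k → ‖v i‖ = 1) →
    (∀ i, i ≤ 2*k → |f (v i)| ≤ 1) →
    (∀ i j l : ℕ, i ≤ j → j ≤ l → l ≤ 2*k →
      ∃ α γ : ℝ, 0 ≤ α ∧ 0 ≤ γ ∧ v j = α • v i + γ • v l) →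
    ∑ i ∈ Finset.range (2*k+1), (-1:ℝ)^i * f (v i) ≤ 1 := by
  induction k with
  | zero =>
    intro v f hn hf hc
    simpa using le_trans (le_abs_self _) (hf 0 le_rfl)
  | succ m ih =>
    intro v f hn hf hc
    have hpow1 : ((-1:ℝ))^(2*m+1) = -1 := Odd.neg_one_pow ⟨m, by ring⟩
    have hpow2 : ((-1:ℝ))^(2*m+1+1) = 1 := Even.neg_one_pow ⟨m+1, by ring⟩
    rw [show 2*(m+1)+1 = (2*m+1+1)+1 by ring, Finset.sum_range_succ]
    rcases le_or_gt (f (v (2*m+1+1))) (f (v (2*m+1))) with h1 | h1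
    · -- last value drops: discard the last two terms
      rw [Finset.sum_range_succ]
      have hIH := ih v f (fun i hi => hn i (by omega)) (fun i hi => hf i (by omega))
        (fun i j l hij hjl hl => hc i j l hij hjl (by omega))
      rw [hpow1, hpow2]
      nlinarith [hIH]
    rcases le_or_gt (f (v 0)) (f (v 1)) with h2 | h2
    · -- first value rises: discard the first two terms
      have hIH := ih (fun i => v (i+1+1)) f (fun i hi => hn (i+1+1) (by omega))
        (fun i hi => hf (i+1+1) (by omega))
        (fun i j l hij hjl hl => hc (i+1+1) (j+1+1) (l+1+1) (by omega) (by omega) (by omega))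
      rw [Finset.sum_range_succ] at hIH
      have hpow0 : ((-1:ℝ))^(2*m) = 1 := Even.neg_one_pow ⟨m, by ring⟩
      rw [hpow0] at hIH
      rw [Finset.sum_range_succ', Finset.sum_range_succ']
      have hEq : ∀ i : ℕ, (-1:ℝ)^(i+1+1) = (-1:ℝ)^i := by
        intro i; rw [pow_succ, pow_succ]; ring
      have hsum' : ∑ i ∈ Finset.range (2*m), (-1:ℝ)^(i+1+1) * f (v (i+1+1))
          = ∑ i ∈ Finset.range (2*m), (-1:ℝ)^i * f (v (i+1+1)) :=
        Finset.sum_congr rfl fun i _ => by rw [hEq]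
      rw [hsum']
      rw [hpow2]
      simp only [pow_zero, pow_one, one_mul, zero_add]
      nlinarith [hIH]
    · -- valley case
      rw [Finset.sum_range_succ']
      obtain ⟨j, hjmem, hjmin⟩ := Finset.exists_min_image (Finset.range (2*m+1+1+1))
        (fun i => f (v i)) ⟨0, by simp⟩
      have hj2 : j ≤ 2*m+1+1 := by
        have := Finset.mem_range.1 hjmem; omega
      have hq1 : f (v j) < f (v 0) :=
        lt_of_le_of_lt (hjmin 1 (Finset.mem_range.2 (by omega))) h2
      have hq2 : f (v j) < f (v (2*m+1+1)) :=
        lt_of_le_of_lt (hjmin (2*m+1) (Finset.mem_range.2 (by omega))) h1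
      obtain ⟨α, γ, hα, hγ, hrel⟩ := hc 0 j (2*m+1+1) (Nat.zero_le _) hj2 (by omega)
      have hW := bal_W (hn 0 (by omega)) (hn j (by omega)) (hn (2*m+1+1) (by omega))
        hα hγ hrel f hq1 hq2
      have hIH := ih (fun i => v (i+1)) (-f) (fun i hi => hn (i+1) (by omega))
        (fun i hi => by
          simpa [ContinuousLinearMap.neg_apply, abs_neg] using hf (i+1) (by omega))
        (fun i j' l hij hjl hl => hc (i+1) (j'+1) (l+1) (by omega) (by omega) (by omega))
      have hsum' : ∑ i ∈ Finset.range (2*m+1), (-1:ℝ)^(i+1) * f (v (i+1))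
          = ∑ i ∈ Finset.range (2*m+1), (-1:ℝ)^i * ((-f) (v (i+1))) :=
        Finset.sum_congr rfl fun i _ => by
          rw [pow_succ]
          simp only [ContinuousLinearMap.neg_apply]
          ring
      rw [hsum']
      rw [hpow2]
      simp only [pow_zero, one_mul]
      nlinarith [hIH]

/-- Parallel sorted unit vectors in the upper half plane are equal. -/
private lemma bal_par (c₀ c₁ : E →ₗ[ℝ] ℝ)
    (hinj : ∀ z w : E, c₀ z = c₀ w → c₁ z = c₁ w → z = w)
    {u w : E} (hu : ‖u‖ = 1) (hw : ‖w‖ = 1)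
    (hu2 : 0 < c₁ u ∨ (c₁ u = 0 ∧ 0 < c₀ u)) (hw2 : 0 < c₁ w ∨ (c₁ w = 0 ∧ 0 < c₀ w))
    (hD : c₀ u * c₁ w - c₁ u * c₀ w = 0) : w = u := by
  have key : ∃ t : ℝ, 0 ≤ t ∧ w = t • u := by
    rcases hu2 with h | ⟨h0, h1⟩
    · refine ⟨c₁ w / c₁ u, ?_, ?_⟩
      · have hw1 : 0 ≤ c₁ w := by
          rcases hw2 with h' | ⟨h', _⟩
          · exact h'.le
          · exact le_of_eq h'.symm
        exact div_nonneg hw1 h.le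
      · apply hinj
        · rw [map_smul, smul_eq_mul]
          field_simp
          nlinarith [hD]
        · rw [map_smul, smul_eq_mul]
          field_simp
    · -- c₁ u = 0, 0 < c₀ u
      have hcw : c₁ w = 0 := by
        rw [h0] at hD
        have : c₀ u * c₁ w = 0 := by linarith
        rcases mul_eq_zero.1 this with h' | h'
        · exact absurd h' (ne_of_gt h1)
        · exact h'
      have hcw0 : 0 < c₀ w := by
        rcases hw2 with h' | ⟨_, h'⟩
        · exact absurd h' (by rw [hcw]; exact lt_irrefl 0)
        · exact h'
      refine ⟨c₀ w / c₀ u, div_nonneg hcw0.le h1.le, ?_⟩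
      apply hinj
      · rw [map_smul, smul_eq_mul]; field_simp
      · rw [map_smul, smul_eq_mul, hcw, h0, mul_zero]
  obtain ⟨t, ht, hwt⟩ := key
  have ht1 : t = 1 := by
    rw [hwt, norm_smul, hu, mul_one, Real.norm_eq_abs, abs_of_nonneg ht] at hw
    exact hw
  rw [hwt, ht1, one_smul]

/-- Cone lemma: sorted vectors give nonnegative cone coefficients. -/
private lemma bal_cone (c₀ c₁ : E →ₗ[ℝ] ℝ)
    (hinj : ∀ z w : E, c₀ z = c₀ w → c₁ z = c₁ w → z = w)
    {u v w : E} (hu : ‖u‖ = 1) (hv : ‖v‖ = 1) (hw : ‖w‖ = 1)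
    (hu2 : 0 < c₁ u ∨ (c₁ u = 0 ∧ 0 < c₀ u))
    (hv2 : 0 < c₁ v ∨ (c₁ v = 0 ∧ 0 < c₀ v))
    (hw2 : 0 < c₁ w ∨ (c₁ w = 0 ∧ 0 < c₀ w))
    (duv : 0 ≤ c₀ u * c₁ v - c₁ u * c₀ v) (dvw : 0 ≤ c₀ v * c₁ w - c₁ v * c₀ w)
    (duw : 0 ≤ c₀ u * c₁ w - c₁ u * c₀ w) :
    ∃ α γ : ℝ, 0 ≤ α ∧ 0 ≤ γ ∧ v = α • u + γ • w := by
  rcases eq_or_lt_of_le duw with hD | hD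
  · have huw : w = u := bal_par c₀ c₁ hinj hu hw hu2 hw2 hD.symm
    have hvu0 : c₀ u * c₁ v - c₁ u * c₀ v = 0 := by
      rw [huw] at dvw
      nlinarith [duv, dvw]
    have hvu : v = u := bal_par c₀ c₁ hinj hu hv hu2 hv2 hvu0
    exact ⟨1, 0, by norm_num, le_rfl, by rw [hvu, huw]; simp⟩
  · refine ⟨(c₀ v * c₁ w - c₁ v * c₀ w)/(c₀ u * c₁ w - c₁ u * c₀ w),
      (c₀ u * c₁ v - c₁ u * c₀ v)/(c₀ u * c₁ w - c₁ u * c₀ w),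
      div_nonneg dvw hD.le, div_nonneg duv hD.le, ?_⟩
    have hDne : c₀ u * c₁ w - c₁ u * c₀ w ≠ 0 := ne_of_gt hD
    apply hinj
    · rw [map_add, map_smul, map_smul, smul_eq_mul, smul_eq_mul]
      rw [div_mul_eq_mul_div, div_mul_eq_mul_div, ← add_div, eq_div_iff hDne]
      ring
    · rw [map_add, map_smul, map_smul, smul_eq_mul, smul_eq_mul]
      rw [div_mul_eq_mul_div, div_mul_eq_mul_div, ← add_div, eq_div_iff hDne]
      ring

/-- Monotone sorting key implies nonnegative determinant. -/
private lemma bal_keydet {a₁ b₁ a₂ b₂ : ℝ}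
    (h₁ : 0 < b₁ ∨ (b₁ = 0 ∧ 0 < a₁)) (h₂ : 0 < b₂ ∨ (b₂ = 0 ∧ 0 < a₂))
    (hk : (toLex ((if b₁ = 0 then (0:ℕ) else 1), (if b₁ = 0 then (0:ℝ) else -a₁/b₁))) ≤
      toLex ((if b₂ = 0 then (0:ℕ) else 1), (if b₂ = 0 then (0:ℝ) else -a₂/b₂))) :
    0 ≤ a₁ * b₂ - b₁ * a₂ := by
  rcases h₁ with hb₁ | ⟨hb₁, ha₁⟩
  · rcases h₂ with hb₂ | ⟨hb₂, ha₂⟩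
    · rw [Prod.Lex.le_iff] at hk
      simp only [if_neg (ne_of_gt hb₁), if_neg (ne_of_gt hb₂)] at hk
      have hr : -a₁/b₁ ≤ -a₂/b₂ := by
        rcases hk with h | ⟨_, h⟩
        · exact absurd h (lt_irrefl 1)
        · exact h
      rw [div_le_div_iff₀ hb₁ hb₂] at hr
      nlinarith [hr]
    · rw [Prod.Lex.le_iff] at hk
      simp only [if_neg (ne_of_gt hb₁), if_pos hb₂, ofLex_toLex] at hk
      rcases hk with h | ⟨h, _⟩ <;> omega
  · rcases h₂ with hb₂ | ⟨hb₂, ha₂⟩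
    · rw [hb₁]
      nlinarith [mul_pos ha₁ hb₂]
    · rw [hb₁, hb₂]
      nlinarith

/-- Sorting-and-balancing for vectors already in the open upper half plane. -/
private lemma bal_main (c₀ c₁ : E →ₗ[ℝ] ℝ)
    (hinj : ∀ z w : E, c₀ z = c₀ w → c₁ z = c₁ w → z = w)
    (k : ℕ) (v : Fin (2*k+1) → E) (hvnorm : ∀ i, ‖v i‖ = 1)
    (hvH : ∀ i, 0 < c₁ (v i) ∨ (c₁ (v i) = 0 ∧ 0 < c₀ (v i))) :
    ∃ δ : Fin (2*k+1) → ℝ, (∀ i, δ i = 1 ∨ δ i = -1) ∧ ‖∑ i, δ i • v i‖ ≤ 1 := by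
  classical
  set key : E → ℕ ×ₗ ℝ :=
    fun z => toLex ((if c₁ z = 0 then (0:ℕ) else 1), (if c₁ z = 0 then (0:ℝ) else -(c₀ z)/(c₁ z)))
    with hkeydef
  set σ : Equiv.Perm (Fin (2*k+1)) := Tuple.sort (key ∘ v) with hσdef
  have hsort : Monotone ((key ∘ v) ∘ σ) := Tuple.monotone_sort (key ∘ v)
  set u : ℕ → E := fun i => if h : i < 2*k+1 then v (σ ⟨i, h⟩) else v (σ ⟨0, by omega⟩)
    with hudef
  have hueq : ∀ (i : ℕ) (h : i < 2*k+1), u i = v (σ ⟨i, h⟩) := by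
    intro i h; simp only [hudef, dif_pos h]
  have hunorm : ∀ i, i ≤ 2*k → ‖u i‖ = 1 := by
    intro i hi
    rw [hueq i (by omega)]
    exact hvnorm _
  have huH : ∀ i, i ≤ 2*k → (0 < c₁ (u i) ∨ (c₁ (u i) = 0 ∧ 0 < c₀ (u i))) := by
    intro i hi
    rw [hueq i (by omega)]
    exact hvH _
  have hudet : ∀ i j : ℕ, i ≤ j → j ≤ 2*k →
      0 ≤ c₀ (u i) * c₁ (u j) - c₁ (u i) * c₀ (u j) := by
    intro i j hij hj
    have hi' : i < 2*k+1 := by omega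
    have hj' : j < 2*k+1 := by omega
    have hmono : key (v (σ ⟨i, hi'⟩)) ≤ key (v (σ ⟨j, hj'⟩)) :=
      hsort (show (⟨i, hi'⟩ : Fin (2*k+1)) ≤ ⟨j, hj'⟩ from hij)
    rw [hueq i hi', hueq j hj']
    exact bal_keydet (hvH _) (hvH _) hmono
  have hcone : ∀ i j l : ℕ, i ≤ j → j ≤ l → l ≤ 2*k →
      ∃ α γ : ℝ, 0 ≤ α ∧ 0 ≤ γ ∧ u j = α • u i + γ • u l := by
    intro i j l hij hjl hl
    exact bal_cone c₀ c₁ hinj (hunorm i (by omega)) (hunorm j (by omega)) (hunorm l hl)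
      (huH i (by omega)) (huH j (by omega)) (huH l hl)
      (hudet i j hij (by omega)) (hudet j l hjl hl) (hudet i l (hij.trans hjl) hl)
  set A : E := ∑ i ∈ Finset.range (2*k+1), (-1:ℝ)^i • u i with hAdef
  have hAle : ‖A‖ ≤ 1 := by
    by_cases hA : A = 0
    · rw [hA, norm_zero]; norm_num
    · obtain ⟨f, hf1, hfA⟩ := exists_dual_vector ℝ A (norm_ne_zero_iff.mpr hA)
      have hfA' : f A = ‖A‖ := by exact_mod_cast hfA
      have hfsum : f A = ∑ i ∈ Finset.range (2*k+1), (-1:ℝ)^i * f (u i) := by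
        rw [hAdef, map_sum]
        exact Finset.sum_congr rfl fun i _ => by rw [map_smul, smul_eq_mul]
      have hfb : ∀ i, i ≤ 2*k → |f (u i)| ≤ 1 := by
        intro i hi
        have h := f.le_opNorm (u i)
        rw [hf1, hunorm i hi, one_mul, Real.norm_eq_abs] at h
        exact h
      rw [← hfA', hfsum]
      exact bal_master k u f hunorm hfb hcone
  refine ⟨fun i => (-1:ℝ)^((σ.symm i : Fin (2*k+1)) : ℕ), ?_, ?_⟩
  · intro i
    rcases Nat.even_or_odd ((σ.symm i : Fin (2*k+1)) : ℕ) with he | he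
    · left; exact he.neg_one_pow
    · right; exact he.neg_one_pow
  · have hsum : ∑ i, ((-1:ℝ)^((σ.symm i : Fin (2*k+1)) : ℕ)) • v i = A := by
      have h1 : ∑ i, ((-1:ℝ)^((σ.symm i : Fin (2*k+1)) : ℕ)) • v i
          = ∑ j, ((-1:ℝ)^((σ.symm (σ j) : Fin (2*k+1)) : ℕ)) • v (σ j) :=
        (Equiv.sum_comp σ (fun i => ((-1:ℝ)^((σ.symm i : Fin (2*k+1)) : ℕ)) • v i)).symm
      rw [h1]
      have h2 : ∀ j : Fin (2*k+1), ((-1:ℝ)^((σ.symm (σ j) : Fin (2*k+1)) : ℕ)) • v (σ j)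
          = ((-1:ℝ)^(j : ℕ)) • v (σ j) := by
        intro j; rw [Equiv.symm_apply_apply]
      rw [Finset.sum_congr rfl fun j _ => h2 j]
      rw [hAdef, ← Fin.sum_univ_eq_sum_range (fun i => (-1:ℝ)^i • u i) (2*k+1)]
      refine Finset.sum_congr rfl fun j _ => ?_
      rw [hueq (j : ℕ) j.isLt]
    rw [hsum]
    exact hAle

end Balance

/-- **Theorem A.** Any odd number of unit vectors in a normed plane can be
signed so that the signed sum has norm at most 1. -/
theorem odd_unit_vectors_balance {E : Type*} [NormedAddCommGroup E] [NormedSpace ℝ E]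
    (hdim : Module.finrank ℝ E = 2) (k : ℕ) (x : Fin (2 * k + 1) → E)
    (hx : ∀ i, ‖x i‖ = 1) :
    ∃ ε : Fin (2 * k + 1) → ℝ, (∀ i, ε i = 1 ∨ ε i = -1) ∧
      ‖∑ i, ε i • x i‖ ≤ 1 := by
  classical
  haveI : FiniteDimensional ℝ E := FiniteDimensional.of_finrank_pos (by rw [hdim]; norm_num)
  set bas : Module.Basis (Fin 2) ℝ E := Module.finBasisOfFinrankEq ℝ E hdim with hbasdef
  set c₀ : E →ₗ[ℝ] ℝ := bas.coord 0 with hc₀def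
  set c₁ : E →ₗ[ℝ] ℝ := bas.coord 1 with hc₁def
  have hinj : ∀ z w : E, c₀ z = c₀ w → c₁ z = c₁ w → z = w := by
    intro z w h0 h1
    apply bas.ext_elem
    intro i
    fin_cases i
    · simpa [hc₀def, Module.Basis.coord_apply] using h0
    · simpa [hc₁def, Module.Basis.coord_apply] using h1
  have hx0 : ∀ i, x i ≠ 0 := by
    intro i h
    have := hx i
    rw [h, norm_zero] at this
    norm_num at this
  have hflip : ∀ i : Fin (2*k+1), ∃ e : ℝ, (e = 1 ∨ e = -1) ∧
      (0 < c₁ (e • x i) ∨ (c₁ (e • x i) = 0 ∧ 0 < c₀ (e • x i))) := by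
    intro i
    by_cases h : 0 < c₁ (x i) ∨ (c₁ (x i) = 0 ∧ 0 < c₀ (x i))
    · exact ⟨1, Or.inl rfl, by simpa using h⟩
    · refine ⟨-1, Or.inr rfl, ?_⟩
      push_neg at h
      obtain ⟨hA, hB⟩ := h
      rcases lt_trichotomy (c₁ (x i)) 0 with hlt | heq | hgt
      · left
        rw [map_smul, smul_eq_mul]
        nlinarith
      · have hc0 : ¬ 0 < c₀ (x i) := not_lt.2 (hB heq)
        have hc0lt : c₀ (x i) < 0 := by
          rcases lt_trichotomy (c₀ (x i)) 0 with h' | h' | h'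
          · exact h'
          · exfalso
            exact hx0 i (hinj (x i) 0 (by rw [h', map_zero]) (by rw [heq, map_zero]))
          · exact absurd h' hc0
        right
        constructor
        · rw [map_smul, smul_eq_mul, heq, mul_zero]
        · rw [map_smul, smul_eq_mul]
          nlinarith
      · exact absurd hgt (not_lt.2 hA)
  choose η hη hηH using hflip
  obtain ⟨δ, hδ, hδle⟩ := bal_main c₀ c₁ hinj k (fun i => η i • x i)
    (fun i => by
      rcases hη i with h | h <;>
        simp [h, norm_smul, hx i])
    hηH
  refine ⟨fun i => δ i * η i, ?_, ?_⟩
  · intro i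
    rcases hδ i with h1 | h1 <;> rcases hη i with h2 | h2 <;>
      simp [h1, h2]
  · have : ∑ i, (δ i * η i) • x i = ∑ i, δ i • (η i • x i) := by
      refine Finset.sum_congr rfl fun i _ => ?_
      rw [mul_smul]
    rw [this]
    exact hδle
end

section
/- Let n be odd and let P be a convex polygon in ℝ² with vertices ±x₁, …, ±x_n, where x₁, …, x_n occur in this order along the boundary of P. Then ∑_{i=1}^n (−1)^i x_i = (1/2) ∑_{i=1}^n (−1)^{i+1}(x_{i+1} − x_i) (with x_{n+1} := −x₁), and this vector lies in P. -/
/-- 2D determinant. -/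
def det2 (u v : ℝ × ℝ) : ℝ := u.1 * v.2 - u.2 * v.1

lemma cramer2 (u v w : ℝ × ℝ) : det2 u w • v = det2 v w • u + det2 u v • w := by
  ext <;> simp [det2, Prod.smul_fst, Prod.smul_snd, smul_eq_mul] <;> ring

/-- Core scalar contradiction for the edge-determinant argument. -/
lemma core_ineq (D A B Λ Μ : ℝ) (hD : 0 < D) (hA : 0 < A) (hΜ : Μ ≤ 0) (hΛ : Λ < 0)
    (h9 : 0 < A * Μ - B * Λ) (h11 : B + Μ < 0) (h6 : 0 < D + Μ)
    (h10 : 0 < (A + D) * Μ - B * Λ) (h2 : 0 < A * D + A * Μ - B * Λ + Λ * D) : False := by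
  have hB : 0 < B := by
    rcases le_or_gt B 0 with hB' | hB'
    · have h1 : A * Μ ≤ 0 := mul_nonpos_of_nonneg_of_nonpos hA.le hΜ
      have h2' : 0 ≤ B * Λ := mul_nonneg_of_nonpos_of_nonpos hB' hΛ.le
      linarith
    · exact hB'
  have hDB : 0 < D - B := by linarith
  have hADB : 0 < A + D - B := by linarith
  have hK : 0 < Μ * (A + D - B) + A * B := by
    have t1 : 0 < (D - B) * ((A + D) * Μ - B * Λ) := mul_pos hDB h10
    have t2 : 0 < B * (A * D + A * Μ - B * Λ + Λ * D) := mul_pos hB h2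
    have hDK : 0 < D * (Μ * (A + D - B) + A * B) := by nlinarith [t1, t2]
    by_contra hK'
    push_neg at hK'
    nlinarith [mul_nonpos_of_nonneg_of_nonpos hD.le hK']
  have hX1 : 0 < (-Μ - B) * (A + D - B) := mul_pos (by linarith) hADB
  have hX2 : 0 < B * (D - B) := mul_pos hB hDB
  nlinarith [hK, hX1, hX2]

/-- The quadruple lemma: positivity of the determinant of two edges. -/
lemma quad2 (p q r s : ℝ × ℝ)
    (hF1 : 0 < det2 p r) (hF2 : 0 < det2 p s)
    (hF5 : 0 < det2 (q - p) (r - q))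
    (hF6 : 0 < det2 (q - p) (s - q))
    (hF7 : 0 < det2 (r - p) (s - r))
    (hF9 : 0 < det2 (s - r) (-p - s))
    (hF10 : 0 < det2 (s - r) (-q - s))
    (hF11 : 0 < det2 (-p - s) (-q + p)) :
    0 < det2 (q - p) (s - r) := by
  obtain ⟨p1, p2⟩ := p
  obtain ⟨q1, q2⟩ := q
  obtain ⟨r1, r2⟩ := r
  obtain ⟨s1, s2⟩ := s
  simp only [det2, Prod.mk_sub_mk, Prod.mk_add_mk, Prod.neg_mk, Prod.fst, Prod.snd] at *
  by_contra hs'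
  push_neg at hs'
  set D : ℝ := (q1 - p1) * (r2 - p2) - (q2 - p2) * (r1 - p1) with hDdef
  set Μ : ℝ := (q1 - p1) * (s2 - r2) - (q2 - p2) * (s1 - r1) with hMdef
  set Λ : ℝ := (s1 - r1) * (r2 - p2) - (s2 - r2) * (r1 - p1) with hLdef
  set A : ℝ := 2 * (p1 * r2 - p2 * r1) with hAdef
  set B : ℝ := (q1 - p1) * (p2 + r2) - (q2 - p2) * (p1 + r1) with hBdef
  have hD : 0 < D := by rw [hDdef]; nlinarith [hF5]
  have hA : 0 < A := by rw [hAdef]; nlinarith [hF1]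
  have hΜ : Μ ≤ 0 := hs'
  have hΛ : Λ < 0 := by rw [hLdef]; nlinarith [hF7]
  have h9 : 0 < A * Μ - B * Λ := by
    have hid : A * Μ - B * Λ = D * ((s1 - r1) * (-p2 - s2) - (s2 - r2) * (-p1 - s1)) := by
      rw [hAdef, hBdef, hDdef, hMdef, hLdef]; ring
    rw [hid]; exact mul_pos hD hF9
  have h11 : B + Μ < 0 := by rw [hBdef, hMdef]; nlinarith [hF11]
  have h6 : 0 < D + Μ := by rw [hDdef, hMdef]; nlinarith [hF6]
  have h10 : 0 < (A + D) * Μ - B * Λ := by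
    have hid : (A + D) * Μ - B * Λ = D * ((s1 - r1) * (-q2 - s2) - (s2 - r2) * (-q1 - s1)) := by
      rw [hAdef, hBdef, hDdef, hMdef, hLdef]; ring
    rw [hid]; exact mul_pos hD hF10
  have h2 : 0 < A * D + A * Μ - B * Λ + Λ * D := by
    have hid : A * D + A * Μ - B * Λ + Λ * D = D * (2 * (p1 * s2 - p2 * s1)) := by
      rw [hAdef, hBdef, hDdef, hMdef, hLdef]; ring
    rw [hid]; exact mul_pos hD (by nlinarith [hF2])
  exact core_ineq D A B Λ Μ hD hA hΜ hΛ h9 h11 h6 h10 h2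


lemma sign_dichotomy (n : ℕ) (d : ℕ → ℝ)
    (hno : ∀ p q r, 1 ≤ p → p < q → q < r → r ≤ n →
      ¬(0 < d p ∧ d q < 0 ∧ 0 < d r) ∧ ¬(d p < 0 ∧ 0 < d q ∧ d r < 0)) :
    (∃ k, 1 ≤ k ∧ k ≤ n + 1 ∧ (∀ i, 1 ≤ i → i < k → 0 ≤ d i) ∧
        (∀ i, k ≤ i → i ≤ n → d i ≤ 0)) ∨
    (∃ k, 1 ≤ k ∧ k ≤ n + 1 ∧ (∀ i, 1 ≤ i → i < k → d i ≤ 0) ∧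
        (∀ i, k ≤ i → i ≤ n → 0 ≤ d i)) := by
  classical
  by_cases hB : ∃ i, 1 ≤ i ∧ i ≤ n ∧ d i < 0
  · by_cases hA : ∃ i, 1 ≤ i ∧ i ≤ n ∧ 0 < d i
    · have ha : True := trivial
      obtain ⟨ha1, ha2, ha3⟩ := Nat.find_spec hA
      obtain ⟨hb1, hb2, hb3⟩ := Nat.find_spec hB
      have hne : (Nat.find hA) ≠ (Nat.find hB) := fun h => by rw [h] at ha3; linarith
      rcases lt_or_gt_of_ne hne with hab | hab
      · left
        refine ⟨(Nat.find hB), hb1, by omega, ?_, ?_⟩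
        · intro i hi1 hi2
          by_contra hdi
          push_neg at hdi
          exact Nat.find_min hB hi2 ⟨hi1, by omega, hdi⟩
        · intro i hi1 hi2
          by_contra hdi
          push_neg at hdi
          rcases eq_or_lt_of_le hi1 with h | h
          · rw [h] at hb3; linarith
          · exact ((hno (Nat.find hA) (Nat.find hB) i ha1 hab h hi2).1) ⟨ha3, hb3, hdi⟩
      · right
        refine ⟨(Nat.find hA), ha1, by omega, ?_, ?_⟩
        · intro i hi1 hi2
          by_contra hdi
          push_neg at hdi
          exact Nat.find_min hA hi2 ⟨hi1, by omega, hdi⟩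
        · intro i hi1 hi2
          by_contra hdi
          push_neg at hdi
          rcases eq_or_lt_of_le hi1 with h | h
          · rw [h] at ha3; linarith
          · exact ((hno (Nat.find hB) (Nat.find hA) i hb1 hab h hi2).2) ⟨hb3, ha3, hdi⟩
    · push_neg at hA
      right
      exact ⟨n + 1, by omega, le_refl _, fun i h1 h2 => le_of_not_gt fun h => by
        have := hA i h1 (by omega); linarith, fun i h1 h2 => by omega⟩
  · push_neg at hB
    left
    exact ⟨n + 1, by omega, le_refl _, fun i h1 h2 => le_of_not_gt fun h => by
      have := hB i h1 (by omega); linarith, fun i h1 h2 => by omega⟩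

/-- **Zonogon lemma.** If `n` is odd and `P` is a convex polygon with vertices
`±x 1, …, ±x n` occurring in this cyclic order on the boundary (encoded by the
positivity of all determinants `det (x i) (x j)` for `i < j`, which says the
`x i` lie in angular order in an open half-plane, together with the extremality
of the `±x i` in `P`), then
`∑ (-1)^i x i = (1/2) ∑ (-1)^(i+1) (x (i+1) - x i)` (with `x (n+1) = -x 1`),
and this vector lies in `P`. -/
theorem zonogon_lemma (n : ℕ) (hn : Odd n) (hn1 : 1 ≤ n) (x : ℕ → ℝ × ℝ)
    (hdet : ∀ i ∈ Finset.Icc 1 n, ∀ j ∈ Finset.Icc 1 n, i < j →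
      0 < (x i).1 * (x j).2 - (x i).2 * (x j).1)
    (P : Set (ℝ × ℝ))
    (hP : P = convexHull ℝ
      ((fun i => x i) '' Set.Icc 1 n ∪ (fun i => -x i) '' Set.Icc 1 n))
    (hvert : ∀ i ∈ Set.Icc 1 n,
      x i ∈ Set.extremePoints ℝ P ∧ -x i ∈ Set.extremePoints ℝ P)
    (hnext : x (n + 1) = -x 1) :
    ∑ i ∈ Finset.Icc 1 n, ((-1 : ℝ)) ^ i • x i
        = (1 / 2 : ℝ) • ∑ i ∈ Finset.Icc 1 n, ((-1 : ℝ)) ^ (i + 1) • (x (i + 1) - x i)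
      ∧ ∑ i ∈ Finset.Icc 1 n, ((-1 : ℝ)) ^ i • x i ∈ P := by
  classical
  -- Part 1 : the telescoping identity
  have heq : ∑ i ∈ Finset.Icc 1 n, ((-1 : ℝ)) ^ i • x i
      = (1 / 2 : ℝ) • ∑ i ∈ Finset.Icc 1 n, ((-1 : ℝ)) ^ (i + 1) • (x (i + 1) - x i) := by
    set F : ℕ → ℝ × ℝ := fun i => ((-1 : ℝ)) ^ i • x i with hF
    have h1 : ∀ (g : ℕ → ℝ × ℝ), ∑ i ∈ Finset.Icc 1 n, g i
        = ∑ i ∈ Finset.range n, g (i + 1) := by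
      intro g
      rw [← Finset.Ico_add_one_right_eq_Icc, Finset.sum_Ico_eq_sum_range]
      simp [Nat.add_comm]
    have hpt : ∀ i : ℕ, ((-1 : ℝ)) ^ (i + 1 + 1) • (x (i + 1 + 1) - x (i + 1))
        = F (i + 1 + 1) + F (i + 1) := by
      intro i
      simp only [hF, smul_sub, pow_succ]
      module
    have key : ∀ m : ℕ, ∑ i ∈ Finset.range m, (F (i + 1 + 1) + F (i + 1))
        = F (m + 1) - F 1 + (2 : ℝ) • ∑ i ∈ Finset.range m, F (i + 1) := by
      intro m
      induction m with
      | zero => simp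
      | succ k ih =>
          rw [Finset.sum_range_succ, ih, Finset.sum_range_succ]
          module
    have hFn1 : F (n + 1) = F 1 := by
      simp only [hF, hnext, pow_succ, hn.neg_one_pow, pow_one]
      module
    rw [h1 (fun i => ((-1 : ℝ)) ^ i • x i),
      h1 (fun i => ((-1 : ℝ)) ^ (i + 1) • (x (i + 1) - x i))]
    simp only [hpt]
    rw [key n, hFn1]
    module
  refine ⟨heq, ?_⟩
  -- setup
  set V : Set (ℝ × ℝ) :=
    (fun i => x i) '' Set.Icc 1 n ∪ (fun i => -x i) '' Set.Icc 1 n with hV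
  have hVP : V ⊆ P := by rw [hP]; exact subset_convexHull ℝ V
  have hPconv : Convex ℝ P := by rw [hP]; exact convex_convexHull ℝ V
  have hVfin : V.Finite :=
    ((Set.finite_Icc 1 n).image _).union ((Set.finite_Icc 1 n).image _)
  have hPcl : IsClosed P := by
    rw [hP]; exact (hVfin.isCompact_convexHull ℝ).isClosed
  have hx1V : x 1 ∈ V := Or.inl ⟨1, ⟨le_refl 1, hn1⟩, rfl⟩
  have hx1nV : -x 1 ∈ V := Or.inr ⟨1, ⟨le_refl 1, hn1⟩, rfl⟩
  have h0P : (0 : ℝ × ℝ) ∈ P := by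
    have := hPconv (hVP hx1V) (hVP hx1nV)
      (by norm_num : (0:ℝ) ≤ 1/2) (by norm_num : (0:ℝ) ≤ 1/2) (by norm_num)
    simpa using this
  set X : ℕ → ℝ × ℝ := fun m => if m ≤ n then x m else -x (m - n) with hX
  have hXx : ∀ m, m ≤ n → X m = x m := fun m h => if_pos h
  have hXm : ∀ m, n < m → X m = -x (m - n) := fun m h => if_neg (by omega)
  have hXshift : ∀ m, 1 ≤ m → m ≤ n → X (m + n) = -X m := by
    intro m h1 h2
    rw [hXx m h2, hXm (m + n) (by omega)]
    have hmn : m + n - n = m := by omega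
    rw [hmn]
  have hXV : ∀ m, 1 ≤ m → m ≤ 2 * n → X m ∈ V := by
    intro m h1 h2
    by_cases h : m ≤ n
    · rw [hXx m h]; exact Or.inl ⟨m, ⟨h1, h⟩, rfl⟩
    · rw [hXm m (by omega)]; exact Or.inr ⟨m - n, ⟨by omega, by omega⟩, rfl⟩
  have hXnV : ∀ m, 1 ≤ m → m ≤ 2 * n → -X m ∈ V := by
    intro m h1 h2
    by_cases h : m ≤ n
    · rw [hXx m h]; exact Or.inr ⟨m, ⟨h1, h⟩, rfl⟩
    · rw [hXm m (by omega)]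
      exact Or.inl ⟨m - n, ⟨by omega, by omega⟩, by simp⟩
  have hXext : ∀ m, 1 ≤ m → m ≤ 2 * n → X m ∈ Set.extremePoints ℝ P := by
    intro m h1 h2
    by_cases h : m ≤ n
    · rw [hXx m h]; exact (hvert m ⟨h1, h⟩).1
    · rw [hXm m (by omega)]; exact (hvert (m - n) ⟨by omega, by omega⟩).2
  have hXn1 : X (n + 1) = -X 1 := by
    rw [hXm (n + 1) (by omega), hXx 1 hn1]
    have hmn : n + 1 - n = 1 := by omega
    rw [hmn]
  -- pairwise determinants
  have hDw : ∀ a b, 1 ≤ a → a < b → b < a + n → b ≤ 2 * n → 0 < det2 (X a) (X b) := by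
    intro a b h1 h2 h3 h4
    have hdet' : ∀ i j, 1 ≤ i → i < j → j ≤ n → 0 < det2 (x i) (x j) := by
      intro i j hi hij hj
      exact hdet i (Finset.mem_Icc.mpr ⟨hi, by omega⟩) j (Finset.mem_Icc.mpr ⟨by omega, hj⟩) hij
    by_cases hb : b ≤ n
    · rw [hXx a (by omega), hXx b hb]
      exact hdet' a b h1 h2 hb
    · by_cases ha : a ≤ n
      · rw [hXx a ha, hXm b (by omega)]
        have h5 := hdet' (b - n) a (by omega) (by omega) ha
        simp only [det2] at *
        simp only [Prod.fst_neg, Prod.snd_neg]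
        nlinarith [h5]
      · rw [hXm a (by omega), hXm b (by omega)]
        have h5 := hdet' (a - n) (b - n) (by omega) (by omega) (by omega)
        simp only [det2] at *
        simp only [Prod.fst_neg, Prod.snd_neg]
        nlinarith [h5]
  -- left turns
  have hLT : ∀ a b c, 1 ≤ a → a < b → b < c → c ≤ a + n → c ≤ 2 * n →
      0 < det2 (X b - X a) (X c - X b) := by
    intro a b c h1 h2 h3 h4 h5
    have Dab : 0 < det2 (X a) (X b) := hDw a b h1 h2 (by omega) (by omega)
    by_cases hc : c = a + n
    · have hXc : X c = -X a := by rw [hc]; exact hXshift a h1 (by omega)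
      rw [hXc]
      have : det2 (X b - X a) (-X a - X b) = 2 * det2 (X a) (X b) := by
        simp only [det2, Prod.fst_sub, Prod.snd_sub, Prod.fst_neg, Prod.snd_neg]
        ring
      rw [this]; linarith
    · have hc' : c < a + n := by omega
      have Dbc : 0 < det2 (X b) (X c) := hDw b c (by omega) h3 (by omega) h5
      have Dac : 0 < det2 (X a) (X c) := hDw a c h1 (by omega) hc' h5
      by_contra hW
      push_neg at hW
      have hsum : det2 (X b) (X c) + det2 (X a) (X b) ≤ det2 (X a) (X c) := by
        have hid : det2 (X b - X a) (X c - X b)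
            = det2 (X b) (X c) + det2 (X a) (X b) - det2 (X a) (X c) := by
          simp only [det2, Prod.fst_sub, Prod.snd_sub]
          ring
        rw [hid] at hW
        linarith
      set α : ℝ := (det2 (X a) (X c))⁻¹ * det2 (X b) (X c) with hα
      set γ : ℝ := (det2 (X a) (X c))⁻¹ * det2 (X a) (X b) with hγ
      have hα0 : 0 < α := mul_pos (inv_pos.mpr Dac) Dbc
      have hγ0 : 0 < γ := mul_pos (inv_pos.mpr Dac) Dab
      have hαγ : α + γ ≤ 1 := by
        rw [hα, hγ, ← mul_add, ← div_eq_inv_mul, div_le_one Dac]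
        exact hsum
      have hcomb : α • X a + γ • X c = X b := by
        have h := cramer2 (X a) (X b) (X c)
        have hD0 : det2 (X a) (X c) ≠ 0 := ne_of_gt Dac
        rw [hα, hγ, mul_smul, mul_smul, ← smul_add, ← h, smul_smul,
          inv_mul_cancel₀ hD0, one_smul]
      have hXaP : X a ∈ P := hVP (hXV a h1 (by omega))
      have hXcP : X c ∈ P := hVP (hXV c (by omega) h5)
      obtain ⟨hmem, hface⟩ := hXext b (by omega) (by omega)
      have hXb0 : X b ≠ 0 := by
        intro h0
        rw [h0] at Dab
        simp [det2] at Dab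
      rcases eq_or_lt_of_le hαγ with hE | hE
      · have hseg : X b ∈ openSegment ℝ (X a) (X c) := ⟨α, γ, hα0, hγ0, hE, hcomb⟩
        have := hface hXaP hXcP hseg
        rw [← this] at Dab
        simp [det2, mul_comm] at Dab
      · set t : ℝ := α + γ with ht
        have ht0 : 0 < t := by positivity
        set z : ℝ × ℝ := (t⁻¹ * α) • X a + (t⁻¹ * γ) • X c with hz
        have hzP : z ∈ P := hPconv hXaP hXcP
          (by positivity) (by positivity)
          (by rw [← mul_add, ← ht, inv_mul_cancel₀ (ne_of_gt ht0)])
        have hseg : X b ∈ openSegment ℝ z 0 := by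
          refine ⟨t, 1 - t, ht0, by linarith, by ring, ?_⟩
          rw [hz, smul_add, smul_smul, smul_smul, mul_inv_cancel_left₀ (ne_of_gt ht0),
            mul_inv_cancel_left₀ (ne_of_gt ht0), smul_zero, add_zero]
          exact hcomb
        have := hface h0P hzP (by rwa [openSegment_symm] at hseg)
        exact hXb0 this.symm
  -- edge determinants
  have hEd : ∀ i j, 1 ≤ i → i < j → j ≤ n →
      0 < det2 (X (i + 1) - X i) (X (j + 1) - X j) := by
    intro i j h1 h2 h3
    have hn2 : 2 ≤ n := by omega
    by_cases hj : j = i + 1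
    · subst hj
      exact hLT i (i + 1) (i + 2) h1 (by omega) (by omega) (by omega) (by omega)
    · by_cases hj2 : j = i + (n - 1)
      · -- necessarily i = 1, j = n, and n ≥ 3
        have hi1 : i = 1 := by omega
        have hjn : j = n := by omega
        have hn3 : 3 ≤ n := by omega
        rw [hi1, hjn]
        have h := hLT n (n + 1) (n + 2) (by omega) (by omega) (by omega) (by omega) (by omega)
        have e1 : X (n + 1) = -X 1 := hXn1
        have e2 : X (n + 2) = -X 2 := by
          rw [hXm (n + 2) (by omega), hXx 2 (by omega)]
          have : n + 2 - n = 2 := by omega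
          rw [this]
        rw [e1, e2] at h
        rw [e1]
        have hid : det2 (X 2 - X 1) (-X 1 - X n)
            = det2 (-X 1 - X n) (-X 2 - -X 1) := by
          simp only [det2, Prod.fst_sub, Prod.snd_sub, Prod.fst_neg, Prod.snd_neg]
          ring
        rw [hid]
        exact h
      · -- main case: i + 1 < j, j - i ≤ n - 2
        have hij : i + 1 < j := by omega
        have hgap : j + 1 < i + n := by omega
        have hF1 : 0 < det2 (X i) (X j) := hDw i j h1 h2 (by omega) (by omega)
        have hF2 : 0 < det2 (X i) (X (j + 1)) := hDw i (j + 1) h1 (by omega) (by omega) (by omega)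
        have hF5 : 0 < det2 (X (i + 1) - X i) (X j - X (i + 1)) :=
          hLT i (i + 1) j h1 (by omega) (by omega) (by omega) (by omega)
        have hF6 : 0 < det2 (X (i + 1) - X i) (X (j + 1) - X (i + 1)) :=
          hLT i (i + 1) (j + 1) h1 (by omega) (by omega) (by omega) (by omega)
        have hF7 : 0 < det2 (X j - X i) (X (j + 1) - X j) :=
          hLT i j (j + 1) h1 h2 (by omega) (by omega) (by omega)
        have hF9' : 0 < det2 (X (j + 1) - X j) (X (i + n) - X (j + 1)) :=
          hLT j (j + 1) (i + n) (by omega) (by omega) (by omega) (by omega) (by omega)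
        have hF10' : 0 < det2 (X (j + 1) - X j) (X (i + n + 1) - X (j + 1)) :=
          hLT j (j + 1) (i + n + 1) (by omega) (by omega) (by omega) (by omega) (by omega)
        have hF11' : 0 < det2 (X (i + n) - X (j + 1)) (X (i + n + 1) - X (i + n)) :=
          hLT (j + 1) (i + n) (i + n + 1) (by omega) (by omega) (by omega) (by omega) (by omega)
        have eI : X (i + n) = -X i := hXshift i h1 (by omega)
        have eI1 : X (i + n + 1) = -X (i + 1) := by
          have : i + n + 1 = (i + 1) + n := by omega
          rw [this]
          exact hXshift (i + 1) (by omega) (by omega)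
        rw [eI] at hF9' hF11'
        rw [eI1] at hF10' hF11'
        rw [sub_neg_eq_add] at hF11'
        have hF9 := hF9'
        have hF10 := hF10'
        have hF11 := hF11'
        exact quad2 (X i) (X (i + 1)) (X j) (X (j + 1)) hF1 hF2 hF5 hF6 hF7 hF9 hF10 hF11
  -- separation argument
  by_contra hS
  obtain ⟨f, u, hfu, hufS⟩ := geometric_hahn_banach_closed_point hPconv hPcl hS
  set c : ℕ → ℝ := fun m => f (X m) with hc
  set d : ℕ → ℝ := fun i => c (i + 1) - c i with hd
  have hcx : ∀ i, 1 ≤ i → i ≤ n → f (x i) = c i := by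
    intro i hi1 hi2
    show f (x i) = f (X i)
    rw [hXx i hi2]
  have hcx1 : ∀ i, 1 ≤ i → i ≤ n → f (x (i + 1)) = c (i + 1) := by
    intro i hi1 hi2
    show f (x (i + 1)) = f (X (i + 1))
    by_cases h : i + 1 ≤ n
    · rw [hXx (i + 1) h]
    · have hin : i = n := by omega
      subst hin
      rw [hnext, hXn1, hXx 1 hn1]
  have hfS : f (∑ i ∈ Finset.Icc 1 n, ((-1 : ℝ)) ^ i • x i)
      = (1 / 2 : ℝ) * ∑ i ∈ Finset.Icc 1 n, ((-1 : ℝ)) ^ (i + 1) * d i := by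
    rw [heq, map_smul, smul_eq_mul, map_sum]
    congr 1
    apply Finset.sum_congr rfl
    intro i hi
    rw [Finset.mem_Icc] at hi
    rw [map_smul, smul_eq_mul, map_sub, hcx i hi.1 hi.2, hcx1 i hi.1 hi.2]
  have hdf : ∀ m, d m = f (X (m + 1) - X m) := by
    intro m
    rw [map_sub]
  have hno : ∀ p q r, 1 ≤ p → p < q → q < r → r ≤ n →
      ¬(0 < d p ∧ d q < 0 ∧ 0 < d r) ∧ ¬(d p < 0 ∧ 0 < d q ∧ d r < 0) := by
    intro p q r hp hpq hqr hr
    have E1 : 0 < det2 (X (p + 1) - X p) (X (q + 1) - X q) :=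
      hEd p q hp hpq (by omega)
    have E2 : 0 < det2 (X (q + 1) - X q) (X (r + 1) - X r) :=
      hEd q r (by omega) hqr hr
    have E3 : 0 < det2 (X (p + 1) - X p) (X (r + 1) - X r) :=
      hEd p r hp (by omega) hr
    have hcr := cramer2 (X (p + 1) - X p) (X (q + 1) - X q) (X (r + 1) - X r)
    have hfr := congrArg f hcr
    rw [map_add, map_smul, map_smul, map_smul, smul_eq_mul, smul_eq_mul, smul_eq_mul] at hfr
    rw [← hdf p, ← hdf q, ← hdf r] at hfr
    constructor
    · rintro ⟨hh1, hh2, hh3⟩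
      nlinarith [mul_pos E2 hh1, mul_pos E1 hh3, mul_pos E3 (neg_pos.mpr hh2)]
    · rintro ⟨hh1, hh2, hh3⟩
      nlinarith [mul_pos E2 (neg_pos.mpr hh1), mul_pos E1 (neg_pos.mpr hh3), mul_pos E3 hh2]
  have htele : ∀ a b : ℕ, a ≤ b → ∑ i ∈ Finset.Ico a b, d i = c b - c a := by
    intro a b hab
    rw [Finset.sum_Ico_eq_sub _ hab]
    have h1 : ∀ m : ℕ, ∑ i ∈ Finset.range m, d i = c m - c 0 := by
      intro m
      exact Finset.sum_range_sub c m
    rw [h1 a, h1 b]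
    ring
  have hcn1 : c (n + 1) = -c 1 := by
    show f (X (n + 1)) = -f (X 1)
    rw [hXn1, map_neg]
  -- the two cases
  have hbound : ∀ k, 1 ≤ k → k ≤ n + 1 →
      (∀ i, 1 ≤ i → i < k → 0 ≤ d i) → (∀ i, k ≤ i → i ≤ n → d i ≤ 0) →
      ∑ i ∈ Finset.Icc 1 n, ((-1 : ℝ)) ^ (i + 1) * d i ≤ 2 * c k := by
    intro k hk1 hkn hpos hneg
    have hstep : ∑ i ∈ Finset.Icc 1 n, ((-1 : ℝ)) ^ (i + 1) * d i
        ≤ ∑ i ∈ Finset.Icc 1 n, (if i < k then d i else -d i) := by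
      apply Finset.sum_le_sum
      intro i hi
      rw [Finset.mem_Icc] at hi
      have hp : ((-1 : ℝ)) ^ (i + 1) = 1 ∨ ((-1 : ℝ)) ^ (i + 1) = -1 := by
        rcases Nat.even_or_odd (i + 1) with h | h
        · exact Or.inl h.neg_one_pow
        · exact Or.inr h.neg_one_pow
      split_ifs with hik
      · have := hpos i hi.1 hik
        rcases hp with h | h <;> rw [h] <;> linarith
      · have := hneg i (by omega) hi.2
        rcases hp with h | h <;> rw [h] <;> linarith
    have hsplit : ∑ i ∈ Finset.Icc 1 n, (if i < k then d i else -d i) = 2 * c k := by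
      rw [← Finset.Ico_add_one_right_eq_Icc,
        ← Finset.sum_Ico_consecutive _ (by omega : 1 ≤ k) (by omega : k ≤ n + 1)]
      have e1 : ∑ i ∈ Finset.Ico 1 k, (if i < k then d i else -d i)
          = ∑ i ∈ Finset.Ico 1 k, d i := by
        apply Finset.sum_congr rfl
        intro i hi
        rw [Finset.mem_Ico] at hi
        rw [if_pos hi.2]
      have e2 : ∑ i ∈ Finset.Ico k (n + 1), (if i < k then d i else -d i)
          = ∑ i ∈ Finset.Ico k (n + 1), (-d i) := by
        apply Finset.sum_congr rfl
        intro i hi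
        rw [Finset.mem_Ico] at hi
        rw [if_neg (by omega)]
      rw [e1, e2, htele 1 k (by omega), Finset.sum_neg_distrib,
        htele k (n + 1) (by omega), hcn1]
      ring
    linarith [hstep, hsplit.le, hsplit.ge]
  have hbound' : ∀ k, 1 ≤ k → k ≤ n + 1 →
      (∀ i, 1 ≤ i → i < k → d i ≤ 0) → (∀ i, k ≤ i → i ≤ n → 0 ≤ d i) →
      ∑ i ∈ Finset.Icc 1 n, ((-1 : ℝ)) ^ (i + 1) * d i ≤ 2 * (-c k) := by
    intro k hk1 hkn hneg hpos
    have hstep : ∑ i ∈ Finset.Icc 1 n, ((-1 : ℝ)) ^ (i + 1) * d i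
        ≤ ∑ i ∈ Finset.Icc 1 n, (if i < k then -d i else d i) := by
      apply Finset.sum_le_sum
      intro i hi
      rw [Finset.mem_Icc] at hi
      have hp : ((-1 : ℝ)) ^ (i + 1) = 1 ∨ ((-1 : ℝ)) ^ (i + 1) = -1 := by
        rcases Nat.even_or_odd (i + 1) with h | h
        · exact Or.inl h.neg_one_pow
        · exact Or.inr h.neg_one_pow
      split_ifs with hik
      · have := hneg i hi.1 hik
        rcases hp with h | h <;> rw [h] <;> linarith
      · have := hpos i (by omega) hi.2
        rcases hp with h | h <;> rw [h] <;> linarith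
    have hsplit : ∑ i ∈ Finset.Icc 1 n, (if i < k then -d i else d i) = 2 * (-c k) := by
      rw [← Finset.Ico_add_one_right_eq_Icc,
        ← Finset.sum_Ico_consecutive _ (by omega : 1 ≤ k) (by omega : k ≤ n + 1)]
      have e1 : ∑ i ∈ Finset.Ico 1 k, (if i < k then -d i else d i)
          = ∑ i ∈ Finset.Ico 1 k, (-d i) := by
        apply Finset.sum_congr rfl
        intro i hi
        rw [Finset.mem_Ico] at hi
        rw [if_pos hi.2]
      have e2 : ∑ i ∈ Finset.Ico k (n + 1), (if i < k then -d i else d i)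
          = ∑ i ∈ Finset.Ico k (n + 1), d i := by
        apply Finset.sum_congr rfl
        intro i hi
        rw [Finset.mem_Ico] at hi
        rw [if_neg (by omega)]
      rw [e1, e2, Finset.sum_neg_distrib, htele 1 k (by omega),
        htele k (n + 1) (by omega), hcn1]
      ring
    linarith [hstep, hsplit.le, hsplit.ge]
  rcases sign_dichotomy n d hno with ⟨k, hk1, hkn, hpos, hneg⟩ | ⟨k, hk1, hkn, hneg, hpos⟩
  · have hb := hbound k hk1 hkn hpos hneg
    have hXkP : X k ∈ P := hVP (hXV k hk1 (by omega))
    have := hfu (X k) hXkP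
    rw [hfS] at hufS
    have hck : f (X k) = c k := rfl
    linarith
  · have hb := hbound' k hk1 hkn hneg hpos
    have hXkP : -X k ∈ P := hVP (hXnV k hk1 (by omega))
    have := hfu (-X k) hXkP
    rw [hfS] at hufS
    have hck : f (-X k) = -c k := by rw [map_neg]
    linarith
end

section
/- Let x₁, x₂, … be a sequence of unit vectors in the Euclidean plane. Then there exist signs ε₁, ε₂, … ∈ {±1} such that for every k ∈ ℕ, ‖∑_{i=1}^{2k} ε_i x_i‖ ≤ √2. -/
lemma key_arith (S T T' a b : ℝ) (hS : S ≤ 2) (hT0 : 0 ≤ T) (hT'0 : 0 ≤ T')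
    (hTT : T + T' = 4) (hid : a^2*T' + b^2*T = S*T*T') :
    T - 2*|a| ≤ 2 - S ∨ T' - 2*|b| ≤ 2 - S := by
  by_contra h
  push_neg at h
  obtain ⟨h1, h2⟩ := h
  have hq : 0 ≤ 2 - S := by linarith
  have hTgt : 2 - S < T := by have := abs_nonneg a; linarith
  have hT'gt : 2 - S < T' := by have := abs_nonneg b; linarith
  have hTpos : 0 < T := lt_of_le_of_lt hq hTgt
  have hT'pos : 0 < T' := lt_of_le_of_lt hq hT'gt
  have hTT'gt : (2-S)^2 < T*T' := by nlinarith
  have ha2 : 4*a^2 < (T-(2-S))^2 := by nlinarith [abs_nonneg a, sq_abs a]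
  have hb2 : 4*b^2 < (T'-(2-S))^2 := by nlinarith [abs_nonneg b, sq_abs b]
  have e1 : 4*a^2*T' ≤ (T-(2-S))^2*T' := mul_le_mul_of_nonneg_right ha2.le hT'0
  have e2 : 4*b^2*T < (T'-(2-S))^2*T := mul_lt_mul_of_pos_right hb2 hTpos
  have hexp : (T-(2-S))^2*T' + (T'-(2-S))^2*T
      = 4*(T*T') - 4*(2-S)*(T*T') + 4*(2-S)^2 := by
    linear_combination (T*T' + (2-S)^2) * hTT
  nlinarith [e1, e2, hid, hexp, hTT'gt]

lemma key_coord (s0 s1 u0 u1 v0 v1 : ℝ) (hu : u0^2+u1^2 = 1) (hv : v0^2+v1^2 = 1)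
    (hs : s0^2+s1^2 ≤ 2) :
    ∃ ε δ : ℝ, (ε = 1 ∨ ε = -1) ∧ (δ = 1 ∨ δ = -1) ∧
      (s0 + ε*u0 + δ*v0)^2 + (s1 + ε*u1 + δ*v1)^2 ≤ 2 := by
  have hc : (u0+v0)*(u0-v0) + (u1+v1)*(u1-v1) = 0 := by linear_combination hu - hv
  have main := key_arith (s0^2+s1^2) ((u0+v0)^2+(u1+v1)^2) ((u0-v0)^2+(u1-v1)^2)
    (s0*(u0+v0)+s1*(u1+v1)) (s0*(u0-v0)+s1*(u1-v1)) hs (by positivity) (by positivity)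
    (by linear_combination 2*hu + 2*hv)
    (by linear_combination (2*(s0*(u0+v0)+s1*(u1+v1))*(s0*(u0-v0)+s1*(u1-v1))
      - (s0^2+s1^2)*((u0+v0)*(u0-v0) + (u1+v1)*(u1-v1))) * hc)
  rcases main with hm | hm
  · rcases le_or_gt 0 (s0*(u0+v0)+s1*(u1+v1)) with hA | hA
    · refine ⟨-1, -1, Or.inr rfl, Or.inr rfl, ?_⟩
      rw [abs_of_nonneg hA] at hm; nlinarith [hm]
    · refine ⟨1, 1, Or.inl rfl, Or.inl rfl, ?_⟩
      rw [abs_of_neg hA] at hm; nlinarith [hm]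
  · rcases le_or_gt 0 (s0*(u0-v0)+s1*(u1-v1)) with hB | hB
    · refine ⟨-1, 1, Or.inr rfl, Or.inl rfl, ?_⟩
      rw [abs_of_nonneg hB] at hm; nlinarith [hm]
    · refine ⟨1, -1, Or.inl rfl, Or.inr rfl, ?_⟩
      rw [abs_of_neg hB] at hm; nlinarith [hm]



lemma normsq_eq (y : EuclideanSpace ℝ (Fin 2)) : ‖y‖^2 = (y 0)^2 + (y 1)^2 := by
  rw [EuclideanSpace.norm_eq, Real.sq_sqrt (by positivity)]
  simp [Fin.sum_univ_two, sq_abs]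

lemma key_vec (s u v : EuclideanSpace ℝ (Fin 2)) (hu : ‖u‖ = 1) (hv : ‖v‖ = 1)
    (hs : ‖s‖^2 ≤ 2) :
    ∃ ε δ : ℝ, (ε = 1 ∨ ε = -1) ∧ (δ = 1 ∨ δ = -1) ∧
      ‖s + ε • u + δ • v‖^2 ≤ 2 := by
  have hu' : (u 0)^2 + (u 1)^2 = 1 := by rw [← normsq_eq, hu]; norm_num
  have hv' : (v 0)^2 + (v 1)^2 = 1 := by rw [← normsq_eq, hv]; norm_num
  have hs' : (s 0)^2 + (s 1)^2 ≤ 2 := by rw [← normsq_eq]; exact hs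
  obtain ⟨ε, δ, h1, h2, h3⟩ := key_coord (s 0) (s 1) (u 0) (u 1) (v 0) (v 1) hu' hv' hs'
  refine ⟨ε, δ, h1, h2, ?_⟩
  rw [normsq_eq]
  simpa using h3

/-- In the Euclidean plane, for any sequence of unit vectors there are signs
such that all partial sums of even length have norm at most `√2`. -/
theorem online_balancing_euclidean_plane
    (x : ℕ → EuclideanSpace ℝ (Fin 2)) (hx : ∀ i, 1 ≤ i → ‖x i‖ = 1) :
    ∃ ε : ℕ → ℝ, (∀ i, ε i = 1 ∨ ε i = -1) ∧
      ∀ k : ℕ, ‖∑ i ∈ Finset.Icc 1 (2 * k), ε i • x i‖ ≤ Real.sqrt 2 := by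
  classical
  have key' : ∀ s u v : EuclideanSpace ℝ (Fin 2), ∃ p : ℝ × ℝ,
      (p.1 = 1 ∨ p.1 = -1) ∧ (p.2 = 1 ∨ p.2 = -1) ∧
      (‖s‖^2 ≤ 2 → ‖u‖ = 1 → ‖v‖ = 1 → ‖s + p.1 • u + p.2 • v‖^2 ≤ 2) := by
    intro s u v
    by_cases hs : ‖s‖^2 ≤ 2
    · by_cases hu : ‖u‖ = 1
      · by_cases hv : ‖v‖ = 1
        · obtain ⟨ε, δ, h1, h2, h3⟩ := key_vec s u v hu hv hs
          exact ⟨(ε, δ), h1, h2, fun _ _ _ => h3⟩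
        · exact ⟨(1,1), Or.inl rfl, Or.inl rfl, fun _ _ hv' => absurd hv' hv⟩
      · exact ⟨(1,1), Or.inl rfl, Or.inl rfl, fun _ hu' _ => absurd hu' hu⟩
    · exact ⟨(1,1), Or.inl rfl, Or.inl rfl, fun hs' => absurd hs' hs⟩
  choose F hF1 hF2 hF3 using key'
  let step : ℕ → EuclideanSpace ℝ (Fin 2) → EuclideanSpace ℝ (Fin 2) := fun k s =>
    s + (F s (x (2*k+1)) (x (2*k+2))).1 • x (2*k+1)
      + (F s (x (2*k+1)) (x (2*k+2))).2 • x (2*k+2)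
  let S : ℕ → EuclideanSpace ℝ (Fin 2) := fun k => Nat.rec 0 step k
  have hSsucc : ∀ k, S (k+1) = step k (S k) := fun k => rfl
  let ε : ℕ → ℝ := fun i =>
    if i % 2 = 1 then (F (S (i/2)) (x (2*(i/2)+1)) (x (2*(i/2)+2))).1
    else if i = 0 then 1
    else (F (S (i/2 - 1)) (x (2*(i/2-1)+1)) (x (2*(i/2-1)+2))).2
  have hε1 : ∀ k, ε (2*k+1) = (F (S k) (x (2*k+1)) (x (2*k+2))).1 := by
    intro k
    have h1 : (2*k+1) % 2 = 1 := by omega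
    have h2 : (2*k+1) / 2 = k := by omega
    simp only [ε, h1, h2, if_pos]
  have hε2 : ∀ k, ε (2*k+2) = (F (S k) (x (2*k+1)) (x (2*k+2))).2 := by
    intro k
    have h1 : (2*k+2) % 2 = 0 := by omega
    have h2 : (2*k+2) / 2 - 1 = k := by omega
    have h3 : (2*k+2) ≠ 0 := by omega
    simp only [ε, h1, h2, h3, if_neg, if_false]
    norm_num
  have hmain : ∀ k, (∑ i ∈ Finset.Icc 1 (2*k), ε i • x i) = S k ∧ ‖S k‖^2 ≤ 2 := by
    intro k
    induction k with
    | zero => simp [S]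
    | succ k ih =>
      obtain ⟨ihsum, ihnorm⟩ := ih
      have hb1 : ‖x (2*k+1)‖ = 1 := hx _ (by omega)
      have hb2 : ‖x (2*k+2)‖ = 1 := hx _ (by omega)
      constructor
      · have e1 : 2*(k+1) = (2*k+1) + 1 := by ring
        rw [e1, Finset.sum_Icc_succ_top (by omega), Finset.sum_Icc_succ_top (by omega),
          ihsum, hSsucc, hε1, hε2]
      · rw [hSsucc]
        exact hF3 (S k) (x (2*k+1)) (x (2*k+2)) ihnorm hb1 hb2
  refine ⟨ε, ?_, ?_⟩
  · intro i
    by_cases h1 : i % 2 = 1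
    · simp only [ε, h1, if_pos]; exact hF1 _ _ _
    · by_cases h0 : i = 0
      · simp only [ε, h1, h0]; norm_num
      · simp only [ε, h1, h0, if_neg, if_false]
        norm_num
        exact hF2 _ _ _
  · intro k
    obtain ⟨hsum, hnorm⟩ := hmain k
    rw [hsum]
    calc ‖S k‖ = Real.sqrt (‖S k‖^2) := (Real.sqrt_sq (norm_nonneg _)).symm
      _ ≤ Real.sqrt 2 := Real.sqrt_le_sqrt hnorm
end

section
/- Let w, a, b be vectors in a normed plane with ‖w‖ ≤ 2 and ‖a‖ = ‖b‖ = 1. Then there exist signs δ, ε ∈ {±1} such that ‖w + δa + εb‖ ≤ 2. -/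
/-- Key geometric lemma: if `w = -(s•c) - t•d` with `s,t ≥ 0`, `‖w‖ ≤ 2`,
`‖c‖ ≤ 2`, and `‖c+d‖ = ‖c-d‖ = 2`, then `‖w+c‖ ≤ 2` or `‖w+d‖ ≤ 2`. -/
lemma online_step_aux {E : Type*} [NormedAddCommGroup E] [NormedSpace ℝ E]
    (c d w : E) (s t : ℝ) (hs : 0 ≤ s) (ht : 0 ≤ t)
    (hw : ‖w‖ ≤ 2) (hc : ‖c‖ ≤ 2)
    (hcd : ‖c + d‖ = 2) (hcd' : ‖c - d‖ = 2)
    (hrep : w = -(s • c) - t • d) :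
    ‖w + c‖ ≤ 2 ∨ ‖w + d‖ ≤ 2 := by
  -- first: min s t ≤ 1
  have hwnorm : ‖w‖ = ‖s • c + t • d‖ := by
    rw [hrep]
    rw [show -(s • c) - t • d = -(s • c + t • d) by abel, norm_neg]
  have e1 : s • c + t • d = ((s+t)/2) • (c+d) + ((s-t)/2) • (c-d) := by module
  have hA : ‖((s+t)/2) • (c+d)‖ = s + t := by
    rw [norm_smul, hcd, Real.norm_eq_abs, abs_of_nonneg (by linarith)]; ring
  have hB : ‖((s-t)/2) • (c-d)‖ = |s - t| := by
    rw [norm_smul, hcd', Real.norm_eq_abs, abs_div]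
    simp
  have hlow : s + t - |s - t| ≤ ‖w‖ := by
    have : ‖((s+t)/2) • (c+d)‖ ≤ ‖s • c + t • d‖ + ‖((s-t)/2) • (c-d)‖ := by
      calc ‖((s+t)/2) • (c+d)‖
          = ‖(s • c + t • d) - ((s-t)/2) • (c-d)‖ := by rw [e1]; congr 1; abel
        _ ≤ ‖s • c + t • d‖ + ‖((s-t)/2) • (c-d)‖ := norm_sub_le _ _
    rw [hA, hB] at this
    rw [hwnorm]; linarith
  have hmin : s ≤ 1 ∨ t ≤ 1 := by
    rcases le_total s t with h | h
    · left; rw [abs_of_nonpos (by linarith)] at hlow; linarith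
    · right; rw [abs_of_nonneg (by linarith)] at hlow; linarith
  rcases le_or_gt (s + t) 1 with hst | hst
  · -- small case: w + c works
    left
    have heq : w + c = (1 - s - t) • c + t • (c - d) := by rw [hrep]; module
    calc ‖w + c‖ ≤ ‖(1 - s - t) • c‖ + ‖t • (c - d)‖ := by
          rw [heq]; exact norm_add_le _ _
      _ = (1 - s - t) * ‖c‖ + t * 2 := by
          rw [norm_smul, norm_smul, hcd', Real.norm_eq_abs, Real.norm_eq_abs,
            abs_of_nonneg (by linarith : (0:ℝ) ≤ 1 - s - t), abs_of_nonneg ht]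
      _ ≤ (1 - s - t) * 2 + t * 2 := by
          nlinarith [norm_nonneg c]
      _ ≤ 2 := by linarith
  · have hpos : (0:ℝ) < s + t := by linarith
    rcases hmin with hs1 | ht1
    · -- s ≤ 1 : w + d works
      right
      have heq : (s + t) • (w + d) = (s + t - 1) • w + s • (d - c) := by rw [hrep]; module
      have hdc : ‖d - c‖ = 2 := by rw [norm_sub_rev]; exact hcd'
      have hb1 : ‖(s + t) • (w + d)‖ ≤ (s + t - 1) * 2 + s * 2 := by
        calc ‖(s + t) • (w + d)‖ ≤ ‖(s + t - 1) • w‖ + ‖s • (d - c)‖ := by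
              rw [heq]; exact norm_add_le _ _
          _ = (s + t - 1) * ‖w‖ + s * 2 := by
              rw [norm_smul, norm_smul, hdc, Real.norm_eq_abs, Real.norm_eq_abs,
                abs_of_nonneg (by linarith : (0:ℝ) ≤ s + t - 1), abs_of_nonneg hs]
          _ ≤ (s + t - 1) * 2 + s * 2 := by nlinarith [norm_nonneg w]
      rw [norm_smul, Real.norm_eq_abs, abs_of_pos hpos] at hb1
      nlinarith [norm_nonneg (w + d)]
    · -- t ≤ 1 : w + c works
      left
      have heq : (s + t) • (w + c) = (s + t - 1) • w + t • (c - d) := by rw [hrep]; module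
      have hb1 : ‖(s + t) • (w + c)‖ ≤ (s + t - 1) * 2 + t * 2 := by
        calc ‖(s + t) • (w + c)‖ ≤ ‖(s + t - 1) • w‖ + ‖t • (c - d)‖ := by
              rw [heq]; exact norm_add_le _ _
          _ = (s + t - 1) * ‖w‖ + t * 2 := by
              rw [norm_smul, norm_smul, hcd', Real.norm_eq_abs, Real.norm_eq_abs,
                abs_of_nonneg (by linarith : (0:ℝ) ≤ s + t - 1), abs_of_nonneg ht]
          _ ≤ (s + t - 1) * 2 + t * 2 := by nlinarith [norm_nonneg w]
      rw [norm_smul, Real.norm_eq_abs, abs_of_pos hpos] at hb1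
      nlinarith [norm_nonneg (w + c)]

/-- If `‖w‖ ≤ 2` and `a, b` are unit vectors in a normed plane, then signs
`δ, ε` can be chosen so that `‖w + δa + εb‖ ≤ 2`. -/
theorem online_step_normed_plane {E : Type*} [NormedAddCommGroup E] [NormedSpace ℝ E]
    (hdim : Module.finrank ℝ E = 2) (w a b : E)
    (hw : ‖w‖ ≤ 2) (ha : ‖a‖ = 1) (hb : ‖b‖ = 1) :
    ∃ δ ε : ℝ, (δ = 1 ∨ δ = -1) ∧ (ε = 1 ∨ ε = -1) ∧ ‖w + δ • a + ε • b‖ ≤ 2 := by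
  by_cases hdep : ∃ l : ℝ, b = l • a
  · obtain ⟨l, rfl⟩ := hdep
    have hl : |l| = 1 := by
      rw [norm_smul, ha, Real.norm_eq_abs, mul_one] at hb; exact hb
    have hll : l * l = 1 := by nlinarith [sq_abs l]
    refine ⟨1, -l, Or.inl rfl, ?_, ?_⟩
    · rcases (abs_eq (by norm_num : (0:ℝ) ≤ 1)).mp hl with h | h
      · right; rw [h]
      · left; rw [h]; norm_num
    · have e : w + (1:ℝ) • a + (-l) • (l • a) = w + (1 - l * l) • a := by module
      rw [e, hll]; simpa using hw
  · -- independent case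
    push_neg at hdep
    have ha0 : a ≠ 0 := by
      intro h; rw [h, norm_zero] at ha; norm_num at ha
    have hli : LinearIndependent ℝ ![b, a] := by
      rw [linearIndependent_fin2]
      refine ⟨by simpa using ha0, ?_⟩
      intro l hl
      exact hdep l (by simpa using hl.symm)
    have hspan : Submodule.span ℝ ({b, a} : Set E) = ⊤ := by
      have hr : Set.range ![b, a] = ({b, a} : Set E) := by
        simp [Matrix.range_cons, Matrix.range_empty, Set.pair_comm]
      have := hli.span_eq_top_of_card_eq_finrank (by simp [hdim])
      rwa [hr] at this
    have hwmem : w ∈ Submodule.span ℝ ({b, a} : Set E) := by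
      rw [hspan]; trivial
    obtain ⟨q, p, hpq⟩ := Submodule.mem_span_pair.mp hwmem
    set x : ℝ := (p + q) / 2 with hx
    set y : ℝ := (p - q) / 2 with hy
    obtain ⟨σ, hσ1, hσx⟩ : ∃ σ : ℝ, (σ = 1 ∨ σ = -1) ∧ |x| * σ = x := by
      rcases le_or_gt 0 x with h | h
      · exact ⟨1, Or.inl rfl, by rw [abs_of_nonneg h, mul_one]⟩
      · exact ⟨-1, Or.inr rfl, by rw [abs_of_neg h]; ring⟩
    obtain ⟨τ, hτ1, hτy⟩ : ∃ τ : ℝ, (τ = 1 ∨ τ = -1) ∧ |y| * τ = y := by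
      rcases le_or_gt 0 y with h | h
      · exact ⟨1, Or.inl rfl, by rw [abs_of_nonneg h, mul_one]⟩
      · exact ⟨-1, Or.inr rfl, by rw [abs_of_neg h]; ring⟩
    have hab2 : ‖a + b‖ ≤ 2 := by
      calc ‖a + b‖ ≤ ‖a‖ + ‖b‖ := norm_add_le _ _
        _ = 2 := by rw [ha, hb]; norm_num
    have hc : ‖(-σ) • (a + b)‖ ≤ 2 := by
      rw [norm_smul, Real.norm_eq_abs]
      rcases hσ1 with h | h <;> rw [h] <;> simpa using hab2
    have hcd : ‖(-σ) • (a + b) + (-τ) • (a - b)‖ = 2 := by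
      rcases hσ1 with h | h <;> rcases hτ1 with h' | h' <;> rw [h, h']
      · rw [show (-(1:ℝ)) • (a + b) + (-(1:ℝ)) • (a - b) = (-2 : ℝ) • a by module,
          norm_smul, ha]; norm_num
      · rw [show (-(1:ℝ)) • (a + b) + (-(-1:ℝ)) • (a - b) = (-2 : ℝ) • b by module,
          norm_smul, hb]; norm_num
      · rw [show (-(-1:ℝ)) • (a + b) + (-(1:ℝ)) • (a - b) = (2 : ℝ) • b by module,
          norm_smul, hb]; norm_num
      · rw [show (-(-1:ℝ)) • (a + b) + (-(-1:ℝ)) • (a - b) = (2 : ℝ) • a by module,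
          norm_smul, ha]; norm_num
    have hcd' : ‖(-σ) • (a + b) - (-τ) • (a - b)‖ = 2 := by
      rcases hσ1 with h | h <;> rcases hτ1 with h' | h' <;> rw [h, h']
      · rw [show (-(1:ℝ)) • (a + b) - (-(1:ℝ)) • (a - b) = (-2 : ℝ) • b by module,
          norm_smul, hb]; norm_num
      · rw [show (-(1:ℝ)) • (a + b) - (-(-1:ℝ)) • (a - b) = (-2 : ℝ) • a by module,
          norm_smul, ha]; norm_num
      · rw [show (-(-1:ℝ)) • (a + b) - (-(1:ℝ)) • (a - b) = (2 : ℝ) • a by module,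
          norm_smul, ha]; norm_num
      · rw [show (-(-1:ℝ)) • (a + b) - (-(-1:ℝ)) • (a - b) = (2 : ℝ) • b by module,
          norm_smul, hb]; norm_num
    have hrep : w = -(|x| • ((-σ) • (a + b))) - |y| • ((-τ) • (a - b)) := by
      have e1 : -(|x| • ((-σ) • (a + b))) - |y| • ((-τ) • (a - b))
          = (|x| * σ) • (a + b) + (|y| * τ) • (a - b) := by module
      rw [e1, hσx, hτy, hx, hy, ← hpq]
      module
    rcases online_step_aux ((-σ) • (a + b)) ((-τ) • (a - b)) w |x| |y|
      (abs_nonneg _) (abs_nonneg _) hw hc hcd hcd' hrep with h | h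
    · refine ⟨-σ, -σ, ?_, ?_, ?_⟩
      · rcases hσ1 with h' | h' <;> rw [h'] <;> simp
      · rcases hσ1 with h' | h' <;> rw [h'] <;> simp
      · have e : w + (-σ) • a + (-σ) • b = w + (-σ) • (a + b) := by module
        rw [e]; exact h
    · refine ⟨-τ, τ, ?_, ?_, ?_⟩
      · rcases hτ1 with h' | h' <;> rw [h'] <;> simp
      · exact hτ1
      · have e : w + (-τ) • a + τ • b = w + (-τ) • (a - b) := by module
        rw [e]; exact h
end

section
/- Let w, a, b be vectors in the Euclidean plane with ‖w‖ ≤ √2 and ‖a‖ = ‖b‖ = 1. Then there exist signs δ, ε ∈ {±1} such that ‖w + δa + εb‖ ≤ √2. -/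
set_option maxHeartbeats 1000000 in
lemma core_uv_plane_aux (w0 w1 u0 u1 v0 v1 : ℝ) (hw : w0^2 + w1^2 ≤ 2)
    (hD : u0*v0 + u1*v1 = 0) (hPQ : (u0^2+u1^2) + (v0^2+v1^2) = 4)
    (h1 : 2 < (w0+u0)^2 + (w1+u1)^2) (h2 : 2 < (w0-u0)^2 + (w1-u1)^2)
    (h3 : 2 < (w0+v0)^2 + (w1+v1)^2) (h4 : 2 < (w0-v0)^2 + (w1-v1)^2) :
    False := by
  set R := w0^2 + w1^2 with hR
  set P := u0^2 + u1^2 with hP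
  set Q := v0^2 + v1^2 with hQ
  set α := w0*u0 + w1*u1 with hal
  set β := w0*v0 + w1*v1 with hbe
  have e1 : 2 < R + P + 2*α := by
    have : (w0+u0)^2 + (w1+u1)^2 = R + P + 2*α := by rw [hR, hP, hal]; ring
    linarith [h1]
  have e2 : 2 < R + P - 2*α := by
    have : (w0-u0)^2 + (w1-u1)^2 = R + P - 2*α := by rw [hR, hP, hal]; ring
    linarith [h2]
  have e3 : 2 < R + Q + 2*β := by
    have : (w0+v0)^2 + (w1+v1)^2 = R + Q + 2*β := by rw [hR, hQ, hbe]; ring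
    linarith [h3]
  have e4 : 2 < R + Q - 2*β := by
    have : (w0-v0)^2 + (w1-v1)^2 = R + Q - 2*β := by rw [hR, hQ, hbe]; ring
    linarith [h4]
  have hpar : α^2*Q + β^2*P = R*P*Q := by
    rw [hR, hP, hQ, hal, hbe]
    linear_combination (w1^2*(u1*v1-u0*v0) + 2*w0*w1*(u1*v0+u0*v1)
      + w0^2*(u0*v0-u1*v1)) * hD
  have hRnn : 0 ≤ R := by rw [hR]; positivity
  clear_value R P Q α β
  have hApos : 0 < R + P - 2 := by linarith
  have hBpos : 0 < R + Q - 2 := by linarith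
  have hPpos : 0 < P := by linarith
  have hQpos : 0 < Q := by linarith
  have hA2 : 4*α^2 < (R + P - 2)^2 := by
    have t1 : 0 < (R + P - 2) - 2*α := by linarith
    have t2 : 0 < (R + P - 2) + 2*α := by linarith
    nlinarith [mul_pos t1 t2]
  have hB2 : 4*β^2 < (R + Q - 2)^2 := by
    have t1 : 0 < (R + Q - 2) - 2*β := by linarith
    have t2 : 0 < (R + Q - 2) + 2*β := by linarith
    nlinarith [mul_pos t1 t2]
  have m1 : 4*α^2 * Q < (R + P - 2)^2 * Q := mul_lt_mul_of_pos_right hA2 hQpos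
  have m2 : 4*β^2 * P < (R + Q - 2)^2 * P := mul_lt_mul_of_pos_right hB2 hPpos
  have hid : (R + P - 2)^2 * Q + (R + Q - 2)^2 * P
      = 4*(R*P*Q) - 4*((R + P - 2)*(R + Q - 2)) - 8*(R*(2-R)) := by
    linear_combination (R^2 + P*Q - 4) * hPQ
  have hAB : 0 < (R + P - 2)*(R + Q - 2) := mul_pos hApos hBpos
  have hR2 : 0 ≤ R*(2-R) := mul_nonneg hRnn (by linarith)
  linarith [m1, m2, hid, hpar, hAB, hR2]

set_option maxHeartbeats 1000000 in
lemma core_plane_aux (w0 w1 a0 a1 b0 b1 : ℝ) (hw : w0^2 + w1^2 ≤ 2)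
    (ha : a0^2 + a1^2 = 1) (hb : b0^2 + b1^2 = 1) :
    ∃ δ ε : ℝ, (δ = 1 ∨ δ = -1) ∧ (ε = 1 ∨ ε = -1) ∧
      (w0 + δ*a0 + ε*b0)^2 + (w1 + δ*a1 + ε*b1)^2 ≤ 2 := by
  by_cases h1 : (w0 + a0 + b0)^2 + (w1 + a1 + b1)^2 ≤ 2
  · exact ⟨1, 1, Or.inl rfl, Or.inl rfl, by nlinarith [h1]⟩
  by_cases h2 : (w0 - a0 - b0)^2 + (w1 - a1 - b1)^2 ≤ 2
  · exact ⟨-1, -1, Or.inr rfl, Or.inr rfl, by nlinarith [h2]⟩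
  by_cases h3 : (w0 + a0 - b0)^2 + (w1 + a1 - b1)^2 ≤ 2
  · exact ⟨1, -1, Or.inl rfl, Or.inr rfl, by nlinarith [h3]⟩
  by_cases h4 : (w0 - a0 + b0)^2 + (w1 - a1 + b1)^2 ≤ 2
  · exact ⟨-1, 1, Or.inr rfl, Or.inl rfl, by nlinarith [h4]⟩
  exfalso
  push_neg at h1 h2 h3 h4
  refine core_uv_plane_aux w0 w1 (a0+b0) (a1+b1) (a0-b0) (a1-b1) hw
    (by linear_combination ha - hb) (by linear_combination 2*ha + 2*hb)
    (by nlinarith [h1]) (by nlinarith [h2]) (by nlinarith [h3]) (by nlinarith [h4])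

/-- If `‖w‖ ≤ √2` and `a, b` are unit vectors in the Euclidean plane, then
signs `δ, ε` can be chosen so that `‖w + δa + εb‖ ≤ √2`. -/
theorem online_step_euclidean_plane (w a b : EuclideanSpace ℝ (Fin 2))
    (hw : ‖w‖ ≤ Real.sqrt 2) (ha : ‖a‖ = 1) (hb : ‖b‖ = 1) :
    ∃ δ ε : ℝ, (δ = 1 ∨ δ = -1) ∧ (ε = 1 ∨ ε = -1) ∧
      ‖w + δ • a + ε • b‖ ≤ Real.sqrt 2 := by
  have normsq : ∀ x : EuclideanSpace ℝ (Fin 2), ‖x‖ = Real.sqrt ((x 0)^2 + (x 1)^2) := by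
    intro x
    rw [EuclideanSpace.norm_eq]
    congr 1
    simp [Fin.sum_univ_two, sq_abs]
  have hw' : (w 0)^2 + (w 1)^2 ≤ 2 := by
    rw [normsq] at hw
    have := (Real.sqrt_le_sqrt_iff (by positivity)).mp hw
    linarith
  have ha' : (a 0)^2 + (a 1)^2 = 1 := by
    rw [normsq] at ha
    exact Real.sqrt_eq_one.mp ha
  have hb' : (b 0)^2 + (b 1)^2 = 1 := by
    rw [normsq] at hb
    exact Real.sqrt_eq_one.mp hb
  obtain ⟨δ, ε, hδ, hε, hle⟩ := core_plane_aux (w 0) (w 1) (a 0) (a 1) (b 0) (b 1) hw' ha' hb'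
  refine ⟨δ, ε, hδ, hε, ?_⟩
  rw [normsq]
  have h0 : (w + δ • a + ε • b) 0 = w 0 + δ * a 0 + ε * b 0 := rfl
  have h1 : (w + δ • a + ε • b) 1 = w 1 + δ * a 1 + ε * b 1 := rfl
  rw [h0, h1]
  exact Real.sqrt_le_sqrt hle
end

section
/- Under the hypotheses of Theorem B (for all distinct i,j ∈ {1,…,n} the closed angle ∠p_i p₀ p_j contains a ray opposite some ray p₀p_k), if moreover p₀ does not lie on any segment [p_i, p_j], then n is odd, and when p₁, …, p_n are ordered counterclockwise around p₀, the ray opposite p₀p_k contained in the open angle ∠p_i p₀ p_{i+1} satisfies k ≡ i + (n+1)/2 (mod n). -/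
open Real

lemma loc_aux (x : ℝ) (hx : 0 < Real.sin x) :
    ∃ c : ℤ, 0 < x + 2*π*c ∧ x + 2*π*c < π := by
  have hπ := Real.pi_pos
  have h2π : (0:ℝ) < 2*π := by linarith
  set c : ℤ := ⌊x / (2*π)⌋ with hc
  have h1 : (c:ℝ)*(2*π) ≤ x := (le_div_iff₀ h2π).mp (Int.floor_le _)
  have h2 : x < ((c:ℝ)+1)*(2*π) := (div_lt_iff₀ h2π).mp (Int.lt_floor_add_one _)
  refine ⟨-c, ?_, ?_⟩
  · push_cast
    have hsin : Real.sin (x + 2*π*(-c:ℝ)) = Real.sin x := by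
      have := Real.sin_add_int_mul_two_pi x (-c)
      rw [← this]; push_cast; ring_nf
    have hne : x + 2*π*(-c:ℝ) ≠ 0 := by
      intro h; rw [h, Real.sin_zero] at hsin; linarith [hsin ▸ hx]
    cases lt_or_eq_of_le (by nlinarith : (0:ℝ) ≤ x + 2*π*(-c:ℝ)) with
    | inl h => exact h
    | inr h => exact absurd h.symm hne
  · push_cast
    by_contra hcon
    push_neg at hcon
    have hle : x + 2*π*(-c:ℝ) - 2*π ≤ 0 := by nlinarith
    have hge : -π ≤ x + 2*π*(-c:ℝ) - 2*π := by nlinarith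
    have : Real.sin (x + 2*π*(-c:ℝ) - 2*π) ≤ 0 :=
      Real.sin_nonpos_of_nonpos_of_neg_pi_le hle hge
    have heq : Real.sin (x + 2*π*(-c:ℝ) - 2*π) = Real.sin x := by
      have := Real.sin_add_int_mul_two_pi x (-c-1)
      rw [← this]; push_cast; ring_nf
    linarith [heq ▸ this]

lemma cone_loc (α β γ s t : ℝ) (hs : 0 ≤ s) (ht : 0 ≤ t)
    (hab : α < β) (hab2 : β < α + 2*π) (hab3 : β ≠ α + π)
    (hγα : ∀ c : ℤ, γ ≠ α + π + 2*π*c) (hγβ : ∀ c : ℤ, γ ≠ β + π + 2*π*c)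
    (e1 : -Real.cos γ = s * Real.cos α + t * Real.cos β)
    (e2 : -Real.sin γ = s * Real.sin α + t * Real.sin β) :
    (∃ c : ℤ, α < γ + π + 2*π*c ∧ γ + π + 2*π*c < β) ∨
    (∃ c : ℤ, α < γ + 2*π*c ∧ γ + 2*π*c < β) := by
  have hπ := Real.pi_pos
  have hsd : Real.sin (β - α) ≠ 0 := by
    intro h
    obtain ⟨m, hm⟩ := Real.sin_eq_zero_iff.mp h
    have hm3 : (0:ℤ) < m := by
      by_contra hcon; push_neg at hcon
      have : (m:ℝ) ≤ 0 := by exact_mod_cast hcon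
      nlinarith
    have hm4 : (m:ℤ) < 2 := by
      by_contra hcon; push_neg at hcon
      have : (2:ℝ) ≤ (m:ℝ) := by exact_mod_cast hcon
      nlinarith
    have : m = 1 := by omega
    rw [this] at hm; push_cast at hm
    exact hab3 (by linarith)
  have cA : Real.sin (γ - α) = -(t * Real.sin (β - α)) := by
    rw [Real.sin_sub, Real.sin_sub]
    linear_combination (-Real.cos α) * e2 + Real.sin α * e1
  have cB : Real.sin (β - γ) = -(s * Real.sin (β - α)) := by
    rw [Real.sin_sub, Real.sin_sub]
    linear_combination (-Real.sin β) * e1 + Real.cos β * e2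
  have hs' : 0 < s := by
    rcases lt_or_eq_of_le hs with h | h
    · exact h
    · exfalso
      have e1' : -Real.cos γ = t * Real.cos β := by rw [← h] at e1; linarith
      have e2' : -Real.sin γ = t * Real.sin β := by rw [← h] at e2; linarith
      have ht2 : (t-1)*(t+1) = 0 := by
        linear_combination (Real.cos γ - t*Real.cos β) * e1' +
          (Real.sin γ - t*Real.sin β) * e2' - t^2 * (Real.sin_sq_add_cos_sq β) +
          Real.sin_sq_add_cos_sq γ
      have ht1 : t = 1 := by
        rcases mul_eq_zero.mp ht2 with h' | h' <;> [linarith; linarith]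
      subst ht1
      have : Real.cos (γ - (β + π)) = 1 := by
        rw [Real.cos_sub, Real.cos_add_pi, Real.sin_add_pi]
        linear_combination (Real.cos β) * e1' + (Real.sin β) * e2' +
          Real.sin_sq_add_cos_sq β
      obtain ⟨m, hm⟩ := (Real.cos_eq_one_iff _).mp this
      exact hγβ m (by push_cast at hm ⊢; linarith)
  have ht' : 0 < t := by
    rcases lt_or_eq_of_le ht with h | h
    · exact h
    · exfalso
      have e1' : -Real.cos γ = s * Real.cos α := by rw [← h] at e1; linarith
      have e2' : -Real.sin γ = s * Real.sin α := by rw [← h] at e2; linarith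
      have hs2 : (s-1)*(s+1) = 0 := by
        linear_combination (Real.cos γ - s*Real.cos α) * e1' +
          (Real.sin γ - s*Real.sin α) * e2' - s^2 * (Real.sin_sq_add_cos_sq α) +
          Real.sin_sq_add_cos_sq γ
      have hs1 : s = 1 := by
        rcases mul_eq_zero.mp hs2 with h' | h' <;> [linarith; linarith]
      subst hs1
      have : Real.cos (γ - (α + π)) = 1 := by
        rw [Real.cos_sub, Real.cos_add_pi, Real.sin_add_pi]
        linear_combination (Real.cos α) * e1' + (Real.sin α) * e2' +
          Real.sin_sq_add_cos_sq α
      obtain ⟨m, hm⟩ := (Real.cos_eq_one_iff _).mp this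
      exact hγα m (by push_cast at hm ⊢; linarith)
  rcases lt_or_gt_of_ne hsd with hneg | hpos
  · right
    have h1 : 0 < Real.sin (γ - α) := by nlinarith
    have h2 : 0 < Real.sin (β - γ) := by nlinarith
    obtain ⟨c1, hx1, hx2⟩ := loc_aux _ h1
    obtain ⟨c2, hy1, hy2⟩ := loc_aux _ h2
    have hu1 : 0 < (β - α) + (2*π*(c1:ℝ) + 2*π*(c2:ℝ)) := by linarith
    have hu2 : (β - α) + (2*π*(c1:ℝ) + 2*π*(c2:ℝ)) < 2*π := by linarith
    have hsum : c1 + c2 = 0 := by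
      have b1 : (-1:ℝ) < (c1:ℝ)+(c2:ℝ) := by nlinarith
      have b2 : (c1:ℝ)+(c2:ℝ) < 1 := by nlinarith
      have b1' : (-1:ℤ) < c1 + c2 := by exact_mod_cast (by push_cast; linarith : ((-1:ℤ):ℝ) < ((c1+c2:ℤ):ℝ))
      have b2' : (c1 + c2:ℤ) < 1 := by exact_mod_cast (by push_cast; linarith : (((c1+c2):ℤ):ℝ) < ((1:ℤ):ℝ))
      omega
    have hc2 : (c2:ℝ) = -(c1:ℝ) := by
      have h' : c2 = -c1 := by omega
      rw [h']; push_cast; ring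
    rw [hc2] at hy1
    exact ⟨c1, by linarith, by linarith⟩
  · left
    have h1 : 0 < Real.sin (γ + π - α) := by
      have h' : γ + π - α = (γ - α) + π := by ring
      rw [h', Real.sin_add_pi]; nlinarith
    have h2 : 0 < Real.sin (β - (γ + π)) := by
      have h' : β - (γ + π) = (β - γ) - π := by ring
      rw [h', Real.sin_sub_pi]; nlinarith
    obtain ⟨c1, hx1, hx2⟩ := loc_aux _ h1
    obtain ⟨c2, hy1, hy2⟩ := loc_aux _ h2
    have hu1 : 0 < (β - α) + (2*π*(c1:ℝ) + 2*π*(c2:ℝ)) := by linarith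
    have hu2 : (β - α) + (2*π*(c1:ℝ) + 2*π*(c2:ℝ)) < 2*π := by linarith
    have hsum : c1 + c2 = 0 := by
      have b1 : (-1:ℝ) < (c1:ℝ)+(c2:ℝ) := by nlinarith
      have b2 : (c1:ℝ)+(c2:ℝ) < 1 := by nlinarith
      have b1' : (-1:ℤ) < c1 + c2 := by exact_mod_cast (by push_cast; linarith : ((-1:ℤ):ℝ) < ((c1+c2:ℤ):ℝ))
      have b2' : (c1 + c2:ℤ) < 1 := by exact_mod_cast (by push_cast; linarith : (((c1+c2):ℤ):ℝ) < ((1:ℤ):ℝ))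
      omega
    have hc2 : (c2:ℝ) = -(c1:ℝ) := by
      have h' : c2 = -c1 := by omega
      rw [h']; push_cast; ring
    rw [hc2] at hy1
    exact ⟨c1, by linarith, by linarith⟩

lemma main_comb (n : ℕ) (hn : 2 ≤ n) (φ : ℕ → ℝ) (hφ1 : φ 1 = 0)
    (hφtop : φ (n+1) = 2*π)
    (hmono : ∀ i j, 1 ≤ i → i < j → j ≤ n+1 → φ i < φ j)
    (κ : ℕ → ℕ)
    (hκ : ∀ i, 1 ≤ i → i ≤ n → 1 ≤ κ i ∧ κ i ≤ n ∧
      ∃ c : ℤ, φ i < φ (κ i) + π + 2*π*c ∧ φ (κ i) + π + 2*π*c < φ (i+1)) :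
    Odd n ∧ ∀ i k, 1 ≤ i → i ≤ n → 1 ≤ k → k ≤ n →
      (∃ c : ℤ, φ i < φ k + π + 2*π*c ∧ φ k + π + 2*π*c < φ (i+1)) →
      k % n = (i + (n+1)/2) % n := by
  have hπ := Real.pi_pos
  have hle : ∀ i j, 1 ≤ i → i ≤ j → j ≤ n+1 → φ i ≤ φ j := by
    intro i j h1 h2 h3
    rcases eq_or_lt_of_le h2 with h | h
    · rw [h]
    · exact le_of_lt (hmono i j h1 h h3)
  have h0 : ∀ j, 1 ≤ j → j ≤ n+1 → 0 ≤ φ j := by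
    intro j h1 h2; rw [← hφ1]; exact hle 1 j le_rfl h1 h2
  have h2pi : ∀ j, 1 ≤ j → j ≤ n+1 → φ j ≤ 2*π := by
    intro j h1 h2; rw [← hφtop]; exact hle j (n+1) h1 h2 le_rfl
  have hlt2pi : ∀ j, 1 ≤ j → j ≤ n → φ j < 2*π := by
    intro j h1 h2; rw [← hφtop]; exact hmono j (n+1) h1 (by omega) le_rfl
  -- normalization of gap membership
  have hnorm : ∀ i k, 1 ≤ i → i ≤ n → 1 ≤ k → k ≤ n →
      (∃ c : ℤ, φ i < φ k + π + 2*π*c ∧ φ k + π + 2*π*c < φ (i+1)) →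
      (φ k < π ∧ φ i < φ k + π ∧ φ k + π < φ (i+1)) ∨
      (π < φ k ∧ φ i < φ k - π ∧ φ k - π < φ (i+1)) := by
    intro i k hi1 hi2 hk1 hk2 ⟨c, H1, H2⟩
    have hφi0 := h0 i hi1 (by omega)
    have hφk0 := h0 k hk1 (by omega)
    have hφklt := hlt2pi k hk1 hk2
    have hφi1 := h2pi (i+1) (by omega) (by omega)
    have hA : 2*π*(c:ℝ) < π := by linarith
    have hB : -(3*π) < 2*π*(c:ℝ) := by linarith
    have hc0 : c ≤ 0 := by
      by_contra h; push_neg at h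
      have : (1:ℝ) ≤ (c:ℝ) := by exact_mod_cast h
      nlinarith
    have hc1 : -1 ≤ c := by
      by_contra h; push_neg at h
      have : (c:ℝ) ≤ -2 := by exact_mod_cast (by omega : c ≤ -2)
      nlinarith
    have : c = 0 ∨ c = -1 := by omega
    rcases this with rfl | rfl
    · left
      push_cast at H1 H2
      refine ⟨by linarith, by linarith, by linarith⟩
    · right
      push_cast at H1 H2
      refine ⟨by linarith, by linarith, by linarith⟩
  -- the count m of points in the lower half
  set m := ((Finset.Icc 1 n).filter fun k => φ k < π).card with hmdef
  have hmIcc : ((Finset.Icc 1 n).filter fun k => φ k < π) = Finset.Icc 1 m := by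
    have hsub : ((Finset.Icc 1 n).filter fun k => φ k < π) ⊆ Finset.Icc 1 m := by
      intro k hk
      simp only [Finset.mem_filter, Finset.mem_Icc] at hk
      have hsub2 : Finset.Icc 1 k ⊆ (Finset.Icc 1 n).filter fun k => φ k < π := by
        intro j hj
        simp only [Finset.mem_Icc] at hj
        simp only [Finset.mem_filter, Finset.mem_Icc]
        refine ⟨⟨hj.1, by omega⟩, ?_⟩
        calc φ j ≤ φ k := hle j k hj.1 hj.2 (by omega)
          _ < π := hk.2
      have := Finset.card_le_card hsub2
      rw [Nat.card_Icc] at this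
      simp only [Finset.mem_Icc]
      exact ⟨hk.1.1, by omega⟩
    refine Finset.eq_of_subset_of_card_le hsub ?_
    rw [Nat.card_Icc]
    omega
  have hm : ∀ k, 1 ≤ k → k ≤ n → (φ k < π ↔ k ≤ m) := by
    intro k h1 h2
    constructor
    · intro h
      have : k ∈ Finset.Icc 1 m := by
        rw [← hmIcc]; simp only [Finset.mem_filter, Finset.mem_Icc]; exact ⟨⟨h1, h2⟩, h⟩
      simp only [Finset.mem_Icc] at this; exact this.2
    · intro h
      have : k ∈ (Finset.Icc 1 n).filter fun k => φ k < π := by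
        rw [hmIcc]; simp only [Finset.mem_Icc]; exact ⟨h1, h⟩
      simp only [Finset.mem_filter] at this; exact this.2
  have hm1 : 1 ≤ m := (hm 1 le_rfl (by omega)).mp (by rw [hφ1]; exact hπ)
  have hmn : m ≤ n := by
    have := Finset.card_filter_le (Finset.Icc 1 n) (fun k => φ k < π)
    rw [Nat.card_Icc] at this
    omega
  have hκb : ∀ i, 1 ≤ i → i ≤ n → 1 ≤ κ i ∧ κ i ≤ n := fun i h1 h2 => ⟨(hκ i h1 h2).1, (hκ i h1 h2).2.1⟩
  have hP : ∀ i, 1 ≤ i → i ≤ n →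
      (κ i ≤ m ∧ φ i < φ (κ i) + π ∧ φ (κ i) + π < φ (i+1)) ∨
      (m < κ i ∧ φ i < φ (κ i) - π ∧ φ (κ i) - π < φ (i+1)) := by
    intro i h1 h2
    obtain ⟨hk1, hk2, hex⟩ := hκ i h1 h2
    rcases hnorm i (κ i) h1 h2 hk1 hk2 hex with ⟨ha, hb, hc⟩ | ⟨ha, hb, hc⟩
    · exact Or.inl ⟨(hm (κ i) hk1 hk2).mp ha, hb, hc⟩
    · refine Or.inr ⟨?_, hb, hc⟩
      by_contra h; push_neg at h
      exact absurd ((hm (κ i) hk1 hk2).mpr h) (by linarith)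
  -- distinct gaps cannot share a value
  have hdisj : ∀ i i' w, 1 ≤ i → i ≤ n → 1 ≤ i' → i' ≤ n →
      φ i < w → w < φ (i+1) → φ i' < w → w < φ (i'+1) → i = i' := by
    intro i i' w hi1 hi2 hi1' hi2' ha hb hc hd
    rcases lt_trichotomy i i' with h | h | h
    · exfalso; have := hle (i+1) i' (by omega) (by omega) (by omega); linarith
    · exact h
    · exfalso; have := hle (i'+1) i (by omega) (by omega) (by omega); linarith
  -- injectivity of κ
  have hinj : ∀ i i', 1 ≤ i → i ≤ n → 1 ≤ i' → i' ≤ n → κ i = κ i' → i = i' := by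
    intro i i' hi1 hi2 hi1' hi2' he
    rcases hP i hi1 hi2 with ⟨ha, hb, hc⟩ | ⟨ha, hb, hc⟩ <;>
      rcases hP i' hi1' hi2' with ⟨ha', hb', hc'⟩ | ⟨ha', hb', hc'⟩
    · exact hdisj i i' (φ (κ i) + π) hi1 hi2 hi1' hi2' hb hc (by rw [he]; exact hb') (by rw [he]; exact hc')
    · omega
    · omega
    · exact hdisj i i' (φ (κ i) - π) hi1 hi2 hi1' hi2' hb hc (by rw [he]; exact hb') (by rw [he]; exact hc')
  -- surjectivity of κ
  have hsurj : ∀ k, 1 ≤ k → k ≤ n → ∃ i, 1 ≤ i ∧ i ≤ n ∧ κ i = k := by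
    intro k hk1 hk2
    have himg : (Finset.Icc 1 n).image κ = Finset.Icc 1 n := by
      refine Finset.eq_of_subset_of_card_le ?_ ?_
      · intro x hx
        simp only [Finset.mem_image, Finset.mem_Icc] at hx ⊢
        obtain ⟨i, hi, rfl⟩ := hx
        exact hκb i hi.1 hi.2
      · rw [Finset.card_image_of_injOn]
        intro a ha b hb hab
        simp only [Finset.coe_Icc, Set.mem_Icc] at ha hb
        exact hinj a b ha.1 ha.2 hb.1 hb.2 hab
    have : k ∈ (Finset.Icc 1 n).image κ := by
      rw [himg]; simp only [Finset.mem_Icc]; exact ⟨hk1, hk2⟩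
    simp only [Finset.mem_image, Finset.mem_Icc] at this
    obtain ⟨i, hi, he⟩ := this
    exact ⟨i, hi.1, hi.2, he⟩
  -- the rotation ρ
  set ρ : ℕ → ℕ := fun i => if κ i ≤ m then κ i + (n - m) else κ i - m with hρdef
  have hρr : ∀ i, 1 ≤ i → i ≤ n → 1 ≤ ρ i ∧ ρ i ≤ n := by
    intro i h1 h2
    obtain ⟨hk1, hk2⟩ := hκb i h1 h2
    simp only [hρdef]
    split <;> omega
  have hρmono : ∀ i j, 1 ≤ i → i < j → j ≤ n → ρ i < ρ j := by
    intro i j hi1 hij hj2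
    obtain ⟨hki1, hki2⟩ := hκb i hi1 (by omega)
    obtain ⟨hkj1, hkj2⟩ := hκb j (by omega) hj2
    have hmid := hle (i+1) j (by omega) (by omega) (by omega)
    rcases hP i hi1 (by omega) with ⟨ha, hb, hc⟩ | ⟨ha, hb, hc⟩ <;>
      rcases hP j (by omega) hj2 with ⟨ha', hb', hc'⟩ | ⟨ha', hb', hc'⟩
    · -- both lower: κ i < κ j
      have hv : φ (κ i) < φ (κ j) := by linarith
      have : κ i < κ j := by
        by_contra h; push_neg at h
        have := hle (κ j) (κ i) hkj1 h (by omega)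
        linarith
      simp only [hρdef]
      rw [if_pos ha, if_pos ha']
      omega
    · -- κ i ≤ m < κ j : impossible
      exfalso
      have w1 : π ≤ φ (κ i) + π := by have := h0 (κ i) hki1 (by omega); linarith
      have w2 : φ (κ j) - π < π := by have := hlt2pi (κ j) hkj1 hkj2; linarith
      linarith
    · -- κ i > m ≥ κ j
      simp only [hρdef]
      rw [if_neg (by omega), if_pos ha']
      omega
    · -- both upper
      have hv : φ (κ i) < φ (κ j) := by linarith
      have : κ i < κ j := by
        by_contra h; push_neg at h
        have := hle (κ j) (κ i) hkj1 h (by omega)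
        linarith
      simp only [hρdef]
      rw [if_neg (by omega), if_neg (by omega)]
      omega
  have hchain : ∀ i j, 1 ≤ i → i ≤ j → j ≤ n → ρ i + (j - i) ≤ ρ j := by
    intro i j hi1 hij
    induction j, hij using Nat.le_induction with
    | base => intro _; omega
    | succ j hij IH =>
      intro hj
      have := IH (by omega)
      have := hρmono j (j+1) (by omega) (by omega) hj
      omega
  have hρid : ∀ i, 1 ≤ i → i ≤ n → ρ i = i := by
    intro i h1 h2
    have c1 := hchain 1 i le_rfl h1 h2
    have c2 := hchain i n h1 h2 le_rfl
    have r1 := hρr 1 le_rfl (by omega)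
    have rn := hρr n (by omega) le_rfl
    omega
  -- the two families of relations
  have hR1 : ∀ i, 1 ≤ i → i ≤ n - m →
      κ i = i + m ∧ φ i < φ (i+m) - π ∧ φ (i+m) - π < φ (i+1) := by
    intro i h1 h2
    have hid := hρid i h1 (by omega)
    obtain ⟨hk1, hk2⟩ := hκb i h1 (by omega)
    rcases hP i h1 (by omega) with ⟨ha, hb, hc⟩ | ⟨ha, hb, hc⟩
    · exfalso
      simp only [hρdef] at hid
      rw [if_pos ha] at hid
      omega
    · have hup : ¬ (κ i ≤ m) := by omega
      simp only [hρdef] at hid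
      rw [if_neg hup] at hid
      have hκi : κ i = i + m := by omega
      rw [hκi] at hb hc
      exact ⟨hκi, hb, hc⟩
  have hR2 : ∀ i, n - m + 1 ≤ i → i ≤ n →
      κ i = i - (n - m) ∧ φ i < φ (i-(n-m)) + π ∧ φ (i-(n-m)) + π < φ (i+1) := by
    intro i h1 h2
    have hid := hρid i (by omega) h2
    obtain ⟨hk1, hk2⟩ := hκb i (by omega) h2
    rcases hP i (by omega) h2 with ⟨ha, hb, hc⟩ | ⟨ha, hb, hc⟩
    · simp only [hρdef] at hid
      rw [if_pos ha] at hid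
      have hκi : κ i = i - (n - m) := by omega
      rw [hκi] at hb hc
      exact ⟨hκi, hb, hc⟩
    · exfalso
      have hup : ¬ (κ i ≤ m) := by omega
      simp only [hρdef] at hid
      rw [if_neg hup] at hid
      omega
  -- pin down m
  have hmn' : m ≤ n - 1 := by
    by_contra h
    have hmeq : m = n := by omega
    obtain ⟨-, hb, hc⟩ := hR2 1 (by omega) (by omega)
    have he : 1 - (n - m) = 1 := by omega
    rw [he] at hc
    have : φ 2 < π := (hm 2 (by omega) (by omega)).mpr (by omega)
    rw [hφ1] at hc
    linarith
  have h2m1 : n + 1 ≤ 2*m := by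
    by_contra h
    have h2m : 2*m ≤ n := by omega
    obtain ⟨-, hb, -⟩ := hR2 (n-m+1) (by omega) (by omega)
    have he : n - m + 1 - (n - m) = 1 := by omega
    rw [he, hφ1] at hb
    obtain ⟨-, hb', -⟩ := hR1 (n-2*m+1) (by omega) (by omega)
    have he' : n - 2*m + 1 + m = n - m + 1 := by omega
    rw [he'] at hb'
    have := h0 (n-2*m+1) (by omega) (by omega)
    linarith
  have h2m2 : 2*m ≤ n + 1 := by
    by_contra h
    have h2m : n + 2 ≤ 2*m := by omega
    obtain ⟨-, -, hc⟩ := hR1 (n-m) (by omega) (by omega)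
    have he : n - m + m = n := by omega
    rw [he] at hc
    obtain ⟨-, -, hc'⟩ := hR2 (2*n-2*m+1) (by omega) (by omega)
    have he1 : 2*n-2*m+1 - (n-m) = n - m + 1 := by omega
    have he2 : 2*n-2*m+1+1 = 2*n-2*m+2 := by omega
    rw [he1, he2] at hc'
    have hfin := hle (2*n-2*m+2) n (by omega) (by omega) (by omega)
    linarith
  have h2m : 2*m = n + 1 := by omega
  constructor
  · exact ⟨m - 1, by omega⟩
  · intro i k hi1 hi2 hk1 hk2 hmem
    -- identify k with κ i
    have hki : k = κ i := by
      obtain ⟨i', hi1', hi2', he⟩ := hsurj k hk1 hk2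
      have hPi' := hP i' hi1' hi2'
      rw [he] at hPi'
      rcases hnorm i k hi1 hi2 hk1 hk2 hmem with ⟨ha, hb, hc⟩ | ⟨ha, hb, hc⟩ <;>
        rcases hPi' with ⟨ha', hb', hc'⟩ | ⟨ha', hb', hc'⟩
      · have := hdisj i i' (φ k + π) hi1 hi2 hi1' hi2' hb hc hb' hc'
        rw [this, ← he]
      · exfalso
        have : φ k < π := ha
        have : ¬ (k ≤ m) := by omega
        rw [hm k hk1 hk2] at ha
        omega
      · exfalso
        have : k ≤ m := by omega
        have := (hm k hk1 hk2).mpr this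
        linarith
      · have := hdisj i i' (φ k - π) hi1 hi2 hi1' hi2' hb hc hb' hc'
        rw [this, ← he]
    have hhalf : (n+1)/2 = m := by omega
    rw [hhalf]
    rcases le_or_gt i (n - m) with hcase | hcase
    · obtain ⟨hκi, -, -⟩ := hR1 i hi1 hcase
      rw [hki, hκi]
    · obtain ⟨hκi, -, -⟩ := hR2 i (by omega) hi2
      rw [hki, hκi]
      have he : i + m = (i - (n-m)) + n := by omega
      rw [he, Nat.add_mod_right]

set_option maxHeartbeats 2000000 in
/-- Under the hypotheses of Theorem B, if moreover `p 0` lies on no segment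
`[p i, p j]`, then `n` is odd, and, with `p 1, …, p n` ordered counterclockwise
around `p 0` (encoded by polar angles `θ` strictly increasing with total span
less than `2π`), a ray opposite `p₀pₖ` contained in the open angle
`∠ pᵢ p₀ p_{i+1}` satisfies `k ≡ i + (n+1)/2 (mod n)`. -/
theorem fermat_toricelli_angle_structure (n : ℕ) (hn : 1 ≤ n) (p : ℕ → ℝ × ℝ)
    (hdist : ∀ i ∈ Finset.Icc 0 n, ∀ j ∈ Finset.Icc 0 n, i ≠ j → p i ≠ p j)
    (hangle : ∀ i ∈ Finset.Icc 1 n, ∀ j ∈ Finset.Icc 1 n, i ≠ j →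
      ∃ k ∈ Finset.Icc 1 n, ∃ s t : ℝ, 0 ≤ s ∧ 0 ≤ t ∧
        p 0 - p k = s • (p i - p 0) + t • (p j - p 0))
    (hseg : ∀ i ∈ Finset.Icc 1 n, ∀ j ∈ Finset.Icc 1 n, i ≠ j →
      p 0 ∉ segment ℝ (p i) (p j))
    (θ r : ℕ → ℝ)
    (hccw : ∀ i ∈ Finset.Icc 1 n, 0 < r i ∧
      p i - p 0 = r i • (Real.cos (θ i), Real.sin (θ i)))
    (hmono : StrictMonoOn θ (Set.Icc 1 n))
    (hspan : θ n < θ 1 + 2 * Real.pi) :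
    Odd n ∧
      ∀ i ∈ Finset.Icc 1 n, ∀ k ∈ Finset.Icc 1 n,
        (∃ s t : ℝ, 0 < s ∧ 0 < t ∧
          p 0 - p k = s • (p i - p 0) + t • (p (if i = n then 1 else i + 1) - p 0)) →
        k % n = (i + (n + 1) / 2) % n := by
  have hπ := Real.pi_pos
  rcases eq_or_lt_of_le hn with h1 | hn2
  · subst h1
    refine ⟨⟨0, rfl⟩, ?_⟩
    intro i _ k _ _
    simp [Nat.mod_one]
  · have hn2 : 2 ≤ n := hn2
    have hltθ : ∀ i j, 1 ≤ i → i < j → j ≤ n → θ i < θ j := by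
      intro i j h1 h2 h3
      exact hmono (Set.mem_Icc.mpr ⟨h1, by omega⟩) (Set.mem_Icc.mpr ⟨by omega, h3⟩) h2
    have hleθ : ∀ i j, 1 ≤ i → i ≤ j → j ≤ n → θ i ≤ θ j := by
      intro i j h1 h2 h3
      rcases eq_or_lt_of_le h2 with h | h
      · rw [h]
      · exact le_of_lt (hltθ i j h1 h h3)
    have hr : ∀ i, 1 ≤ i → i ≤ n → 0 < r i := by
      intro i h1 h2; exact (hccw i (Finset.mem_Icc.mpr ⟨h1, h2⟩)).1
    have hcomp : ∀ i, 1 ≤ i → i ≤ n →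
        (p i).1 - (p 0).1 = r i * Real.cos (θ i) ∧
        (p i).2 - (p 0).2 = r i * Real.sin (θ i) := by
      intro i h1 h2
      have h := (hccw i (Finset.mem_Icc.mpr ⟨h1, h2⟩)).2
      rw [Prod.ext_iff] at h
      simpa [Prod.fst_sub, Prod.snd_sub, smul_eq_mul] using h
    have hanti2 : ∀ i k, 1 ≤ i → i ≤ n → 1 ≤ k → k ≤ n → ∀ c : ℤ,
        θ k ≠ θ i + π + 2*π*c := by
      intro i k hi1 hi2 hk1 hk2 c heq
      by_cases hik : k = i
      · subst hik
        have h2c : 2*π*(c:ℝ) = -π := by linarith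
        rcases le_or_gt 0 c with h | h
        · have : (0:ℝ) ≤ (c:ℝ) := by exact_mod_cast h
          nlinarith
        · have : (c:ℝ) ≤ -1 := by exact_mod_cast (by omega : c ≤ -1)
          nlinarith
      · have hri := hr i hi1 hi2
        have hrk := hr k hk1 hk2
        have hcos : Real.cos (θ k) = -Real.cos (θ i) := by
          rw [heq, show θ i + π + 2*π*(c:ℝ) = (θ i + π) + (c:ℝ)*(2*π) by ring,
            Real.cos_add_int_mul_two_pi, Real.cos_add_pi]
        have hsin : Real.sin (θ k) = -Real.sin (θ i) := by
          rw [heq, show θ i + π + 2*π*(c:ℝ) = (θ i + π) + (c:ℝ)*(2*π) by ring,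
            Real.sin_add_int_mul_two_pi, Real.sin_add_pi]
        obtain ⟨hi1', hi2'⟩ := hcomp i hi1 hi2
        obtain ⟨hk1', hk2'⟩ := hcomp k hk1 hk2
        apply hseg i (Finset.mem_Icc.mpr ⟨hi1, hi2⟩) k (Finset.mem_Icc.mpr ⟨hk1, hk2⟩)
          (by omega)
        refine ⟨r k / (r i + r k), r i / (r i + r k), by positivity, by positivity,
          by field_simp; linarith, ?_⟩
        rw [Prod.ext_iff]
        constructor
        · simp only [Prod.fst_add, Prod.smul_fst, smul_eq_mul]
          rw [hcos] at hk1'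
          field_simp
          nlinarith [hi1', hk1']
        · simp only [Prod.snd_add, Prod.smul_snd, smul_eq_mul]
          rw [hsin] at hk2'
          field_simp
          nlinarith [hi2', hk2']
    set φ : ℕ → ℝ := fun j => if j = n+1 then 2*π else θ j - θ 1 with hφdef
    have hφ1 : φ 1 = 0 := by simp only [hφdef]; rw [if_neg (by omega)]; ring
    have hφtop : φ (n+1) = 2*π := by simp [hφdef]
    have hφi : ∀ j, 1 ≤ j → j ≤ n → φ j = θ j - θ 1 := by
      intro j h1 h2; simp only [hφdef]; rw [if_neg (by omega)]
    have hφmono : ∀ i j, 1 ≤ i → i < j → j ≤ n+1 → φ i < φ j := by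
      intro i j h1 h2 h3
      rw [hφi i h1 (by omega)]
      by_cases hj : j = n+1
      · rw [hj, hφtop]
        have := hleθ i n h1 (by omega) le_rfl
        linarith
      · rw [hφi j (by omega) (by omega)]
        have := hltθ i j h1 h2 (by omega)
        linarith
    have process : ∀ i k : ℕ, ∀ s t : ℝ, 1 ≤ i → i ≤ n → 1 ≤ k → k ≤ n → 0 ≤ s → 0 ≤ t →
        p 0 - p k = s • (p i - p 0) + t • (p (if i = n then 1 else i + 1) - p 0) →
        ∃ c : ℤ, φ i < φ k + π + 2*π*c ∧ φ k + π + 2*π*c < φ (i+1) := by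
      intro i k s t hi1 hi2 hk1 hk2 hs ht hEq
      have hri := hr i hi1 hi2
      have hrk := hr k hk1 hk2
      have hθk1 : θ 1 ≤ θ k := hleθ 1 k le_rfl hk1 hk2
      have hθkn : θ k ≤ θ n := hleθ k n hk1 hk2 le_rfl
      obtain ⟨hci, hsi⟩ := hcomp i hi1 hi2
      obtain ⟨hck, hsk⟩ := hcomp k hk1 hk2
      by_cases hin : i = n
      · -- wrap case : j = 1
        rw [if_pos hin] at hEq
        have hrj := hr 1 le_rfl (by omega)
        obtain ⟨hcj, hsj⟩ := hcomp 1 le_rfl (by omega)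
        have hE1 : -(r k * Real.cos (θ k)) =
            s * (r i * Real.cos (θ i)) + t * (r 1 * Real.cos (θ 1)) := by
          have h := congrArg Prod.fst hEq
          simp only [Prod.fst_sub, Prod.fst_add, Prod.smul_fst, smul_eq_mul] at h
          rw [hci, hcj] at h
          linarith
        have hE2 : -(r k * Real.sin (θ k)) =
            s * (r i * Real.sin (θ i)) + t * (r 1 * Real.sin (θ 1)) := by
          have h := congrArg Prod.snd hEq
          simp only [Prod.snd_sub, Prod.snd_add, Prod.smul_snd, smul_eq_mul] at h
          rw [hsi, hsj] at h
          linarith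
        have e1 : -Real.cos (θ k) =
            (s * r i / r k) * Real.cos (θ i) + (t * r 1 / r k) * Real.cos (θ 1 + 2*π) := by
          rw [Real.cos_add_two_pi]
          field_simp
          linear_combination hE1
        have e2 : -Real.sin (θ k) =
            (s * r i / r k) * Real.sin (θ i) + (t * r 1 / r k) * Real.sin (θ 1 + 2*π) := by
          rw [Real.sin_add_two_pi]
          field_simp
          linear_combination hE2
        have hab : θ i < θ 1 + 2*π := by rw [hin]; exact hspan
        have hab2 : θ 1 + 2*π < θ i + 2*π := by
          have := hltθ 1 i le_rfl (by omega) hi2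
          linarith
        have hab3 : θ 1 + 2*π ≠ θ i + π := by
          intro h
          exact hanti2 i 1 hi1 hi2 le_rfl (by omega) (-1) (by push_cast; linarith)
        have hγβ : ∀ c : ℤ, θ k ≠ θ 1 + 2*π + π + 2*π*c := by
          intro c h
          exact hanti2 1 k le_rfl (by omega) hk1 hk2 (c+1) (by push_cast; linarith)
        have hcone := cone_loc (θ i) (θ 1 + 2*π) (θ k) (s * r i / r k) (t * r 1 / r k)
          (by positivity) (by positivity) hab hab2 hab3
          (fun c => hanti2 i k hi1 hi2 hk1 hk2 c) hγβ e1 e2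
        rcases hcone with ⟨c, hA, hB⟩ | ⟨c, hA, hB⟩
        · refine ⟨c, ?_, ?_⟩
          · rw [hφi i hi1 hi2, hφi k hk1 hk2]; linarith
          · rw [hφi k hk1 hk2, show i + 1 = n + 1 by omega, hφtop]; linarith
        · exfalso
          have hθki : θ k ≤ θ i := by rw [hin]; exact hθkn
          have hcint : (0:ℤ) < c := by
            by_contra hcc; push_neg at hcc
            have hc0 : (c:ℝ) ≤ 0 := by exact_mod_cast hcc
            have h2πc : 2*π*(c:ℝ) ≤ 0 :=
              mul_nonpos_iff.mpr (Or.inl ⟨by linarith, hc0⟩)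
            linarith
          have hc1 : (1:ℝ) ≤ (c:ℝ) := by exact_mod_cast hcint
          have h2πc : 2*π*1 ≤ 2*π*(c:ℝ) :=
            mul_le_mul_of_nonneg_left hc1 (by linarith)
          linarith
      · -- non-wrap case : j = i + 1
        rw [if_neg hin] at hEq
        have hi1n : i + 1 ≤ n := by omega
        have hrj := hr (i+1) (by omega) hi1n
        obtain ⟨hcj, hsj⟩ := hcomp (i+1) (by omega) hi1n
        have hE1 : -(r k * Real.cos (θ k)) =
            s * (r i * Real.cos (θ i)) + t * (r (i+1) * Real.cos (θ (i+1))) := by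
          have h := congrArg Prod.fst hEq
          simp only [Prod.fst_sub, Prod.fst_add, Prod.smul_fst, smul_eq_mul] at h
          rw [hci, hcj] at h
          linarith
        have hE2 : -(r k * Real.sin (θ k)) =
            s * (r i * Real.sin (θ i)) + t * (r (i+1) * Real.sin (θ (i+1))) := by
          have h := congrArg Prod.snd hEq
          simp only [Prod.snd_sub, Prod.snd_add, Prod.smul_snd, smul_eq_mul] at h
          rw [hsi, hsj] at h
          linarith
        have e1 : -Real.cos (θ k) =
            (s * r i / r k) * Real.cos (θ i) + (t * r (i+1) / r k) * Real.cos (θ (i+1)) := by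
          field_simp
          linear_combination hE1
        have e2 : -Real.sin (θ k) =
            (s * r i / r k) * Real.sin (θ i) + (t * r (i+1) / r k) * Real.sin (θ (i+1)) := by
          field_simp
          linear_combination hE2
        have hab : θ i < θ (i+1) := hltθ i (i+1) hi1 (by omega) hi1n
        have hab2 : θ (i+1) < θ i + 2*π := by
          have h1 := hleθ 1 i le_rfl hi1 hi2
          have h2 := hleθ (i+1) n (by omega) hi1n le_rfl
          linarith
        have hab3 : θ (i+1) ≠ θ i + π := by
          intro h
          exact hanti2 i (i+1) hi1 hi2 (by omega) hi1n 0 (by push_cast; linarith)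
        have hcone := cone_loc (θ i) (θ (i+1)) (θ k) (s * r i / r k) (t * r (i+1) / r k)
          (by positivity) (by positivity) hab hab2 hab3
          (fun c => hanti2 i k hi1 hi2 hk1 hk2 c)
          (fun c => hanti2 (i+1) k (by omega) hi1n hk1 hk2 c) e1 e2
        rcases hcone with ⟨c, hA, hB⟩ | ⟨c, hA, hB⟩
        · refine ⟨c, ?_, ?_⟩
          · rw [hφi i hi1 hi2, hφi k hk1 hk2]; linarith
          · rw [hφi k hk1 hk2, hφi (i+1) (by omega) hi1n]; linarith
        · exfalso
          have hθi1 : θ 1 ≤ θ i := hleθ 1 i le_rfl hi1 hi2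
          have hθin : θ (i+1) ≤ θ n := hleθ (i+1) n (by omega) hi1n le_rfl
          have hcub : c ≤ 0 := by
            by_contra hcc; push_neg at hcc
            have hc1 : (1:ℝ) ≤ (c:ℝ) := by exact_mod_cast hcc
            have h2πc : 2*π*1 ≤ 2*π*(c:ℝ) :=
              mul_le_mul_of_nonneg_left hc1 (by linarith)
            linarith
          have hclb : 0 ≤ c := by
            by_contra hcc; push_neg at hcc
            have hc1 : (c:ℝ) ≤ -1 := by exact_mod_cast (by omega : c ≤ -1)
            have h2πc : 2*π*(c:ℝ) ≤ 2*π*(-1) :=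
              mul_le_mul_of_nonneg_left hc1 (by linarith)
            linarith
          have hc0 : c = 0 := by omega
          subst hc0
          push_cast at hA hB
          rcases le_or_gt k i with h | h
          · have := hleθ k i hk1 h hi2
            linarith
          · have := hleθ (i+1) k (by omega) (by omega) hk2
            linarith
    have Hgap : ∀ i : ℕ, ∃ k : ℕ, 1 ≤ i → i ≤ n →
        (1 ≤ k ∧ k ≤ n ∧ ∃ c : ℤ, φ i < φ k + π + 2*π*c ∧ φ k + π + 2*π*c < φ (i+1)) := by
      intro i
      by_cases hi : 1 ≤ i ∧ i ≤ n
      · obtain ⟨hi1, hi2⟩ := hi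
        have hij : i ≠ (if i = n then 1 else i + 1) := by split <;> omega
        have hmem2 : (if i = n then 1 else i + 1) ∈ Finset.Icc 1 n := by
          simp only [Finset.mem_Icc]; split <;> omega
        obtain ⟨k, hkmem, s, t, hs, ht, hEq⟩ :=
          hangle i (Finset.mem_Icc.mpr ⟨hi1, hi2⟩) _ hmem2 hij
        obtain ⟨hk1, hk2⟩ := Finset.mem_Icc.mp hkmem
        exact ⟨k, fun _ _ => ⟨hk1, hk2, process i k s t hi1 hi2 hk1 hk2 hs ht hEq⟩⟩
      · exact ⟨1, fun h1 h2 => absurd ⟨h1, h2⟩ hi⟩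
    choose κ hκ using Hgap
    obtain ⟨hodd, hcong⟩ := main_comb n hn2 φ hφ1 hφtop hφmono κ hκ
    refine ⟨hodd, ?_⟩
    rintro i hi k hk ⟨s, t, hs, ht, hEq⟩
    obtain ⟨hi1, hi2⟩ := Finset.mem_Icc.mp hi
    obtain ⟨hk1, hk2⟩ := Finset.mem_Icc.mp hk
    exact hcong i k hi1 hi2 hk1 hk2 (process i k s t hi1 hi2 hk1 hk2 hs.le ht.le hEq)
end

section
/- Let p₀, p₁, …, p_n be distinct points in a finite-dimensional normed space X. Then p₀ is a Fermat-Toricelli point of {p₀, p₁, …, p_n} (i.e. minimizes x ↦ ∑_{i=0}^n ‖x − p_i‖) if and only if for each 1 ≤ i ≤ n there is a norming functional φ_i of p_i − p₀ such that ‖∑_{i=1}^n φ_i‖ ≤ 1. -/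
open Finset

section Aux

variable {X : Type*} [NormedAddCommGroup X] [NormedSpace ℝ X]

private lemma le_of_eps {a b : ℝ} (h : ∀ ε : ℝ, 0 < ε → a ≤ b + ε) : a ≤ b := by
  by_contra h'
  push_neg at h'
  linarith [h ((a - b) / 2) (by linarith)]

/-- Right difference quotient of the norm at `v` in direction `u`. -/
noncomputable def qd (v u : X) (t : ℝ) : ℝ := (‖v + t • u‖ - ‖v‖) / t

/-- One-sided directional derivative of the norm at `v` in direction `u`. -/
noncomputable def Dd (v u : X) : ℝ := sInf (qd v u '' Set.Ioi 0)

private lemma neg_norm_le_qd (v u : X) {t : ℝ} (ht : 0 < t) : -‖u‖ ≤ qd v u t := by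
  have h1 : ‖v‖ - ‖v + t • u‖ ≤ ‖t • u‖ := by
    have h := norm_sub_norm_le v (v + t • u)
    simpa using h
  have h2 : ‖t • u‖ = t * ‖u‖ := by rw [norm_smul, Real.norm_eq_abs, abs_of_pos ht]
  rw [qd, le_div_iff₀ ht]
  nlinarith

private lemma qd_bddBelow (v u : X) : BddBelow (qd v u '' Set.Ioi 0) := by
  refine ⟨-‖u‖, ?_⟩
  rintro r ⟨t, ht, rfl⟩
  exact neg_norm_le_qd v u ht

private lemma qd_nonempty (v u : X) : (qd v u '' Set.Ioi 0).Nonempty :=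
  ⟨qd v u 1, 1, Set.mem_Ioi.2 one_pos, rfl⟩

private lemma Dd_le_qd (v u : X) {t : ℝ} (ht : 0 < t) : Dd v u ≤ qd v u t :=
  csInf_le (qd_bddBelow v u) ⟨t, ht, rfl⟩

private lemma le_Dd (v u : X) {c : ℝ} (h : ∀ t : ℝ, 0 < t → c ≤ qd v u t) : c ≤ Dd v u := by
  refine le_csInf (qd_nonempty v u) ?_
  rintro r ⟨t, ht, rfl⟩
  exact h t ht

private lemma neg_norm_le_Dd (v u : X) : -‖u‖ ≤ Dd v u :=
  le_Dd v u fun t ht => neg_norm_le_qd v u ht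

private lemma qd_mono (v u : X) {s t : ℝ} (hs : 0 < s) (hst : s ≤ t) :
    qd v u s ≤ qd v u t := by
  have ht : 0 < t := lt_of_lt_of_le hs hst
  have hdec : v + s • u = (s / t) • (v + t • u) + (1 - s / t) • v := by
    have h : s / t * t = s := div_mul_cancel₀ s ht.ne'
    rw [smul_add, smul_smul, h]
    module
  have hnorm : ‖v + s • u‖ ≤ (s / t) * ‖v + t • u‖ + (1 - s / t) * ‖v‖ := by
    calc ‖v + s • u‖ ≤ ‖(s / t) • (v + t • u)‖ + ‖(1 - s / t) • v‖ := by
          rw [hdec]; exact norm_add_le _ _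
    _ = (s / t) * ‖v + t • u‖ + (1 - s / t) * ‖v‖ := by
          rw [norm_smul, norm_smul, Real.norm_eq_abs, Real.norm_eq_abs,
            abs_of_nonneg (div_nonneg hs.le ht.le),
            abs_of_nonneg (by rw [sub_nonneg]; exact div_le_one_of_le₀ hst ht.le)]
  rw [qd, qd, div_le_div_iff₀ hs ht]
  have h3 : ‖v + s • u‖ * t ≤ s * ‖v + t • u‖ + (t - s) * ‖v‖ := by
    have h4 := mul_le_mul_of_nonneg_right hnorm ht.le
    have e1 : (s / t * ‖v + t • u‖ + (1 - s / t) * ‖v‖) * t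
        = s * ‖v + t • u‖ + (t - s) * ‖v‖ := by
      field_simp
    linarith
  linarith

private lemma Dd_le_norm (v u : X) : Dd v u ≤ ‖u‖ := by
  refine (Dd_le_qd v u one_pos).trans ?_
  rw [qd, one_smul, div_one, sub_le_iff_le_add]
  calc ‖v + u‖ ≤ ‖v‖ + ‖u‖ := norm_add_le _ _
  _ = ‖u‖ + ‖v‖ := by ring

private lemma Dd_zero (v : X) : Dd v (0 : X) = 0 := by
  have h : ∀ t : ℝ, 0 < t → qd v (0 : X) t = 0 := by
    intro t ht
    simp [qd]
  refine le_antisymm ?_ ?_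
  · rw [← h 1 one_pos]; exact Dd_le_qd v 0 one_pos
  · exact le_Dd v 0 fun t ht => (h t ht).ge

private lemma qd_smul (v u : X) {c t : ℝ} (hc : 0 < c) (ht : 0 < t) :
    qd v (c • u) t = c * qd v u (c * t) := by
  rw [qd, qd, smul_smul, mul_comm t c]
  field_simp

private lemma Dd_smul (v u : X) {c : ℝ} (hc : 0 < c) : Dd v (c • u) = c * Dd v u := by
  refine le_antisymm ?_ ?_
  · rw [← div_le_iff₀' hc]
    refine le_Dd v u fun t ht => ?_
    rw [div_le_iff₀' hc]
    have h := qd_smul v u hc (show (0:ℝ) < t / c by positivity)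
    have e1 : c * (t / c) = t := by field_simp
    rw [e1] at h
    rw [← h]
    exact Dd_le_qd v (c • u) (by positivity)
  · refine le_Dd v (c • u) fun t ht => ?_
    rw [qd_smul v u hc ht]
    exact mul_le_mul_of_nonneg_left (Dd_le_qd v u (by positivity)) hc.le

private lemma qd_add (v u w : X) {t : ℝ} (ht : 0 < t) :
    qd v (u + w) t ≤ qd v u (2 * t) + qd v w (2 * t) := by
  have hdec : v + t • (u + w) = (1/2 : ℝ) • (v + (2*t) • u) + (1/2 : ℝ) • (v + (2*t) • w) := by
    module
  have hnorm : ‖v + t • (u + w)‖ ≤ (1/2) * ‖v + (2*t) • u‖ + (1/2) * ‖v + (2*t) • w‖ := by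
    calc ‖v + t • (u + w)‖ ≤ ‖(1/2 : ℝ) • (v + (2*t) • u)‖ + ‖(1/2 : ℝ) • (v + (2*t) • w)‖ := by
          rw [hdec]; exact norm_add_le _ _
    _ = (1/2) * ‖v + (2*t) • u‖ + (1/2) * ‖v + (2*t) • w‖ := by
          rw [norm_smul, norm_smul]; norm_num
  rw [qd, qd, qd, ← add_div, div_le_div_iff₀ ht (by linarith : (0:ℝ) < 2 * t)]
  nlinarith

private lemma Dd_add (v u w : X) : Dd v (u + w) ≤ Dd v u + Dd v w := by
  refine le_of_eps fun ε hε => ?_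
  obtain ⟨r₁, ⟨t₁, ht₁, rfl⟩, h₁⟩ :=
    (csInf_lt_iff (qd_bddBelow v u) (qd_nonempty v u)).1
      (lt_add_of_pos_right _ (half_pos hε) : Dd v u < Dd v u + ε / 2)
  obtain ⟨r₂, ⟨t₂, ht₂, rfl⟩, h₂⟩ :=
    (csInf_lt_iff (qd_bddBelow v w) (qd_nonempty v w)).1
      (lt_add_of_pos_right _ (half_pos hε) : Dd v w < Dd v w + ε / 2)
  set t : ℝ := min t₁ t₂ / 2 with ht_def
  have ht : 0 < t := by
    have := lt_min (Set.mem_Ioi.1 ht₁) (Set.mem_Ioi.1 ht₂)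
    positivity
  have h2t₁ : 2 * t ≤ t₁ := by
    have : min t₁ t₂ ≤ t₁ := min_le_left _ _
    rw [ht_def]; linarith
  have h2t₂ : 2 * t ≤ t₂ := by
    have : min t₁ t₂ ≤ t₂ := min_le_right _ _
    rw [ht_def]; linarith
  calc Dd v (u + w) ≤ qd v (u + w) t := Dd_le_qd v (u + w) ht
  _ ≤ qd v u (2 * t) + qd v w (2 * t) := qd_add v u w ht
  _ ≤ qd v u t₁ + qd v w t₂ :=
      add_le_add (qd_mono v u (by linarith) h2t₁) (qd_mono v w (by linarith) h2t₂)
  _ ≤ Dd v u + Dd v w + ε := by linarith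

private lemma Dd_neg_self (v : X) : Dd v (-v) ≤ -‖v‖ := by
  refine (Dd_le_qd v (-v) (by norm_num : (0:ℝ) < 1/2)).trans_eq ?_
  have h : v + (1/2 : ℝ) • (-v) = (1/2 : ℝ) • v := by module
  rw [qd, h, norm_smul]
  norm_num
  ring

end Aux

/-- Characterization of Fermat–Toricelli points (second case): `p 0` minimizes
`x ↦ ∑_{i=0}^n ‖x - p i‖` iff each `p i - p 0` (`1 ≤ i ≤ n`) has a norming
functional `φ i` with `‖∑ φ i‖ ≤ 1`. -/
theorem fermat_toricelli_char_self {X : Type*} [NormedAddCommGroup X] [NormedSpace ℝ X]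
    [FiniteDimensional ℝ X] (n : ℕ) (hn : 1 ≤ n) (p : ℕ → X)
    (hdist : ∀ i ∈ Finset.Icc 0 n, ∀ j ∈ Finset.Icc 0 n, i ≠ j → p i ≠ p j) :
    (∀ x : X, ∑ i ∈ Finset.Icc 0 n, ‖p 0 - p i‖ ≤ ∑ i ∈ Finset.Icc 0 n, ‖x - p i‖)
      ↔ ∃ φ : ℕ → (X →L[ℝ] ℝ),
          (∀ i ∈ Finset.Icc 1 n, ‖φ i‖ = 1 ∧ φ i (p i - p 0) = ‖p i - p 0‖) ∧
          ‖∑ i ∈ Finset.Icc 1 n, φ i‖ ≤ 1 := by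
  have hicc : Finset.Icc 0 n = insert 0 (Finset.Icc 1 n) := by
    ext j; simp [Finset.mem_Icc]; omega
  have h0notin : (0 : ℕ) ∉ Finset.Icc 1 n := by simp
  have hne : (Finset.Icc 1 n).Nonempty := ⟨1, by simp [Finset.mem_Icc]; omega⟩
  constructor
  · -- forward direction
    intro hmin
    -- minimality in quotient form
    have hq : ∀ (u : X) (t : ℝ), 0 < t →
        -‖u‖ ≤ ∑ i ∈ Finset.Icc 1 n, qd (p i - p 0) u t := by
      intro u t ht
      have h := hmin (p 0 - t • u)
      rw [hicc, Finset.sum_insert h0notin, Finset.sum_insert h0notin] at h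
      simp only [sub_self, norm_zero, zero_add] at h
      have hterm : ∀ i ∈ Finset.Icc 1 n, ‖p 0 - t • u - p i‖ = ‖(p i - p 0) + t • u‖ := by
        intro i _
        rw [← norm_neg]
        congr 1
        abel
      have hterm0 : ∀ i ∈ Finset.Icc 1 n, ‖p 0 - p i‖ = ‖p i - p 0‖ := fun i _ =>
        norm_sub_rev _ _
      rw [Finset.sum_congr rfl hterm0] at h
      rw [Finset.sum_congr rfl hterm] at h
      have h0 : ‖p 0 - t • u - p 0‖ = t * ‖u‖ := by
        simp [norm_smul, abs_of_pos ht]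
      rw [h0] at h
      have hdiv : ∀ i ∈ Finset.Icc 1 n,
          qd (p i - p 0) u t = (‖(p i - p 0) + t • u‖ - ‖p i - p 0‖) / t := fun i _ => rfl
      rw [Finset.sum_congr rfl hdiv, ← Finset.sum_div, le_div_iff₀ ht]
      rw [Finset.sum_sub_distrib]
      nlinarith
    -- positivity of the sublinear functional on the diagonal
    have hS : ∀ u : X, 0 ≤ ‖u‖ + ∑ i ∈ Finset.Icc 1 n, Dd (p i - p 0) u := by
      intro u
      have key : -‖u‖ ≤ ∑ i ∈ Finset.Icc 1 n, Dd (p i - p 0) u := by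
        refine le_of_eps fun ε hε => ?_
        have hεn : 0 < ε / n := by positivity
        have hch : ∀ i : ℕ, ∃ t : ℝ, 0 < t ∧
            (i ∈ Finset.Icc 1 n → qd (p i - p 0) u t < Dd (p i - p 0) u + ε / n) := by
          intro i
          by_cases hi : i ∈ Finset.Icc 1 n
          · obtain ⟨r, ⟨t, ht, rfl⟩, hr⟩ :=
              (csInf_lt_iff (qd_bddBelow (p i - p 0) u) (qd_nonempty (p i - p 0) u)).1
                (lt_add_of_pos_right _ hεn : Dd (p i - p 0) u < Dd (p i - p 0) u + ε / n)
            exact ⟨t, ht, fun _ => hr⟩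
          · exact ⟨1, one_pos, fun h => absurd h hi⟩
        choose t ht hq' using hch
        set T : ℝ := (Finset.Icc 1 n).inf' hne t with hT_def
        have hT : 0 < T := by
          rw [hT_def, Finset.lt_inf'_iff]
          exact fun i _ => ht i
        have hTle : ∀ i ∈ Finset.Icc 1 n, T ≤ t i := fun i hi => Finset.inf'_le t hi
        have hbound : ∑ i ∈ Finset.Icc 1 n, qd (p i - p 0) u T ≤
            ∑ i ∈ Finset.Icc 1 n, (Dd (p i - p 0) u + ε / n) := by
          refine Finset.sum_le_sum fun i hi => ?_
          exact ((qd_mono (p i - p 0) u hT (hTle i hi)).trans_lt (hq' i hi)).le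
        rw [Finset.sum_add_distrib, Finset.sum_const, Nat.card_Icc] at hbound
        have hcard : ((n + 1 - 1 : ℕ) : ℝ) * (ε / n) = ε := by
          have hn0 : (n : ℝ) ≠ 0 := Nat.cast_ne_zero.2 (by omega)
          field_simp
          simp
        rw [nsmul_eq_mul, hcard] at hbound
        exact (hq u T hT).trans hbound
      linarith
    -- Hahn–Banach on ℕ → X
    set N : (ℕ → X) → ℝ := fun w => ‖w 0‖ + ∑ i ∈ Finset.Icc 1 n, Dd (p i - p 0) (w i) with hN
    have N_hom : ∀ c : ℝ, 0 < c → ∀ w : ℕ → X, N (c • w) = c * N w := by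
      intro c hc w
      simp only [hN, Pi.smul_apply]
      rw [norm_smul, Real.norm_eq_abs, abs_of_pos hc, mul_add, Finset.mul_sum]
      congr 1
      exact Finset.sum_congr rfl fun i _ => Dd_smul (p i - p 0) (w i) hc
    have N_add : ∀ w₁ w₂ : ℕ → X, N (w₁ + w₂) ≤ N w₁ + N w₂ := by
      intro w₁ w₂
      simp only [hN, Pi.add_apply]
      have h1 : ‖w₁ 0 + w₂ 0‖ ≤ ‖w₁ 0‖ + ‖w₂ 0‖ := norm_add_le _ _
      have h2 : ∑ i ∈ Finset.Icc 1 n, Dd (p i - p 0) (w₁ i + w₂ i) ≤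
          ∑ i ∈ Finset.Icc 1 n, (Dd (p i - p 0) (w₁ i) + Dd (p i - p 0) (w₂ i)) :=
        Finset.sum_le_sum fun i _ => Dd_add (p i - p 0) (w₁ i) (w₂ i)
      rw [Finset.sum_add_distrib] at h2
      linarith
    set Δ : Submodule ℝ (ℕ → X) :=
      LinearMap.range (LinearMap.pi (fun _ : ℕ => LinearMap.id) : X →ₗ[ℝ] (ℕ → X)) with hΔ
    set f : (ℕ → X) →ₗ.[ℝ] ℝ := ⟨Δ, 0⟩ with hf_def
    have hf : ∀ x : f.domain, f x ≤ N x := by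
      rintro ⟨w, hw⟩
      obtain ⟨u, rfl⟩ := hw
      have : f ⟨_, ⟨u, rfl⟩⟩ = 0 := rfl
      rw [this]
      exact hS u
    obtain ⟨g, hg0, hgN⟩ := exists_extension_of_le_sublinear f N N_hom N_add hf
    have hgconst : ∀ u : X, g (fun _ => u) = 0 := by
      intro u
      have hmem : (fun _ : ℕ => u) ∈ Δ := ⟨u, rfl⟩
      have := hg0 ⟨fun _ => u, hmem⟩
      exact this
    set φ' : ℕ → (X →ₗ[ℝ] ℝ) :=
      fun i => g.comp (LinearMap.single ℝ (fun _ : ℕ => X) i) with hφ'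
    have hφ'app : ∀ (i : ℕ) (u : X), φ' i u = g (Pi.single i u) := fun i u => rfl
    -- bound for i in [1, n]
    have hφ'i : ∀ i ∈ Finset.Icc 1 n, ∀ u : X, φ' i u ≤ Dd (p i - p 0) u := by
      intro i hi u
      have hi1 : 1 ≤ i := (Finset.mem_Icc.1 hi).1
      have hb := hgN (Pi.single i u)
      rw [← hφ'app] at hb
      have hNval : N (Pi.single i u) = Dd (p i - p 0) u := by
        simp only [hN]
        rw [Pi.single_eq_of_ne (by omega : (0:ℕ) ≠ i), norm_zero, zero_add]
        rw [Finset.sum_eq_single_of_mem i hi]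
        · rw [Pi.single_eq_same]
        · intro j _ hj
          rw [Pi.single_eq_of_ne hj, Dd_zero]
      rwa [hNval] at hb
    have hφ'0 : ∀ u : X, φ' 0 u ≤ ‖u‖ := by
      intro u
      have hb := hgN (Pi.single 0 u)
      rw [← hφ'app] at hb
      have hNval : N (Pi.single 0 u) = ‖u‖ := by
        simp only [hN]
        rw [Pi.single_eq_same]
        have hz : ∑ i ∈ Finset.Icc 1 n, Dd (p i - p 0) ((Pi.single 0 u : ℕ → X) i) = 0 := by
          refine Finset.sum_eq_zero fun i hi => ?_
          have hi1 : 1 ≤ i := (Finset.mem_Icc.1 hi).1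
          rw [Pi.single_eq_of_ne (by omega : i ≠ 0), Dd_zero]
        rw [hz, add_zero]
      rwa [hNval] at hb
    -- sum of all functionals is zero
    have hsum : ∀ u : X, ∑ i ∈ Finset.Icc 0 n, φ' i u = 0 := by
      intro u
      have hmap : ∑ i ∈ Finset.Icc 0 n, φ' i u =
          g (∑ i ∈ Finset.Icc 0 n, Pi.single i u) := by
        rw [map_sum]
        exact Finset.sum_congr rfl fun i _ => hφ'app i u
      set r : ℕ → X := (fun _ => u) - ∑ i ∈ Finset.Icc 0 n, Pi.single i u with hr
      have hrj : ∀ j ∈ Finset.Icc 0 n, r j = 0 := by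
        intro j hj
        have hs1 : ∑ i ∈ Finset.Icc 0 n, (Pi.single i u : ℕ → X) j = u := by
          simp only [Pi.single_apply]
          rw [Finset.sum_ite_eq (Finset.Icc 0 n) j fun _ => u, if_pos hj]
        simp only [hr, Pi.sub_apply, Finset.sum_apply]
        rw [hs1, sub_self]
      have hNr : N r = 0 := by
        simp only [hN]
        rw [hrj 0 (by simp), norm_zero, zero_add]
        refine Finset.sum_eq_zero fun i hi => ?_
        rw [hrj i (by rw [hicc]; exact Finset.mem_insert_of_mem hi), Dd_zero]
      have hNnr : N (-r) = 0 := by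
        simp only [hN, Pi.neg_apply]
        rw [hrj 0 (by simp), neg_zero, norm_zero, zero_add]
        refine Finset.sum_eq_zero fun i hi => ?_
        rw [hrj i (by rw [hicc]; exact Finset.mem_insert_of_mem hi), neg_zero, Dd_zero]
      have hgr : g r = 0 := by
        have h1 : g r ≤ 0 := (hgN r).trans_eq hNr
        have h2 : -(g r) ≤ 0 := by
          have := (hgN (-r)).trans_eq hNnr
          rwa [map_neg] at this
        linarith
      have : g (∑ i ∈ Finset.Icc 0 n, Pi.single i u) = g (fun _ => u) - g r := by
        rw [← map_sub]
        congr 1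
        simp [hr]
      rw [hmap, this, hgconst, hgr, sub_zero]
    -- conclude
    set Φ : ℕ → (X →L[ℝ] ℝ) := fun i => LinearMap.toContinuousLinearMap (φ' i) with hΦ
    have hΦapp : ∀ (i : ℕ) (u : X), Φ i u = φ' i u := fun i u => rfl
    refine ⟨Φ, ?_, ?_⟩
    · intro i hi
      have hi' : i ∈ Finset.Icc 0 n := by
        rw [hicc]; exact Finset.mem_insert_of_mem hi
      have hi1 : 1 ≤ i := (Finset.mem_Icc.1 hi).1
      have hv : p i - p 0 ≠ 0 :=
        sub_ne_zero.2 (hdist i hi' 0 (by simp) (by omega))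
      have habs : ∀ u : X, |Φ i u| ≤ ‖u‖ := by
        intro u
        rw [abs_le]
        constructor
        · have h1 : Φ i (-u) ≤ ‖(-u)‖ :=
            (hφ'i i hi (-u)).trans (Dd_le_norm _ _)
          rw [map_neg, norm_neg] at h1
          linarith
        · exact (hφ'i i hi u).trans (Dd_le_norm _ _)
      have hle : ‖Φ i‖ ≤ 1 := by
        refine ContinuousLinearMap.opNorm_le_bound _ zero_le_one fun u => ?_
        rw [one_mul, Real.norm_eq_abs]
        exact habs u
      have heq : Φ i (p i - p 0) = ‖p i - p 0‖ := by
        refine le_antisymm ((le_abs_self _).trans (habs _)) ?_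
        have h1 : Φ i (-(p i - p 0)) ≤ -‖p i - p 0‖ :=
          (hφ'i i hi _).trans (Dd_neg_self _)
        rw [map_neg] at h1
        linarith
      refine ⟨le_antisymm hle ?_, heq⟩
      have h2 : ‖p i - p 0‖ ≤ ‖Φ i‖ * ‖p i - p 0‖ := by
        calc ‖p i - p 0‖ = Φ i (p i - p 0) := heq.symm
        _ ≤ ‖Φ i (p i - p 0)‖ := le_abs_self _
        _ ≤ ‖Φ i‖ * ‖p i - p 0‖ := ContinuousLinearMap.le_opNorm _ _
      have hvpos : 0 < ‖p i - p 0‖ := norm_pos_iff.2 hv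
      nlinarith
    · refine ContinuousLinearMap.opNorm_le_bound _ zero_le_one fun u => ?_
      rw [one_mul]
      have hsum' : ∑ i ∈ Finset.Icc 1 n, φ' i u = -(φ' 0 u) := by
        have := hsum u
        rw [hicc, Finset.sum_insert h0notin] at this
        linarith
      have happ : (∑ i ∈ Finset.Icc 1 n, Φ i) u = ∑ i ∈ Finset.Icc 1 n, φ' i u := by
        rw [ContinuousLinearMap.sum_apply]
        exact Finset.sum_congr rfl fun i _ => hΦapp i u
      rw [happ, hsum', Real.norm_eq_abs, abs_le]
      constructor
      · have := hφ'0 u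
        linarith
      · have h1 : φ' 0 (-u) ≤ ‖(-u)‖ := hφ'0 (-u)
        rw [map_neg, norm_neg] at h1
        linarith
  · -- backward direction
    rintro ⟨φ, hφ, hφsum⟩ x
    rw [hicc, Finset.sum_insert h0notin, Finset.sum_insert h0notin]
    simp only [sub_self, norm_zero, zero_add]
    have hlhs : ∀ i ∈ Finset.Icc 1 n, ‖p 0 - p i‖ = φ i (p i - p 0) := by
      intro i hi
      rw [norm_sub_rev, (hφ i hi).2]
    rw [Finset.sum_congr rfl hlhs]
    have hsplit : ∀ i ∈ Finset.Icc 1 n,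
        φ i (p i - p 0) = φ i (p i - x) + φ i (x - p 0) := by
      intro i hi
      rw [← map_add]
      congr 1
      abel
    rw [Finset.sum_congr rfl hsplit, Finset.sum_add_distrib]
    have h1 : ∑ i ∈ Finset.Icc 1 n, φ i (p i - x) ≤ ∑ i ∈ Finset.Icc 1 n, ‖x - p i‖ := by
      refine Finset.sum_le_sum fun i hi => ?_
      calc φ i (p i - x) ≤ ‖φ i (p i - x)‖ := le_abs_self _
      _ ≤ ‖φ i‖ * ‖p i - x‖ := ContinuousLinearMap.le_opNorm _ _
      _ = ‖x - p i‖ := by rw [(hφ i hi).1, one_mul, norm_sub_rev]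
    have h2 : ∑ i ∈ Finset.Icc 1 n, φ i (x - p 0) ≤ ‖x - p 0‖ := by
      have happ : ∑ i ∈ Finset.Icc 1 n, φ i (x - p 0) =
          (∑ i ∈ Finset.Icc 1 n, φ i) (x - p 0) := by
        rw [ContinuousLinearMap.sum_apply]
      rw [happ]
      calc (∑ i ∈ Finset.Icc 1 n, φ i) (x - p 0)
          ≤ ‖(∑ i ∈ Finset.Icc 1 n, φ i) (x - p 0)‖ := le_abs_self _
      _ ≤ ‖∑ i ∈ Finset.Icc 1 n, φ i‖ * ‖x - p 0‖ := ContinuousLinearMap.le_opNorm _ _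
      _ ≤ 1 * ‖x - p 0‖ := mul_le_mul_of_nonneg_right hφsum (norm_nonneg _)
      _ = ‖x - p 0‖ := one_mul _
    linarith
end

section
/- Let p₀, p₁, …, p_n be distinct points in a finite-dimensional normed space X. Then p₀ is a Fermat-Toricelli point of {p₁, …, p_n} (i.e. minimizes x ↦ ∑_{i=1}^n ‖x − p_i‖) if and only if for each 1 ≤ i ≤ n there is a norming functional φ_i of p_i − p₀ such that ∑_{i=1}^n φ_i = 0. -/
open Finset

private lemma sum_Icc_one_fin {n : ℕ} {M : Type*} [AddCommMonoid M] (f : ℕ → M) :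
    ∑ j ∈ Finset.Icc 1 n, f j = ∑ i : Fin n, f (1 + i) := by
  rw [← Finset.Ico_add_one_right_eq_Icc, Finset.sum_Ico_eq_sum_range]
  simp [Finset.sum_range]

/-- Characterization of Fermat–Toricelli points (first case): `p 0` minimizes
`x ↦ ∑_{i=1}^n ‖x - p i‖` iff each `p i - p 0` (`1 ≤ i ≤ n`) has a norming
functional `φ i` with `∑ φ i = 0`. -/
theorem fermat_toricelli_char {X : Type*} [NormedAddCommGroup X] [NormedSpace ℝ X]
    [FiniteDimensional ℝ X] (n : ℕ) (hn : 1 ≤ n) (p : ℕ → X)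
    (hdist : ∀ i ∈ Finset.Icc 0 n, ∀ j ∈ Finset.Icc 0 n, i ≠ j → p i ≠ p j) :
    (∀ x : X, ∑ i ∈ Finset.Icc 1 n, ‖p 0 - p i‖ ≤ ∑ i ∈ Finset.Icc 1 n, ‖x - p i‖)
      ↔ ∃ φ : ℕ → (X →L[ℝ] ℝ),
          (∀ i ∈ Finset.Icc 1 n, ‖φ i‖ = 1 ∧ φ i (p i - p 0) = ‖p i - p 0‖) ∧
          ∑ i ∈ Finset.Icc 1 n, φ i = 0 := by
  constructor
  · intro hmin
    haveI : Nonempty (Fin n) := ⟨⟨0, hn⟩⟩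
    have hq0 : ∀ i : Fin n, p (1 + i) - p 0 ≠ 0 := fun i =>
      sub_ne_zero.mpr (hdist (1 + i) (by simp; omega) 0 (by simp) (by omega))
    set Y := PiLp 1 (fun _ : Fin n => X) with hYdef
    have hYnorm : ∀ y : Y, ‖y‖ = ∑ i, ‖y i‖ := fun y => by
      rw [PiLp.norm_eq_sum (by norm_num)]; simp
    let E : (∀ _ : Fin n, X) ≃ₗ[ℝ] Y := (WithLp.linearEquiv 1 ℝ _).symm
    let q : Y := E (fun i => p (1 + i) - p 0)
    have hqi : ∀ i, q i = p (1 + i) - p 0 := fun i => rfl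
    let D : X →ₗ[ℝ] Y := E.toLinearMap ∘ₗ LinearMap.pi (fun _ : Fin n => LinearMap.id)
    have hDi : ∀ (v : X) (i : Fin n), D v i = v := fun v i => rfl
    let M : Submodule ℝ Y := LinearMap.range D
    -- translate minimality
    have hmin' : ∀ v : X,
        ∑ i : Fin n, ‖p (1 + i) - p 0‖ ≤ ∑ i : Fin n, ‖(p (1 + i) - p 0) - v‖ := by
      intro v
      have h := hmin (p 0 + v)
      rw [sum_Icc_one_fin, sum_Icc_one_fin] at h
      calc ∑ i : Fin n, ‖p (1 + i) - p 0‖ = ∑ i : Fin n, ‖p 0 - p (1 + i)‖ := by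
            simp [norm_sub_rev]
        _ ≤ ∑ i : Fin n, ‖(p 0 + v) - p (1 + i)‖ := h
        _ = _ := by
            refine Finset.sum_congr rfl fun i _ => ?_
            rw [← norm_neg]; congr 1; abel
    have hsub : ∀ (a b : Y) (i : Fin n), (a - b) i = a i - b i := fun _ _ _ => rfl
    have hN : ∀ v : X, ‖q‖ ≤ ‖q - D v‖ := fun v => by
      rw [hYnorm, hYnorm]
      simpa [hsub, hqi, hDi] using hmin' v
    haveI : IsClosed (M : Set Y) := M.closed_of_finiteDimensional
    have hmkq : ‖(Submodule.Quotient.mk q : Y ⧸ M)‖ = ‖q‖ := by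
      refine le_antisymm (Submodule.Quotient.norm_mk_le M q) ?_
      refine le_of_forall_pos_le_add fun ε hε => ?_
      obtain ⟨m, hm, hlt⟩ :=
        Submodule.Quotient.norm_mk_lt (Submodule.Quotient.mk q : Y ⧸ M) hε
      obtain ⟨v, hv⟩ := (Submodule.Quotient.eq M).mp hm
      have h1 : ‖q‖ ≤ ‖m‖ := by
        have h2 := hN (-v)
        rw [map_neg, sub_neg_eq_add, hv] at h2
        calc ‖q‖ ≤ ‖q + (m - q)‖ := h2
          _ = ‖m‖ := by congr 1; abel
      linarith
    have hqpos : 0 < ‖q‖ := by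
      rw [hYnorm]
      exact Finset.sum_pos (fun i _ => norm_pos_iff.mpr (by simpa [hqi] using hq0 i))
        Finset.univ_nonempty
    have hne : (Submodule.Quotient.mk q : Y ⧸ M) ≠ 0 := by
      have h : ‖(Submodule.Quotient.mk q : Y ⧸ M)‖ ≠ 0 := by
        rw [hmkq]; exact ne_of_gt hqpos
      exact fun h0 => h (by rw [h0, norm_zero])
    obtain ⟨g, hg1, hgq⟩ := exists_dual_vector ℝ _ (norm_ne_zero_iff.mpr hne)
    let Φ : Y →ₗ[ℝ] ℝ := g.toLinearMap ∘ₗ M.mkQ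
    have hΦapp : ∀ y : Y, Φ y = g (Submodule.Quotient.mk y) := fun _ => rfl
    have hΦM : ∀ v : X, Φ (D v) = 0 := fun v => by
      rw [hΦapp, (Submodule.Quotient.mk_eq_zero M).mpr ⟨v, rfl⟩, map_zero]
    have hΦq : Φ q = ‖q‖ := by rw [hΦapp, hgq, hmkq]; simp
    have hΦle : ∀ y : Y, Φ y ≤ ‖y‖ := fun y => by
      have h1 : ‖g (Submodule.Quotient.mk y)‖ ≤ ‖(Submodule.Quotient.mk y : Y ⧸ M)‖ := by
        simpa [hg1] using g.le_opNorm (Submodule.Quotient.mk y)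
      calc Φ y ≤ |Φ y| := le_abs_self _
        _ = ‖g (Submodule.Quotient.mk y)‖ := by rw [hΦapp, Real.norm_eq_abs]
        _ ≤ ‖(Submodule.Quotient.mk y : Y ⧸ M)‖ := h1
        _ ≤ ‖y‖ := Submodule.Quotient.norm_mk_le M y
    let sing : Fin n → (X →ₗ[ℝ] Y) := fun i =>
      E.toLinearMap ∘ₗ LinearMap.single ℝ (fun _ : Fin n => X) i
    have hsing : ∀ (i : Fin n) (x : X), sing i x = E (Pi.single i x) := fun _ _ => rfl
    have hsingi : ∀ (i : Fin n) (x : X) (j : Fin n), sing i x j = if j = i then x else 0 :=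
      fun i x j => by
        have h0 : sing i x j = (Pi.single i x : ∀ _ : Fin n, X) j := rfl
        rw [h0, Pi.single_apply]
    have hsingnorm : ∀ (i : Fin n) (x : X), ‖sing i x‖ = ‖x‖ := fun i x => by
      rw [hYnorm]
      simp [hsingi, apply_ite (norm : X → ℝ)]
    let ψ : Fin n → (X →L[ℝ] ℝ) := fun i => LinearMap.toContinuousLinearMap (Φ ∘ₗ sing i)
    have hψapply : ∀ (i : Fin n) (x : X), ψ i x = Φ (sing i x) := fun _ _ => rfl
    have hψle : ∀ i, ‖ψ i‖ ≤ 1 := fun i => by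
      refine ContinuousLinearMap.opNorm_le_bound _ zero_le_one fun x => ?_
      rw [one_mul, hψapply, Real.norm_eq_abs, abs_le]
      constructor
      · have h := hΦle (sing i (-x))
        rw [map_neg, map_neg, norm_neg, hsingnorm] at h
        linarith
      · exact le_trans (hΦle _) (le_of_eq (hsingnorm i x))
    have hq_decomp : q = ∑ i, sing i (p (1 + i) - p 0) := by
      calc q = E (∑ i : Fin n, Pi.single i (p (1 + i) - p 0)) := by
            rw [Finset.univ_sum_single (fun i : Fin n => p (1 + i) - p 0)]
        _ = ∑ i, E (Pi.single i (p (1 + i) - p 0)) := map_sum E _ _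
        _ = _ := by simp [hsing]
    have hD_decomp : ∀ v : X, D v = ∑ i, sing i v := fun v => by
      calc D v = E (∑ i : Fin n, Pi.single i v) := by
            rw [Finset.univ_sum_single (fun _ : Fin n => v)]; rfl
        _ = ∑ i, E (Pi.single i v) := map_sum E _ _
        _ = _ := by simp [hsing]
    have hsum0 : ∀ v : X, ∑ i, ψ i v = 0 := fun v => by
      have h : ∑ i, Φ (sing i v) = Φ (D v) := by
        rw [hD_decomp]; exact (map_sum Φ _ _).symm
      simpa [hψapply, hΦM v] using h
    have hkey : ∑ i : Fin n, ψ i (p (1 + i) - p 0) = ∑ i : Fin n, ‖p (1 + i) - p 0‖ := by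
      have h : ∑ i, Φ (sing i (p (1 + i) - p 0)) = Φ q := by
        rw [hq_decomp]; exact (map_sum Φ _ _).symm
      calc ∑ i, ψ i (p (1 + i) - p 0) = Φ q := by simpa [hψapply] using h
        _ = ‖q‖ := hΦq
        _ = ∑ i, ‖q i‖ := hYnorm q
        _ = _ := by simp [hqi]
    have hle : ∀ i ∈ Finset.univ (α := Fin n),
        ψ i (p (1 + i) - p 0) ≤ ‖p (1 + i) - p 0‖ := fun i _ => by
      calc ψ i (p (1 + i) - p 0) ≤ |ψ i (p (1 + i) - p 0)| := le_abs_self _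
        _ ≤ ‖ψ i‖ * ‖p (1 + i) - p 0‖ := by
            simpa [Real.norm_eq_abs] using (ψ i).le_opNorm (p (1 + i) - p 0)
        _ ≤ 1 * ‖p (1 + i) - p 0‖ :=
            mul_le_mul_of_nonneg_right (hψle i) (norm_nonneg _)
        _ = _ := one_mul _
    have heach : ∀ i : Fin n, ψ i (p (1 + i) - p 0) = ‖p (1 + i) - p 0‖ := fun i =>
      (Finset.sum_eq_sum_iff_of_le hle).mp hkey i (mem_univ i)
    have hψ1 : ∀ i, ‖ψ i‖ = 1 := fun i => by
      refine le_antisymm (hψle i) ?_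
      have hpos : 0 < ‖p (1 + i) - p 0‖ := norm_pos_iff.mpr (hq0 i)
      have h1 : 1 * ‖p (1 + i) - p 0‖ ≤ ‖ψ i‖ * ‖p (1 + i) - p 0‖ := by
        rw [one_mul]
        calc ‖p (1 + i) - p 0‖ = ψ i (p (1 + i) - p 0) := (heach i).symm
          _ ≤ |ψ i (p (1 + i) - p 0)| := le_abs_self _
          _ ≤ ‖ψ i‖ * ‖p (1 + i) - p 0‖ := by
              simpa [Real.norm_eq_abs] using (ψ i).le_opNorm (p (1 + i) - p 0)
      exact le_of_mul_le_mul_right h1 hpos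
    refine ⟨fun j => if h : 1 ≤ j ∧ j ≤ n then ψ ⟨j - 1, by omega⟩ else 0, ?_, ?_⟩
    · intro j hj
      rw [Finset.mem_Icc] at hj
      simp only [dif_pos hj]
      have hc : (1 : ℕ) + (j - 1) = j := by omega
      constructor
      · exact hψ1 _
      · simpa only [Fin.val_mk, hc] using heach ⟨j - 1, by omega⟩
    · rw [sum_Icc_one_fin]
      have hcongr : ∀ i : Fin n,
          (if h : 1 ≤ 1 + (i : ℕ) ∧ 1 + (i : ℕ) ≤ n then
            ψ ⟨1 + (i : ℕ) - 1, by omega⟩ else 0) = ψ i := fun i => by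
        rw [dif_pos ⟨by omega, by omega⟩]
        congr 1
        exact Fin.ext (by simp)
      rw [Finset.sum_congr rfl fun i _ => hcongr i]
      ext x
      simpa [ContinuousLinearMap.sum_apply] using hsum0 x
  · rintro ⟨φ, hφ, hsum⟩ x
    have h1 : ∀ j ∈ Finset.Icc 1 n, ‖p 0 - p j‖ = φ j (p j - p 0) := fun j hj => by
      rw [(hφ j hj).2, norm_sub_rev]
    have h2 : ∀ j ∈ Finset.Icc 1 n, φ j (p j - x) ≤ ‖x - p j‖ := fun j hj => by
      calc φ j (p j - x) ≤ |φ j (p j - x)| := le_abs_self _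
        _ ≤ ‖φ j‖ * ‖p j - x‖ := by
            simpa [Real.norm_eq_abs] using (φ j).le_opNorm (p j - x)
        _ = ‖x - p j‖ := by rw [(hφ j hj).1, one_mul, norm_sub_rev]
    calc ∑ j ∈ Finset.Icc 1 n, ‖p 0 - p j‖
        = ∑ j ∈ Finset.Icc 1 n, φ j (p j - p 0) := Finset.sum_congr rfl h1
      _ = ∑ j ∈ Finset.Icc 1 n, (φ j (p j - x) + φ j (x - p 0)) := by
          refine Finset.sum_congr rfl fun j _ => ?_
          rw [← map_add]; congr 1; abel
      _ = ∑ j ∈ Finset.Icc 1 n, φ j (p j - x)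
            + ∑ j ∈ Finset.Icc 1 n, φ j (x - p 0) := Finset.sum_add_distrib
      _ = ∑ j ∈ Finset.Icc 1 n, φ j (p j - x) := by
          have h : ∑ j ∈ Finset.Icc 1 n, φ j (x - p 0)
              = (∑ j ∈ Finset.Icc 1 n, φ j) (x - p 0) :=
            (ContinuousLinearMap.sum_apply _ _ _).symm
          rw [h, hsum]; simp
      _ ≤ ∑ j ∈ Finset.Icc 1 n, ‖x - p j‖ := Finset.sum_le_sum h2
end

section
/- Consider the balancing game in a normed space X with parameter k: starting from p₀ = 0, in each round Player I chooses k unit vectors x₁, …, x_k and Player II chooses signs ε₁, …, ε_k ∈ {±1}, and the position updates to p_i = p_{i−1} + ∑_{j=1}^k ε_j x_j. If X is a normed plane and k is even, Player II has a strategy forcing ‖p_i‖ ≤ 2 for all i. -/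
set_option linter.unnecessarySeqFocus false
set_option linter.unusedVariables false

section Aux
variable {X : Type*} [NormedAddCommGroup X] [NormedSpace ℝ X]


lemma keyK (u v p : X) (a b : ℝ) (huv : ‖u + v‖ = 2) (huv' : ‖u - v‖ = 2)
    (hp : p = a • u + b • v) (hb0 : 0 ≤ b) (hba : b ≤ a) (hpn : ‖p‖ ≤ 2) :
    ‖p - u‖ ≤ 2 := by
  have ha0 : 0 ≤ a := hb0.trans hba
  have hu : ‖u‖ ≤ 2 := by
    have h1 : (2:ℝ) • u = (u + v) + (u - v) := by module
    have h2 : ‖(2:ℝ) • u‖ ≤ 4 := by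
      rw [h1]
      calc ‖(u+v) + (u-v)‖ ≤ ‖u+v‖ + ‖u-v‖ := norm_add_le _ _
        _ = 4 := by rw [huv, huv']; norm_num
    rw [norm_smul] at h2
    simp only [Real.norm_ofNat] at h2
    linarith
  have hv : ‖v‖ ≤ 2 := by
    have h1 : (2:ℝ) • v = (u + v) - (u - v) := by module
    have h2 : ‖(2:ℝ) • v‖ ≤ 4 := by
      rw [h1]
      calc ‖(u+v) - (u-v)‖ ≤ ‖u+v‖ + ‖u-v‖ := norm_sub_le _ _
        _ = 4 := by rw [huv, huv']; norm_num
    rw [norm_smul] at h2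
    simp only [Real.norm_ofNat] at h2
    linarith
  have hb1 : b ≤ 1 := by
    have hne : u + v ≠ 0 := by
      intro h; rw [h, norm_zero] at huv; norm_num at huv
    obtain ⟨f, hf1, hfuv⟩ := exists_dual_vector ℝ (u + v) (norm_ne_zero_iff.mpr hne)
    rw [huv] at hfuv
    norm_cast at hfuv
    have hfv : f v ≤ 2 := by
      have := f.le_opNorm v
      rw [hf1, one_mul] at this
      calc f v ≤ ‖f v‖ := le_abs_self _
        _ ≤ ‖v‖ := this
        _ ≤ 2 := hv
    have hfu0 : 0 ≤ f u := by
      have : f u + f v = 2 := by rw [← map_add, hfuv]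
      linarith
    have hfp : f p ≤ 2 := by
      have h3 := f.le_opNorm p
      rw [hf1, one_mul] at h3
      calc f p ≤ ‖f p‖ := le_abs_self _
        _ ≤ ‖p‖ := h3
        _ ≤ 2 := hpn
    have hfp2 : f p = a * f u + b * f v := by
      rw [hp]; simp [smul_eq_mul]
    have hsum : f u + f v = 2 := by rw [← map_add, hfuv]
    nlinarith [mul_nonneg (sub_nonneg.mpr hba) hfu0]
  rcases le_or_gt 1 a with h1 | h1
  · have key : a • (p - u) = (a - 1) • p + b • v := by rw [hp]; module
    have hb2 : a * ‖p - u‖ ≤ a * 2 := by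
      calc a * ‖p - u‖ = ‖a • (p - u)‖ := by
            rw [norm_smul, Real.norm_eq_abs, abs_of_nonneg ha0]
        _ = ‖(a - 1) • p + b • v‖ := by rw [key]
        _ ≤ ‖(a - 1) • p‖ + ‖b • v‖ := norm_add_le _ _
        _ = (a - 1) * ‖p‖ + b * ‖v‖ := by
            rw [norm_smul, norm_smul, Real.norm_eq_abs, Real.norm_eq_abs,
              abs_of_nonneg (by linarith), abs_of_nonneg hb0]
        _ ≤ (a - 1) * 2 + b * 2 := by
            gcongr <;> linarith
        _ ≤ a * 2 := by linarith
    exact le_of_mul_le_mul_left hb2 (by linarith)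
  rcases le_or_gt (a + b) 1 with h2 | h2
  · have key : p - u = b • (v - u) + (a + b - 1) • u := by rw [hp]; module
    calc ‖p - u‖ = ‖b • (v - u) + (a + b - 1) • u‖ := by rw [key]
      _ ≤ ‖b • (v - u)‖ + ‖(a + b - 1) • u‖ := norm_add_le _ _
      _ = b * ‖v - u‖ + (1 - a - b) * ‖u‖ := by
          rw [norm_smul, norm_smul, Real.norm_eq_abs, Real.norm_eq_abs,
            abs_of_nonneg hb0, abs_of_nonpos (by linarith)]
          ring
      _ ≤ b * 2 + (1 - a - b) * 2 := by
          have hvu : ‖v - u‖ = 2 := by rw [norm_sub_rev, huv']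
          gcongr <;> linarith
      _ ≤ 2 := by linarith
  · have key : p - u = (1 - a) • (v - u) + (a + b - 1) • v := by rw [hp]; module
    calc ‖p - u‖ = ‖(1 - a) • (v - u) + (a + b - 1) • v‖ := by rw [key]
      _ ≤ ‖(1 - a) • (v - u)‖ + ‖(a + b - 1) • v‖ := norm_add_le _ _
      _ = (1 - a) * ‖v - u‖ + (a + b - 1) * ‖v‖ := by
          rw [norm_smul, norm_smul, Real.norm_eq_abs, Real.norm_eq_abs,
            abs_of_nonneg (by linarith), abs_of_nonneg (by linarith)]
      _ ≤ (1 - a) * 2 + (a + b - 1) * 2 := by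
          have hvu : ‖v - u‖ = 2 := by rw [norm_sub_rev, huv']
          gcongr <;> linarith
      _ ≤ 2 := by linarith



lemma keyD (u v p : X) (a b : ℝ) (huv : ‖u + v‖ = 2) (huv' : ‖u - v‖ = 2)
    (hp : p = a • u + b • v) (hpn : ‖p‖ ≤ 2) :
    ‖p - u‖ ≤ 2 ∨ ‖p + u‖ ≤ 2 ∨ ‖p - v‖ ≤ 2 ∨ ‖p + v‖ ≤ 2 := by
  -- reduce to nonnegative coefficients
  have main : ∀ (u v : X) (a b : ℝ), ‖u + v‖ = 2 → ‖u - v‖ = 2 →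
      p = a • u + b • v → 0 ≤ a → 0 ≤ b → ‖p - u‖ ≤ 2 ∨ ‖p - v‖ ≤ 2 := by
    intro u v a b huv huv' hp ha hb
    rcases le_total b a with hba | hab
    · exact Or.inl (keyK u v p a b huv huv' hp hb hba hpn)
    · refine Or.inr (keyK v u p b a ?_ ?_ ?_ ha hab hpn)
      · rw [add_comm]; exact huv
      · rw [norm_sub_rev]; exact huv'
      · rw [hp, add_comm]
  have hmvu : ‖-u + v‖ = 2 := by
    rw [← norm_neg]; rw [show -(-u + v) = u - v by module]; exact huv'
  have hmvu' : ‖-u - v‖ = 2 := by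
    rw [← norm_neg]; rw [show -(-u - v) = u + v by module]; exact huv
  have hmv : ‖u + -v‖ = 2 := by simpa [sub_eq_add_neg] using huv'
  have hmv' : ‖u - -v‖ = 2 := by simpa [sub_neg_eq_add] using huv
  rcases le_total 0 a with ha | ha <;> rcases le_total 0 b with hb | hb
  · rcases main u v a b huv huv' hp ha hb with h | h
    · exact Or.inl h
    · exact Or.inr (Or.inr (Or.inl h))
  · rcases main u (-v) a (-b) hmv hmv' (by rw [hp]; module) ha (by linarith) with h | h
    · exact Or.inl h
    · right; right; right; rw [← sub_neg_eq_add]; exact h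
  · rcases main (-u) v (-a) b hmvu hmvu' (by rw [hp]; module) (by linarith) hb with h | h
    · right; left; rw [← sub_neg_eq_add]; exact h
    · exact Or.inr (Or.inr (Or.inl h))
  · rcases main (-u) (-v) (-a) (-b) (by rw [← norm_neg, show -(-u + -v) = u + v by module]; exact huv)
        (by rw [show -u - -v = -(u - v) by module, norm_neg]; exact huv')
        (by rw [hp]; module) (by linarith) (by linarith) with h | h
    · right; left; rw [← sub_neg_eq_add]; exact h
    · right; right; right; rw [← sub_neg_eq_add]; exact h

lemma keyC (hdim : Module.finrank ℝ X = 2) (p x y : X) (hpn : ‖p‖ ≤ 2)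
    (hx : ‖x‖ = 1) (hy : ‖y‖ = 1) :
    ∃ e d : ℝ, (e = 1 ∨ e = -1) ∧ (d = 1 ∨ d = -1) ∧ ‖p + e • x + d • y‖ ≤ 2 := by
  by_cases hxy : x = y ∨ x = -y
  · rcases hxy with h | h
    · exact ⟨1, -1, Or.inl rfl, Or.inr rfl, by
        have : p + (1:ℝ) • x + (-1:ℝ) • y = p := by rw [h]; module
        rw [this]; exact hpn⟩
    · exact ⟨1, 1, Or.inl rfl, Or.inl rfl, by
        have : p + (1:ℝ) • x + (1:ℝ) • y = p := by rw [h]; module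
        rw [this]; exact hpn⟩
  push_neg at hxy
  have hxind : ∀ c d : ℝ, c • x + d • y = 0 → c = 0 ∧ d = 0 := by
    intro c d h
    by_cases hd : d = 0
    · subst hd
      simp only [zero_smul, add_zero, smul_eq_zero] at h
      rcases h with h | h
      · exact ⟨h, rfl⟩
      · exfalso; rw [h, norm_zero] at hx; norm_num at hx
    · exfalso
      have hyx : y = (-c / d) • x := by
        have : d • y = -(c • x) := by linear_combination (norm := module) h
        have hd' : (d:ℝ) ≠ 0 := hd
        rw [show (-c / d) • x = (d⁻¹) • ((-c) • x) by rw [smul_smul]; ring_nf, ← neg_smul] at *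
        rw [← this, smul_smul, inv_mul_cancel₀ hd', one_smul]
      have habs : |(-c / d)| = 1 := by
        have := congrArg norm hyx
        rw [hy, norm_smul, hx, Real.norm_eq_abs, mul_one] at this
        exact this.symm
      rcases abs_eq (by norm_num : (0:ℝ) ≤ 1) |>.mp habs with h1 | h1
      · rw [h1, one_smul] at hyx; exact hxy.1 hyx.symm
      · rw [h1] at hyx
        apply hxy.2
        rw [hyx]; module
  have hli : LinearIndependent ℝ ![x + y, x - y] := by
    rw [LinearIndependent.pair_iff]
    intro s t hst
    have : (s + t) • x + (s - t) • y = 0 := by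
      linear_combination (norm := module) hst
    obtain ⟨h1, h2⟩ := hxind _ _ this
    constructor <;> linarith
  have hcard : Fintype.card (Fin 2) = Module.finrank ℝ X := by simp [hdim]
  set B := basisOfLinearIndependentOfCardEqFinrank hli hcard with hB
  have hrepr : p = B.repr p 0 • (x + y) + B.repr p 1 • (x - y) := by
    have := B.sum_repr p
    rw [Fin.sum_univ_two] at this
    have h0 : B 0 = x + y := by rw [hB, coe_basisOfLinearIndependentOfCardEqFinrank]; rfl
    have h1 : B 1 = x - y := by rw [hB, coe_basisOfLinearIndependentOfCardEqFinrank]; rfl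
    rw [h0, h1] at this
    exact this.symm
  have huv : ‖(x + y) + (x - y)‖ = 2 := by
    have : (x + y) + (x - y) = (2:ℝ) • x := by module
    rw [this, norm_smul, hx]; norm_num
  have huv' : ‖(x + y) - (x - y)‖ = 2 := by
    have : (x + y) - (x - y) = (2:ℝ) • y := by module
    rw [this, norm_smul, hy]; norm_num
  rcases keyD (x + y) (x - y) p _ _ huv huv' hrepr hpn with h | h | h | h
  · exact ⟨-1, -1, Or.inr rfl, Or.inr rfl, by
      have : p + (-1:ℝ) • x + (-1:ℝ) • y = p - (x + y) := by module
      rw [this]; exact h⟩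
  · exact ⟨1, 1, Or.inl rfl, Or.inl rfl, by
      have : p + (1:ℝ) • x + (1:ℝ) • y = p + (x + y) := by module
      rw [this]; exact h⟩
  · exact ⟨-1, 1, Or.inr rfl, Or.inl rfl, by
      have : p + (-1:ℝ) • x + (1:ℝ) • y = p - (x - y) := by module
      rw [this]; exact h⟩
  · exact ⟨1, -1, Or.inl rfl, Or.inr rfl, by
      have : p + (1:ℝ) • x + (-1:ℝ) • y = p + (x - y) := by module
      rw [this]; exact h⟩



open Classical in
noncomputable def pickSigns (p x y : X) : ℝ × ℝ :=
  if h : ∃ ed : ℝ × ℝ, (ed.1 = 1 ∨ ed.1 = -1) ∧ (ed.2 = 1 ∨ ed.2 = -1) ∧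
      ‖p + ed.1 • x + ed.2 • y‖ ≤ 2 then h.choose else (1, 1)

lemma pickSigns_fst (p x y : X) :
    (pickSigns p x y).1 = 1 ∨ (pickSigns p x y).1 = -1 := by
  rw [pickSigns]
  split
  · next h => exact h.choose_spec.1
  · exact Or.inl rfl

lemma pickSigns_snd (p x y : X) :
    (pickSigns p x y).2 = 1 ∨ (pickSigns p x y).2 = -1 := by
  rw [pickSigns]
  split
  · next h => exact h.choose_spec.2.1
  · exact Or.inl rfl

lemma pickSigns_norm (hdim : Module.finrank ℝ X = 2) (p x y : X) (hpn : ‖p‖ ≤ 2)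
    (hx : ‖x‖ = 1) (hy : ‖y‖ = 1) :
    ‖p + (pickSigns p x y).1 • x + (pickSigns p x y).2 • y‖ ≤ 2 := by
  obtain ⟨e, d, he, hd, hn⟩ := keyC hdim p x y hpn hx hy
  have h : ∃ ed : ℝ × ℝ, (ed.1 = 1 ∨ ed.1 = -1) ∧ (ed.2 = 1 ∨ ed.2 = -1) ∧
      ‖p + ed.1 • x + ed.2 • y‖ ≤ 2 := ⟨(e, d), he, hd, hn⟩
  rw [pickSigns, dif_pos h]
  exact h.choose_spec.2.2

/-- intermediate positions within one round, processing pairs -/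
noncomputable def roundPos (w : X) (v : ℕ → X) : ℕ → X
  | 0 => w
  | t + 1 => roundPos w v t
      + (pickSigns (roundPos w v t) (v (2 * t)) (v (2 * t + 1))).1 • v (2 * t)
      + (pickSigns (roundPos w v t) (v (2 * t)) (v (2 * t + 1))).2 • v (2 * t + 1)

lemma roundPos_norm (hdim : Module.finrank ℝ X = 2) (w : X) (v : ℕ → X) (m : ℕ)
    (hw : ‖w‖ ≤ 2) (hv : ∀ n < 2 * m, ‖v n‖ = 1) :
    ∀ t ≤ m, ‖roundPos w v t‖ ≤ 2 := by
  intro t ht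
  induction t with
  | zero => simpa [roundPos] using hw
  | succ s ih =>
    have hs : s ≤ m := Nat.le_of_succ_le ht
    have h1 : 2 * s < 2 * m := by omega
    have h2 : 2 * s + 1 < 2 * m := by omega
    have := pickSigns_norm hdim (roundPos w v s) (v (2 * s)) (v (2 * s + 1))
      (ih hs) (hv _ h1) (hv _ h2)
    simpa [roundPos, add_assoc] using this

lemma sum_pairs {M : Type*} [AddCommMonoid M] (f : ℕ → M) (m : ℕ) :
    ∑ j ∈ Finset.range (2 * m), f j = ∑ t ∈ Finset.range m, (f (2 * t) + f (2 * t + 1)) := by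
  induction m with
  | zero => simp
  | succ s ih =>
    rw [Finset.sum_range_succ, ← ih, show 2 * (s + 1) = (2 * s + 1) + 1 by ring,
      Finset.sum_range_succ, Finset.sum_range_succ, add_assoc]

/-- extend a `Fin k`-indexed family to `ℕ` -/
noncomputable def extFam {k : ℕ} (v : Fin k → X) (n : ℕ) : X :=
  if h : n < k then v ⟨n, h⟩ else 0


end Aux

/-- In the balancing game in a normed plane with an even number `k` of unit
vectors per round, Player II has a strategy (choosing signs as a function of
the round, the current position and Player I's vectors) keeping every position
within norm 2. -/
theorem balancing_game_player_two {X : Type*} [NormedAddCommGroup X] [NormedSpace ℝ X]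
    (hdim : Module.finrank ℝ X = 2) (k : ℕ) (hk : 0 < k) (hke : Even k) :
    ∃ σ : ℕ → X → (Fin k → X) → (Fin k → ℝ),
      (∀ i w v j, σ i w v j = 1 ∨ σ i w v j = -1) ∧
      ∀ xs : ℕ → Fin k → X, (∀ i j, ‖xs i j‖ = 1) →
        ∀ p : ℕ → X, p 0 = 0 →
          (∀ i, p (i + 1) = p i + ∑ j, σ i (p i) (xs i) j • xs i j) →
          ∀ i, ‖p i‖ ≤ 2 := by
  obtain ⟨m, hm⟩ := hke
  have hm2 : k = 2 * m := by omega
  -- the sign function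
  refine ⟨fun _ w v j =>
    if j.val % 2 = 0 then
      (pickSigns (roundPos w (extFam v) (j.val / 2))
        (extFam v (2 * (j.val / 2))) (extFam v (2 * (j.val / 2) + 1))).1
    else
      (pickSigns (roundPos w (extFam v) (j.val / 2))
        (extFam v (2 * (j.val / 2))) (extFam v (2 * (j.val / 2) + 1))).2, ?_, ?_⟩
  · intro i w v j
    simp only []
    split
    · exact pickSigns_fst _ _ _
    · exact pickSigns_snd _ _ _
  intro xs hxs p hp0 hrec i
  -- key: p (i+1) = roundPos (p i) (extFam (xs i)) m
  have hstep : ∀ i, p (i + 1) = roundPos (p i) (extFam (xs i)) m := by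
    intro i
    rw [hrec i]
    set v : ℕ → X := extFam (xs i) with hv
    set q : ℕ → X := roundPos (p i) v with hq
    set f : ℕ → X := fun n =>
      (if n % 2 = 0 then
        (pickSigns (q (n / 2)) (v (2 * (n / 2))) (v (2 * (n / 2) + 1))).1
      else
        (pickSigns (q (n / 2)) (v (2 * (n / 2))) (v (2 * (n / 2) + 1))).2) • v n with hf
    have hsum : (∑ j : Fin k, (if j.val % 2 = 0 then
        (pickSigns (q (j.val / 2)) (v (2 * (j.val / 2))) (v (2 * (j.val / 2) + 1))).1
      else
        (pickSigns (q (j.val / 2)) (v (2 * (j.val / 2))) (v (2 * (j.val / 2) + 1))).2)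
          • xs i j) = ∑ n ∈ Finset.range k, f n := by
      rw [← Fin.sum_univ_eq_sum_range]
      apply Finset.sum_congr rfl
      intro j _
      have hxv : xs i j = v j.val := by
        rw [hv, extFam, dif_pos j.isLt]
      rw [hxv, hf]
    rw [hsum, hm2, sum_pairs]
    have hterm : ∀ t, f (2 * t) + f (2 * t + 1) = q (t + 1) - q t := by
      intro t
      have e1 : (2 * t) % 2 = 0 := by omega
      have e2 : (2 * t) / 2 = t := by omega
      have e3 : (2 * t + 1) % 2 = 1 := by omega
      have e4 : (2 * t + 1) / 2 = t := by omega
      rw [hf]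
      simp only [e1, e2, e3, e4, if_pos rfl]
      norm_num
      rw [hq]
      show _ = roundPos (p i) v (t + 1) - roundPos (p i) v t
      rw [roundPos]
      abel
    rw [Finset.sum_congr rfl (fun t _ => hterm t), Finset.sum_range_sub (fun t => q t) m]
    show p i + (q m - q 0) = q m
    have : q 0 = p i := rfl
    rw [this]; abel
  -- main induction
  induction i with
  | zero => rw [hp0]; simp
  | succ n ih =>
    rw [hstep n]
    refine roundPos_norm hdim (p n) (extFam (xs n)) m ih ?_ m le_rfl
    intro j hj
    rw [extFam, dif_pos (by omega : j < k)]
    exact hxs n _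
end

section
/- In the balancing game with parameter k in an inner product space X of dimension ≥ 2, if k is odd then Player I has a strategy (choosing in round i all k unit vectors equal to a unit vector orthogonal to the current position p_{i−1}) forcing ‖p_i‖² ≥ i for all i, so the position sequence is unbounded. -/
lemma exists_unit_orth {X : Type*} [NormedAddCommGroup X] [InnerProductSpace ℝ X]
    (hdim : 2 ≤ Module.rank ℝ X) (w : X) : ∃ v : X, ‖v‖ = 1 ∧ inner ℝ w v = (0 : ℝ) := by
  set K : Submodule ℝ X := ℝ ∙ w with hK
  have : FiniteDimensional ℝ K := by rw [hK]; infer_instance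
  have hbot : Kᗮ ≠ ⊥ := by
    intro h
    have hKtop : K = ⊤ := by
      rw [← Submodule.orthogonal_orthogonal K, h, Submodule.bot_orthogonal_eq_top]
    have h1 : Module.rank ℝ X ≤ 1 := by
      calc Module.rank ℝ X = Module.rank ℝ (⊤ : Submodule ℝ X) := (rank_top ℝ X).symm
        _ = Module.rank ℝ K := by rw [hKtop]
        _ ≤ 1 := by
          rw [hK]
          exact (rank_span_le _).trans (by simp)
    exact absurd (le_trans hdim h1) (by norm_num)
  obtain ⟨v, hv, hv0⟩ := Submodule.exists_mem_ne_zero_of_ne_bot hbot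
  refine ⟨‖v‖⁻¹ • v, ?_, ?_⟩
  · rw [norm_smul, norm_inv, norm_norm, inv_mul_cancel₀ (norm_ne_zero_iff.mpr hv0)]
  · have h2 := (Submodule.mem_orthogonal K v).mp hv w (Submodule.mem_span_singleton_self w)
    rw [real_inner_smul_right, h2, mul_zero]

lemma sum_signs_sq {k : ℕ} (hk : Odd k) (ε : Fin k → ℝ) (hε : ∀ j, ε j = 1 ∨ ε j = -1) :
    (1 : ℝ) ≤ (∑ j, ε j) ^ 2 := by
  classical
  set g : Fin k → ℤ := fun j => if ε j = 1 then 1 else -1 with hg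
  have hgval : ∀ j, (g j : ℝ) = ε j := by
    intro j
    rcases hε j with h | h
    · simp [hg, h]
    · have hne : ε j ≠ 1 := by rw [h]; norm_num
      rw [hg]; simp only [if_neg hne]; rw [h]; norm_num
  have hcast : (∑ j, ε j) = ((∑ j, g j : ℤ) : ℝ) := by
    push_cast
    exact (Finset.sum_congr rfl fun j _ => (hgval j).symm)
  have hodd : Odd (∑ j, g j) := by
    rw [← Int.not_even_iff_odd]
    intro he
    have h2 : ((∑ j, g j : ℤ) : ZMod 2) = 0 := by
      rcases he with ⟨m, hm⟩
      rw [hm]; push_cast; rw [← two_mul]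
      norm_num
      exact Or.inl (by decide)
    rw [Int.cast_sum] at h2
    have hone : ∀ j : Fin k, ((g j : ℤ) : ZMod 2) = 1 := by
      intro j
      rcases hε j with h | h
      · simp [hg, h]
      · have hne : ε j ≠ 1 := by rw [h]; norm_num
        simp [hg, hne]
    rw [Finset.sum_congr rfl fun j _ => hone j, Finset.sum_const, Finset.card_univ,
      Fintype.card_fin, nsmul_eq_mul, mul_one] at h2
    obtain ⟨m, hm⟩ := hk
    rw [hm] at h2
    push_cast at h2
    rw [show ((2:ZMod 2)) = 0 by decide] at h2
    simp at h2
  have hne : (∑ j, g j) ≠ 0 := fun h => by simp [h] at hodd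
  have h1 : (1 : ℤ) ≤ (∑ j, g j) ^ 2 := by
    nlinarith [Int.one_le_abs hne, sq_abs (∑ j, g j), sq_nonneg (∑ j, g j)]
  rw [hcast]
  exact_mod_cast h1

/-- In the balancing game with an odd number `k` of unit vectors per round, in
an inner product space of dimension at least 2, Player I has a strategy:
choosing all `k` vectors of round `i` equal to a unit vector orthogonal to the
current position forces `‖p i‖² ≥ i` for all `i`. -/
theorem balancing_game_player_one {X : Type*} [NormedAddCommGroup X] [InnerProductSpace ℝ X]
    (hdim : 2 ≤ Module.rank ℝ X) (k : ℕ) (hk : Odd k) :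
    ∃ τ : X → X, (∀ w, ‖τ w‖ = 1 ∧ inner ℝ w (τ w) = (0 : ℝ)) ∧
      ∀ ε : ℕ → Fin k → ℝ, (∀ i j, ε i j = 1 ∨ ε i j = -1) →
        ∀ p : ℕ → X, p 0 = 0 →
          (∀ i, p (i + 1) = p i + ∑ j, ε i j • τ (p i)) →
          ∀ i : ℕ, (i : ℝ) ≤ ‖p i‖ ^ 2 := by
  choose τ hτ1 hτ2 using fun w => exists_unit_orth hdim w
  refine ⟨τ, fun w => ⟨hτ1 w, hτ2 w⟩, ?_⟩
  intro ε hε p hp0 hrec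
  intro i
  induction i with
  | zero => simp [hp0]
  | succ i ih =>
    set s : ℝ := ∑ j, ε i j with hs
    have hstep : p (i + 1) = p i + s • τ (p i) := by
      rw [hrec i, hs, Finset.sum_smul]
    have hsq : ‖p (i + 1)‖ ^ 2 = ‖p i‖ ^ 2 + s ^ 2 := by
      rw [hstep, norm_add_sq_real, real_inner_smul_right, hτ2, mul_zero, norm_smul,
        mul_pow, hτ1, Real.norm_eq_abs, sq_abs]
      ring
    have hs1 : (1 : ℝ) ≤ s ^ 2 := sum_signs_sq hk (ε i) (hε i)
    rw [hsq]
    push_cast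
    linarith
end

section
/- Let a, b be linearly independent vectors of norm 1 in a normed plane and let w = λa + μb with λ, μ ≥ 0 and ‖w‖ ≤ 2. Then |λ − μ| ≤ 2, and ‖(λ−1)a + (μ−1)b‖ ≤ 2. -/
lemma online_aux {E : Type*} [NormedAddCommGroup E] [NormedSpace ℝ E]
    (a b : E) (ha : ‖a‖ = 1) (hb : ‖b‖ = 1) (lam mu : ℝ) (hmu : 0 ≤ mu)
    (hle : mu ≤ lam) (hd : lam - mu ≤ 2) (hw : ‖lam • a + mu • b‖ ≤ 2) :
    ‖(lam - 1) • a + (mu - 1) • b‖ ≤ 2 := by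
  rcases le_or_gt lam 1 with h1 | h1
  · calc ‖(lam-1) • a + (mu-1) • b‖ ≤ ‖(lam-1) • a‖ + ‖(mu-1) • b‖ := norm_add_le _ _
    _ = |lam-1| + |mu-1| := by simp [norm_smul, ha, hb]
    _ ≤ 2 := by rw [abs_of_nonpos (by linarith), abs_of_nonpos (by linarith)]; linarith
  · rcases le_or_gt mu 1 with h2 | h2
    · calc ‖(lam-1) • a + (mu-1) • b‖ ≤ ‖(lam-1) • a‖ + ‖(mu-1) • b‖ := norm_add_le _ _
      _ = |lam-1| + |mu-1| := by simp [norm_smul, ha, hb]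
      _ ≤ 2 := by rw [abs_of_nonneg (by linarith), abs_of_nonpos (by linarith)]; linarith
    · have hmp : (0:ℝ) < mu := by linarith
      have heq : (lam-1) • a + (mu-1) • b
          = (1 - 1/mu) • (lam • a + mu • b) + ((lam - mu)/mu) • a := by
        match_scalars <;> field_simp <;> ring
      rw [heq]
      have h3 : (0:ℝ) ≤ 1 - 1/mu := by
        have : 1/mu ≤ 1 := by rw [div_le_one hmp]; linarith
        linarith
      calc ‖(1 - 1/mu) • (lam • a + mu • b) + ((lam - mu)/mu) • a‖
          ≤ ‖(1 - 1/mu) • (lam • a + mu • b)‖ + ‖((lam - mu)/mu) • a‖ := norm_add_le _ _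
        _ = (1 - 1/mu) * ‖lam • a + mu • b‖ + (lam - mu)/mu := by
            rw [norm_smul, norm_smul, ha, Real.norm_eq_abs, Real.norm_eq_abs,
              abs_of_nonneg h3, abs_of_nonneg (div_nonneg (by linarith) hmp.le)]
            ring
        _ ≤ (1 - 1/mu) * 2 + 2/mu := by
            gcongr
        _ = 2 := by field_simp; ring

/-- If `a, b` are linearly independent unit vectors in a normed plane and
`w = λ a + μ b` with `λ, μ ≥ 0` and `‖w‖ ≤ 2`, then `|λ - μ| ≤ 2` and
`‖(λ-1) a + (μ-1) b‖ ≤ 2`. -/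
theorem online_step_key_estimate {E : Type*} [NormedAddCommGroup E] [NormedSpace ℝ E]
    (hdim : Module.finrank ℝ E = 2) (a b : E) (ha : ‖a‖ = 1) (hb : ‖b‖ = 1)
    (hli : LinearIndependent ℝ ![a, b]) (lam mu : ℝ) (hlam : 0 ≤ lam) (hmu : 0 ≤ mu)
    (hw : ‖lam • a + mu • b‖ ≤ 2) :
    |lam - mu| ≤ 2 ∧ ‖(lam - 1) • a + (mu - 1) • b‖ ≤ 2 := by
  have h1 : |lam - mu| ≤ 2 := by
    have h := abs_norm_sub_norm_le (lam • a) (-(mu • b))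
    rw [sub_neg_eq_add, norm_neg, norm_smul, norm_smul, ha, hb, Real.norm_eq_abs,
      Real.norm_eq_abs, abs_of_nonneg hlam, abs_of_nonneg hmu] at h
    simpa using h.trans hw
  refine ⟨h1, ?_⟩
  rcases le_total mu lam with hle | hle
  · exact online_aux a b ha hb lam mu hmu hle (by cases abs_le.mp h1; linarith) hw
  · rw [add_comm]
    rw [add_comm] at hw
    exact online_aux b a hb ha mu lam hlam hle (by cases abs_le.mp h1; linarith) hw
end

section
/- Let x₁, x₂, x₃, x₄ be the vertices of a regular simplex in Euclidean 3-space. Then there exists a point x₅ in the interior of the simplex such that x₅ is not a Fermat-Toricelli point of {x₁, x₂, x₃, x₄, x₅}, i.e. x₅ does not minimize x ↦ ∑_{i=1}^5 ‖x − x_i‖. -/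
open Finset RealInnerProductSpace

set_option maxHeartbeats 800000

/-- For a regular simplex in Euclidean 3-space with vertices `x 1, …, x 4`,
there is a point `x₅` in the interior of the simplex that is not a
Fermat–Toricelli point of `{x 1, …, x 4, x₅}`: some `z` has strictly smaller
sum of distances. -/
theorem regular_simplex_interior_not_ft (x : Fin 4 → EuclideanSpace ℝ (Fin 3))
    (d : ℝ) (hd : 0 < d) (hreg : ∀ i j, i ≠ j → dist (x i) (x j) = d) :
    ∃ y ∈ interior (convexHull ℝ (Set.range x)),
      ∃ z : EuclideanSpace ℝ (Fin 3),
        ∑ i, ‖z - x i‖ + ‖z - y‖ < ∑ i, ‖y - x i‖ := by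
  classical
  have hnorm : ∀ i j, i ≠ j → ‖x i - x j‖ = d := by
    intro i j hij; rw [← dist_eq_norm]; exact hreg i j hij
  set u : EuclideanSpace ℝ (Fin 3) := x 1 - x 0 with hu
  set v : EuclideanSpace ℝ (Fin 3) := x 2 - x 0 with hv
  set w : EuclideanSpace ℝ (Fin 3) := x 3 - x 0 with hw
  have hself : ∀ (a : EuclideanSpace ℝ (Fin 3)), ‖a‖ = d → ⟪a, a⟫ = d ^ 2 := by
    intro a ha
    rw [real_inner_self_eq_norm_sq, ha]
  have hpair : ∀ (a b : EuclideanSpace ℝ (Fin 3)), ‖a‖ = d → ‖b‖ = d → ‖a - b‖ = d → ⟪a, b⟫ = d ^ 2 / 2 := by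
    intro a b ha hb hab
    have h1 : ⟪a - b, a - b⟫ = d ^ 2 := by rw [real_inner_self_eq_norm_sq, hab]
    have h2 : ⟪a, a⟫ = d ^ 2 := hself a ha
    have h3 : ⟪b, b⟫ = d ^ 2 := hself b hb
    rw [inner_sub_left, inner_sub_right, inner_sub_right] at h1
    have h4 := real_inner_comm a b
    linarith
  have huu : ⟪u, u⟫ = d ^ 2 := hself u (hnorm 1 0 (by decide))
  have hvv : ⟪v, v⟫ = d ^ 2 := hself v (hnorm 2 0 (by decide))
  have hww : ⟪w, w⟫ = d ^ 2 := hself w (hnorm 3 0 (by decide))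
  have huv : ⟪u, v⟫ = d ^ 2 / 2 := by
    refine hpair u v (hnorm 1 0 (by decide)) (hnorm 2 0 (by decide)) ?_
    have h : u - v = x 1 - x 2 := by rw [hu, hv]; abel
    rw [h]; exact hnorm 1 2 (by decide)
  have huw : ⟪u, w⟫ = d ^ 2 / 2 := by
    refine hpair u w (hnorm 1 0 (by decide)) (hnorm 3 0 (by decide)) ?_
    have h : u - w = x 1 - x 3 := by rw [hu, hw]; abel
    rw [h]; exact hnorm 1 3 (by decide)
  have hvw : ⟪v, w⟫ = d ^ 2 / 2 := by
    refine hpair v w (hnorm 2 0 (by decide)) (hnorm 3 0 (by decide)) ?_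
    have h : v - w = x 2 - x 3 := by rw [hv, hw]; abel
    rw [h]; exact hnorm 2 3 (by decide)
  have hvu : ⟪v, u⟫ = d ^ 2 / 2 := by rw [real_inner_comm]; exact huv
  have hwu : ⟪w, u⟫ = d ^ 2 / 2 := by rw [real_inner_comm]; exact huw
  have hwv : ⟪w, v⟫ = d ^ 2 / 2 := by rw [real_inner_comm]; exact hvw
  -- affine independence
  have hai : AffineIndependent ℝ x := by
    rw [affineIndependent_iff_of_fintype]
    intro c hc hzero
    rw [Finset.univ.weightedVSub_eq_linear_combination hc] at hzero
    have hc0 : c 0 = -(c 1 + c 2 + c 3) := by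
      rw [Fin.sum_univ_four] at hc; linarith
    have hlin : c 1 • u + c 2 • v + c 3 • w = 0 := by
      rw [Fin.sum_univ_four, hc0] at hzero
      rw [hu, hv, hw, ← hzero]
      module
    have hq : ⟪c 1 • u + c 2 • v + c 3 • w, c 1 • u + c 2 • v + c 3 • w⟫ = 0 := by
      rw [hlin, inner_zero_left]
    simp only [inner_add_left, inner_add_right, real_inner_smul_left, real_inner_smul_right,
      huu, hvv, hww, huv, huw, hvw, hvu, hwu, hwv] at hq
    have hd2 : 0 < d ^ 2 := by positivity
    have hS0 : d ^ 2 * (c 1 ^ 2 + c 2 ^ 2 + c 3 ^ 2 + (c 1 + c 2 + c 3) ^ 2) = 0 := by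
      linear_combination 2 * hq
    have hS : c 1 ^ 2 + c 2 ^ 2 + c 3 ^ 2 + (c 1 + c 2 + c 3) ^ 2 = 0 :=
      (mul_eq_zero.mp hS0).resolve_left (ne_of_gt hd2)
    clear hzero hlin hq hS0
    have h1 : c 1 = 0 := pow_eq_zero_iff two_ne_zero |>.mp <| le_antisymm
      (by linarith [sq_nonneg (c 2), sq_nonneg (c 3), sq_nonneg (c 1 + c 2 + c 3)]) (sq_nonneg _)
    have h2 : c 2 = 0 := pow_eq_zero_iff two_ne_zero |>.mp <| le_antisymm
      (by linarith [sq_nonneg (c 1), sq_nonneg (c 3), sq_nonneg (c 1 + c 2 + c 3)]) (sq_nonneg _)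
    have h3 : c 3 = 0 := pow_eq_zero_iff two_ne_zero |>.mp <| le_antisymm
      (by linarith [sq_nonneg (c 1), sq_nonneg (c 2), sq_nonneg (c 1 + c 2 + c 3)]) (sq_nonneg _)
    have h0 : c 0 = 0 := by rw [hc0, h1, h2, h3]; ring
    intro i
    fin_cases i
    exacts [h0, h1, h2, h3]
  have htop : affineSpan ℝ (Set.range x) = ⊤ := by
    rw [hai.affineSpan_eq_top_iff_card_eq_finrank_add_one]
    simp [finrank_euclideanSpace]
  let b : AffineBasis (Fin 4) ℝ (EuclideanSpace ℝ (Fin 3)) := ⟨x, hai, htop⟩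
  set y : EuclideanSpace ℝ (Fin 3) := x 0 + (1 / 80 : ℝ) • (u + v + w) with hy
  set z : EuclideanSpace ℝ (Fin 3) := x 0 + (3 / 40 : ℝ) • (u + v + w) with hz
  refine ⟨y, ?_, z, ?_⟩
  · -- y interior
    have hrange : Set.range x = Set.range b := rfl
    rw [hrange, b.interior_convexHull]
    set wt : Fin 4 → ℝ := ![77 / 80, 1 / 80, 1 / 80, 1 / 80] with hwt
    have hsum : ∑ i, wt i = 1 := by
      rw [Fin.sum_univ_four]
      show (77 / 80 : ℝ) + 1 / 80 + 1 / 80 + 1 / 80 = 1; norm_num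
    have hcomb : Finset.univ.affineCombination ℝ x wt = y := by
      rw [Finset.univ.affineCombination_eq_linear_combination x wt hsum, Fin.sum_univ_four]
      have e0 : wt 0 = 77 / 80 := rfl
      have e1 : wt 1 = 1 / 80 := rfl
      have e2 : wt 2 = 1 / 80 := rfl
      have e3 : wt 3 = 1 / 80 := rfl
      rw [e0, e1, e2, e3, hy, hu, hv, hw]
      module
    intro i
    have hco : b.coord i y = wt i := by
      rw [← hcomb]
      exact b.coord_apply_combination_of_mem (Finset.mem_univ i) hsum
    rw [hco]
    fin_cases i <;> norm_num [hwt]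
  · -- the inequality
    have hsq : ∀ (p : EuclideanSpace ℝ (Fin 3)) (c : ℝ), p = x 0 + c • (u + v + w) →
        (‖p - x 0‖ ^ 2 = 6 * c ^ 2 * d ^ 2 ∧
         ∀ a : EuclideanSpace ℝ (Fin 3), (a = u ∨ a = v ∨ a = w) →
           ‖p - (x 0 + a)‖ ^ 2 = (6 * c ^ 2 - 4 * c + 1) * d ^ 2) := by
      intro p c hp
      constructor
      · have h0 : p - x 0 = c • (u + v + w) := by rw [hp]; abel
        rw [h0, ← real_inner_self_eq_norm_sq]
        simp only [inner_add_left, inner_add_right, real_inner_smul_left, real_inner_smul_right,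
          huu, hvv, hww, huv, huw, hvw, hvu, hwu, hwv]
        ring
      · intro a ha
        have h0 : p - (x 0 + a) = c • (u + v + w) - a := by rw [hp]; abel
        rw [h0, ← real_inner_self_eq_norm_sq]
        rcases ha with rfl | rfl | rfl <;>
        · simp only [inner_sub_left, inner_sub_right, inner_add_left, inner_add_right,
            real_inner_smul_left, real_inner_smul_right,
            huu, hvv, hww, huv, huw, hvw, hvu, hwu, hwv]
          ring
    obtain ⟨hy0, hyi⟩ := hsq y (1/80) hy
    obtain ⟨hz0, hzi⟩ := hsq z (3/40) hz
    have hzy : ‖z - y‖ ^ 2 = (3 / 128 : ℝ) * d ^ 2 := by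
      have h0 : z - y = (1/16 : ℝ) • (u + v + w) := by rw [hz, hy]; module
      rw [h0, ← real_inner_self_eq_norm_sq]
      simp only [inner_add_left, inner_add_right, real_inner_smul_left, real_inner_smul_right,
        huu, hvv, hww, huv, huw, hvw, hvu, hwu, hwv]
      ring
    have hx1 : x 1 = x 0 + u := by rw [hu]; abel
    have hx2 : x 2 = x 0 + v := by rw [hv]; abel
    have hx3 : x 3 = x 0 + w := by rw [hw]; abel
    have hnn : ∀ (p : EuclideanSpace ℝ (Fin 3)) (r : ℝ), ‖p‖ ^ 2 = r * d ^ 2 → ‖p‖ = Real.sqrt r * d := by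
      intro p r hpr
      rw [show ‖p‖ = Real.sqrt (‖p‖ ^ 2) from (Real.sqrt_sq (norm_nonneg p)).symm, hpr,
        Real.sqrt_mul' r (sq_nonneg d), Real.sqrt_sq hd.le]
    have ny0 : ‖y - x 0‖ = Real.sqrt (3 / 3200) * d := by
      apply hnn; rw [hy0]; norm_num
    have ny1 : ‖y - x 1‖ = Real.sqrt (3043 / 3200) * d := by
      apply hnn; rw [hx1, hyi u (Or.inl rfl)]; norm_num
    have ny2 : ‖y - x 2‖ = Real.sqrt (3043 / 3200) * d := by
      apply hnn; rw [hx2, hyi v (Or.inr (Or.inl rfl))]; norm_num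
    have ny3 : ‖y - x 3‖ = Real.sqrt (3043 / 3200) * d := by
      apply hnn; rw [hx3, hyi w (Or.inr (Or.inr rfl))]; norm_num
    have nz0 : ‖z - x 0‖ = Real.sqrt (27 / 800) * d := by
      apply hnn; rw [hz0]; norm_num
    have nz1 : ‖z - x 1‖ = Real.sqrt (587 / 800) * d := by
      apply hnn; rw [hx1, hzi u (Or.inl rfl)]; norm_num
    have nz2 : ‖z - x 2‖ = Real.sqrt (587 / 800) * d := by
      apply hnn; rw [hx2, hzi v (Or.inr (Or.inl rfl))]; norm_num
    have nz3 : ‖z - x 3‖ = Real.sqrt (587 / 800) * d := by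
      apply hnn; rw [hx3, hzi w (Or.inr (Or.inr rfl))]; norm_num
    have nzy : ‖z - y‖ = Real.sqrt (3 / 128) * d := hnn _ _ hzy
    rw [Fin.sum_univ_four, Fin.sum_univ_four, ny0, ny1, ny2, ny3, nz0, nz1, nz2, nz3, nzy]
    -- numeric bounds
    have b1 : Real.sqrt (27 / 800) < 0.1838 := by
      rw [Real.sqrt_lt' (by norm_num)]; norm_num
    have b2 : Real.sqrt (587 / 800) < 0.8567 := by
      rw [Real.sqrt_lt' (by norm_num)]; norm_num
    have b3 : Real.sqrt (3 / 128) < 0.1531 := by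
      rw [Real.sqrt_lt' (by norm_num)]; norm_num
    have b4 : (0.9751 : ℝ) < Real.sqrt (3043 / 3200) := by
      rw [Real.lt_sqrt (by norm_num)]; norm_num
    have b5 : (0 : ℝ) ≤ Real.sqrt (3 / 3200) := Real.sqrt_nonneg _
    have key : Real.sqrt (27 / 800) + 3 * Real.sqrt (587 / 800) + Real.sqrt (3 / 128)
        < Real.sqrt (3 / 3200) + 3 * Real.sqrt (3043 / 3200) := by linarith
    nlinarith [mul_lt_mul_of_pos_right key hd]
end
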